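/- arXiv:1803.05797 — 17 statements merged into one kernel-verified Lean document; each statement's English description precedes it below -/
import Mathlib

section
/- The additive group ∏_p ℤ_p (the product over all primes p of the rings of p-adic integers), with distinguished element e = 1 = (1)_p, is an unordered Z-group; that is: ∏_p ℤ_p is torsion-free; for no prime p is 1 p-divisible in ∏_p ℤ_p; and for every a ∈ ∏_p ℤ_p and every integer n > 0 there exist b ∈ ∏_p ℤ_p and k ∈ ℤ with a = n·b + k·1. -/
instance (p : Nat.Primes) : Fact (p : ℕ).Prime := ⟨p.2⟩

/-- The profinite completion of `ℤ`, realized as the product of the rings of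
`p`-adic integers over all primes `p`. -/
abbrev Zhat : Type := ∀ p : Nat.Primes, ℤ_[(p : ℕ)]

lemma zhat_step (P : Nat.Primes) (a : Zhat) :
    ∃ b : Zhat, ∃ k : ℤ, a = ((P : ℕ) : ℤ) • b + k • (1 : Zhat) := by
  classical
  have hdvd : ∀ q : Nat.Primes, ∃ c : ℤ_[(q : ℕ)],
      a q - ((((PadicInt.toZMod (a P)).val : ℤ) : ℤ_[(q : ℕ)])) = ((P : ℕ) : ℤ_[(q : ℕ)]) * c := by
    intro q
    rcases eq_or_ne q P with hq | hq
    · subst hq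
      have hker : PadicInt.toZMod
          (a q - ((((PadicInt.toZMod (a q)).val : ℤ) : ℤ_[(q : ℕ)]))) = 0 := by
        rw [map_sub, map_intCast]
        push_cast
        simp only [ZMod.natCast_val, ZMod.cast_id', id_eq, sub_self]
      have hmem : a q - ((((PadicInt.toZMod (a q)).val : ℤ) : ℤ_[(q : ℕ)])) ∈
          IsLocalRing.maximalIdeal ℤ_[(q : ℕ)] := by
        rw [← PadicInt.ker_toZMod]; exact hker
      rw [PadicInt.maximalIdeal_eq_span_p, Ideal.mem_span_singleton] at hmem
      exact hmem
    · have hunit : IsUnit (((P : ℕ) : ℤ_[(q : ℕ)])) := by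
        by_contra h
        have hmem : ((P : ℕ) : ℤ_[(q : ℕ)]) ∈ IsLocalRing.maximalIdeal ℤ_[(q : ℕ)] := by
          rwa [IsLocalRing.mem_maximalIdeal, mem_nonunits_iff]
        rw [← PadicInt.ker_toZMod, RingHom.mem_ker, map_natCast] at hmem
        have hdvd2 := (ZMod.natCast_eq_zero_iff (P : ℕ) (q : ℕ)).mp hmem
        exact hq (Subtype.ext ((Nat.prime_dvd_prime_iff_eq q.2 P.2).mp hdvd2))
      obtain ⟨u, hu⟩ := hunit
      exact ⟨(↑u⁻¹ : ℤ_[(q : ℕ)]) * _, by rw [← mul_assoc, ← hu, u.mul_inv, one_mul]⟩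
  choose c hc using hdvd
  refine ⟨c, ((PadicInt.toZMod (a P)).val : ℤ), funext fun q => ?_⟩
  have h := hc q
  have h2 : a q = ((P : ℕ) : ℤ_[(q : ℕ)]) * c q
      + ((((PadicInt.toZMod (a P)).val : ℤ) : ℤ_[(q : ℕ)])) := by linear_combination h
  simp only [Pi.add_apply, Pi.smul_apply, Pi.one_apply, zsmul_eq_mul, mul_one]
  push_cast at h2 ⊢
  exact h2

lemma zhat_nat (m : ℕ) :
    m = 0 ∨ ∀ a : Zhat, ∃ b : Zhat, ∃ k : ℤ, a = (m : ℤ) • b + k • (1 : Zhat) := by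
  induction m using Nat.recOnMul with
  | zero => exact Or.inl rfl
  | one => exact Or.inr fun a => ⟨a, 0, by simp⟩
  | prime p hp => exact Or.inr fun a => by simpa using zhat_step ⟨p, hp⟩ a
  | mul m n hm hn =>
    rcases hm with hm | hm
    · exact Or.inl (by simp [hm])
    rcases hn with hn | hn
    · exact Or.inl (by simp [hn])
    refine Or.inr fun a => ?_
    obtain ⟨b, k, hb⟩ := hm a
    obtain ⟨c, j, hcj⟩ := hn b
    refine ⟨c, (m : ℤ) * j + k, ?_⟩
    rw [hb, hcj]
    push_cast
    module

/-- `∏_p ℤ_p` with distinguished element `1 = (1)_p` is an unordered Z-group: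
it is torsion-free, `1` is not `p`-divisible for any prime `p`, and every element
is congruent to an integer multiple of `1` modulo `n`, for every integer `n > 0`. -/
theorem zhat_unordered_zgroup :
    (∀ (n : ℤ) (a : Zhat), n ≠ 0 → n • a = 0 → a = 0) ∧
    (∀ p : ℕ, p.Prime → ¬ ∃ b : Zhat, (1 : Zhat) = (p : ℤ) • b) ∧
    (∀ a : Zhat, ∀ n : ℤ, 0 < n → ∃ b : Zhat, ∃ k : ℤ, a = n • b + k • (1 : Zhat)) := by
  refine ⟨?_, ?_, ?_⟩
  · intro n a hn h
    funext q
    have hq : ((n : ℤ) : ℤ_[(q : ℕ)]) * a q = 0 := by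
      have := congrFun h q
      simpa [zsmul_eq_mul] using this
    rcases mul_eq_zero.mp hq with h | h
    · exact absurd (by exact_mod_cast h) hn
    · simpa using h
  · rintro p hp ⟨b, hb⟩
    haveI : Fact (Nat.Prime ((⟨p, hp⟩ : Nat.Primes) : ℕ)) := ⟨hp⟩
    have hP := congrFun hb (⟨p, hp⟩ : Nat.Primes)
    simp only [Pi.one_apply, Pi.smul_apply, zsmul_eq_mul] at hP
    change (1 : ℤ_[((⟨p, hp⟩ : Nat.Primes) : ℕ)]) = ((p : ℤ) : ℤ_[((⟨p, hp⟩ : Nat.Primes) : ℕ)]) * b ⟨p, hp⟩ at hP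
    have h2 := congrArg PadicInt.toZMod hP
    rw [map_one, map_mul, map_intCast] at h2
    rw [show ((p : ℤ) : ZMod p) = ((p : ℕ) : ZMod p) by push_cast; ring,
      ZMod.natCast_self, zero_mul] at h2
    exact one_ne_zero h2
  · intro a n hn
    rcases zhat_nat n.toNat with h | h
    · omega
    obtain ⟨b, k, hb⟩ := h a
    exact ⟨b, k, by rwa [Int.toNat_of_nonneg hn.le] at hb⟩
end

section
/- For every unordered Z-group (G, e) there exists exactly one additive group homomorphism res : G → ∏_p ℤ_p with res(e) = 1 (where 1 = (1)_p). -/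
open Filter Topology

/-- Key divisibility: if `m • e = n • h` with `n > 0`, then `n ∣ m`. -/
lemma zg_key {G : Type} [AddCommGroup G] {e : G}
    (htf : ∀ (n : ℤ) (g : G), n ≠ 0 → n • g = 0 → g = 0)
    (hnd : ∀ p : ℕ, p.Prime → ¬ ∃ h : G, e = (p : ℤ) • h)
    {n m : ℤ} (hn : 0 < n) (h : G) (hme : m • e = n • h) : n ∣ m := by
  set d : ℤ := (Int.gcd m n : ℤ) with hd
  have hdpos : 0 < d := by
    have h1 : 0 < Int.gcd m n := Int.gcd_pos_of_ne_zero_right m hn.ne'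
    show (0 : ℤ) < ((Int.gcd m n : ℕ) : ℤ)
    exact_mod_cast h1
  have hdm : d ∣ m := Int.gcd_dvd_left m n
  have hdn : d ∣ n := Int.gcd_dvd_right m n
  set m' : ℤ := m / d with hm'
  set n' : ℤ := n / d with hn'
  have hm : m = d * m' := (Int.mul_ediv_cancel' hdm).symm
  have hnn : n = d * n' := (Int.mul_ediv_cancel' hdn).symm
  have hcop : Int.gcd m' n' = 1 :=
    Int.gcd_div_gcd_div_gcd (i := m) (j := n) (Int.gcd_pos_of_ne_zero_right m hn.ne')
  have hn'pos : 0 < n' := by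
    rcases lt_trichotomy n' 0 with hc | hc | hc
    · nlinarith
    · simp [hc] at hnn; omega
    · exact hc
  have hcancel : m' • e = n' • h := by
    have hz : d • (m' • e - n' • h) = 0 := by
      rw [smul_sub, ← mul_smul, ← mul_smul, ← hm, ← hnn, hme, sub_self]
    have := htf d _ hdpos.ne' hz
    exact sub_eq_zero.mp this
  have hn'1 : n' = 1 := by
    by_contra hne1
    have hna : n'.natAbs ≠ 1 := by omega
    obtain ⟨p, hp, hpd⟩ := Nat.exists_prime_and_dvd hna
    have hpd' : (p : ℤ) ∣ n' :=
      dvd_trans (Int.natCast_dvd_natCast.mpr hpd) (Int.natAbs_dvd.mpr dvd_rfl)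
    obtain ⟨q, hq⟩ := hpd'
    apply hnd p hp
    set a : ℤ := Int.gcdA m' n' with ha
    set b : ℤ := Int.gcdB m' n' with hb
    have hbez : (1 : ℤ) = m' * a + n' * b := by
      have := Int.gcd_eq_gcd_ab m' n'
      rw [hcop] at this
      exact_mod_cast this
    have he : e = n' • (a • h + b • e) := by
      calc e = (1 : ℤ) • e := (one_smul ℤ e).symm
        _ = (m' * a + n' * b) • e := by rw [← hbez]
        _ = a • (m' • e) + (n' * b) • e := by
            rw [add_smul, mul_comm m' a, mul_smul]
        _ = a • (n' • h) + (n' * b) • e := by rw [hcancel]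
        _ = n' • (a • h + b • e) := by
            rw [smul_add, ← mul_smul, ← mul_smul, ← mul_smul, mul_comm a n']
    exact ⟨q • (a • h + b • e), by rw [hq, mul_smul] at he; exact he⟩
  rw [hn'1, mul_one] at hnn
  rw [hnn]; exact hdm

/-- The `k`-coefficient in `g = n • h + k • e` is unique modulo `n`. -/
lemma zg_kdiff {G : Type} [AddCommGroup G] {e : G}
    (htf : ∀ (n : ℤ) (g : G), n ≠ 0 → n • g = 0 → g = 0)
    (hnd : ∀ p : ℕ, p.Prime → ¬ ∃ h : G, e = (p : ℤ) • h)
    {n : ℤ} (hn : 0 < n) {g h h' : G} {k k' : ℤ}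
    (h1 : g = n • h + k • e) (h2 : g = n • h' + k' • e) : n ∣ k' - k := by
  have heq : n • h + k • e = n • h' + k' • e := by rw [← h1, ← h2]
  have hme : (k - k') • e = n • (h' - h) := by
    rw [sub_smul, smul_sub, sub_eq_sub_iff_add_eq_add, add_comm (k • e)]
    exact heq
  have := zg_key htf hnd hn _ hme
  exact (dvd_sub_comm).mp this

lemma padic_eq_of_norm_le {p : ℕ} [hp : Fact p.Prime] (x y : ℤ_[p]) (C : ℝ)
    (h : ∀ m : ℕ, ‖x - y‖ ≤ C * (p : ℝ) ^ (-(m : ℤ))) : x = y := by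
  have hp1 : (1 : ℝ) < p := by exact_mod_cast hp.out.one_lt
  have hgeo : Tendsto (fun m : ℕ => C * (p : ℝ) ^ (-(m : ℤ))) atTop (nhds 0) := by
    have h0 : Tendsto (fun m : ℕ => ((p : ℝ)⁻¹) ^ m) atTop (nhds 0) :=
      tendsto_pow_atTop_nhds_zero_of_lt_one (by positivity) (inv_lt_one_of_one_lt₀ hp1)
    have h1 := h0.const_mul C
    rw [mul_zero] at h1
    simpa [zpow_neg, zpow_natCast, inv_pow] using h1
  have hle : ‖x - y‖ ≤ 0 := ge_of_tendsto' hgeo h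
  have := norm_le_zero_iff.mp hle
  exact sub_eq_zero.mp this

lemma padic_norm_int_sub_le {p : ℕ} [Fact p.Prime] {a b : ℤ} {m : ℕ}
    (h : (p : ℤ) ^ m ∣ b - a) : ‖(b : ℤ_[p]) - (a : ℤ_[p])‖ ≤ (p : ℝ) ^ (-(m : ℤ)) := by
  have hc : ((b - a : ℤ) : ℤ_[p]) = (b : ℤ_[p]) - (a : ℤ_[p]) := by push_cast; ring
  rw [← hc]
  exact PadicInt.norm_int_le_pow_iff_dvd.mpr h

/-- For every unordered Z-group `(G, e)` there is exactly one additive group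
homomorphism `res : G → ∏_p ℤ_p` with `res e = 1`. -/
theorem residue_map_exists_unique (G : Type) [AddCommGroup G] (e : G)
    (htf : ∀ (n : ℤ) (g : G), n ≠ 0 → n • g = 0 → g = 0)
    (hne : e ≠ 0)
    (hnd : ∀ p : ℕ, p.Prime → ¬ ∃ h : G, e = (p : ℤ) • h)
    (hdiv : ∀ g : G, ∀ n : ℤ, 0 < n → ∃ h : G, ∃ k : ℤ, g = n • h + k • e) :
    ∃! res : G →+ Zhat, res e = 1 := by
  classical
  choose H K hHK using hdiv
  have ppos : ∀ (p : Nat.Primes) (m : ℕ), (0 : ℤ) < ((p : ℕ) : ℤ) ^ m := by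
    intro p m
    have : 0 < ((p : ℕ) : ℤ) := by exact_mod_cast p.2.pos
    positivity
  set kk : G → (p : Nat.Primes) → ℕ → ℤ :=
    fun g p m => K g (((p : ℕ) : ℤ) ^ m) (ppos p m) with hkkdef
  -- divisibility between stages
  have hdvd : ∀ (g : G) (p : Nat.Primes) (m m' : ℕ), m ≤ m' →
      ((p : ℕ) : ℤ) ^ m ∣ kk g p m' - kk g p m := by
    intro g p m m' hmm
    have e1 := hHK g (((p : ℕ) : ℤ) ^ m) (ppos p m)
    have e2 := hHK g (((p : ℕ) : ℤ) ^ m') (ppos p m')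
    have e2' : g = ((p : ℕ) : ℤ) ^ m • (((p : ℕ) : ℤ) ^ (m' - m) • H g (((p : ℕ) : ℤ) ^ m') (ppos p m'))
        + kk g p m' • e := by
      rw [← mul_smul, ← pow_add, Nat.add_sub_cancel' hmm]
      exact e2
    exact zg_kdiff htf hnd (ppos p m) e1 e2'
  have hchar0 : ∀ (g : G) (p : Nat.Primes) (m m' : ℕ), m ≤ m' →
      ‖((kk g p m' : ℤ_[(p : ℕ)])) - ((kk g p m : ℤ_[(p : ℕ)]))‖ ≤ ((p : ℕ) : ℝ) ^ (-(m : ℤ)) :=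
    fun g p m m' hmm => padic_norm_int_sub_le (hdvd g p m m' hmm)
  -- Cauchy sequences and limits
  have hcauchy : ∀ (g : G) (p : Nat.Primes),
      CauchySeq (fun m : ℕ => ((kk g p m : ℤ_[(p : ℕ)]))) := by
    intro g p
    have hp1 : (1 : ℝ) < ((p : ℕ) : ℝ) := by exact_mod_cast p.2.one_lt
    apply cauchySeq_of_le_geometric (((p : ℕ) : ℝ)⁻¹) 1 (inv_lt_one_of_one_lt₀ hp1)
    intro m
    rw [dist_eq_norm']
    calc ‖((kk g p (m+1) : ℤ_[(p : ℕ)])) - ((kk g p m : ℤ_[(p : ℕ)]))‖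
        ≤ ((p : ℕ) : ℝ) ^ (-(m : ℤ)) := hchar0 g p m (m + 1) (Nat.le_succ m)
      _ = 1 * (((p : ℕ) : ℝ)⁻¹) ^ m := by
          rw [one_mul, inv_pow, ← zpow_natCast, ← zpow_neg]
  have hex : ∀ (g : G) (p : Nat.Primes), ∃ x : ℤ_[(p : ℕ)],
      Tendsto (fun m : ℕ => ((kk g p m : ℤ_[(p : ℕ)]))) atTop (nhds x) :=
    fun g p => cauchySeq_tendsto_of_complete (hcauchy g p)
  choose L hL using hex
  have hchar : ∀ (g : G) (p : Nat.Primes) (m : ℕ),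
      ‖L g p - ((kk g p m : ℤ_[(p : ℕ)]))‖ ≤ ((p : ℕ) : ℝ) ^ (-(m : ℤ)) := by
    intro g p m
    have h1 : Tendsto (fun m' : ℕ =>
        ‖((kk g p m' : ℤ_[(p : ℕ)])) - ((kk g p m : ℤ_[(p : ℕ)]))‖) atTop
        (nhds ‖L g p - ((kk g p m : ℤ_[(p : ℕ)]))‖) :=
      ((hL g p).sub tendsto_const_nhds).norm
    apply le_of_tendsto h1
    filter_upwards [eventually_ge_atTop m] with m' hm'
    exact hchar0 g p m m' hm'
  have hppow_nonneg : ∀ (p : Nat.Primes) (m : ℕ), (0:ℝ) ≤ ((p : ℕ) : ℝ) ^ (-(m : ℤ)) := by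
    intro p m
    have : (0:ℝ) < ((p : ℕ) : ℝ) := by exact_mod_cast p.2.pos
    positivity
  -- additivity of L
  have haddL : ∀ (g g' : G) (p : Nat.Primes), L (g + g') p = L g p + L g' p := by
    intro g g' p
    apply padic_eq_of_norm_le _ _ 4
    intro m
    set n : ℤ := ((p : ℕ) : ℤ) ^ m with hn
    set h1 := H g n (ppos p m) with hh1
    set h2 := H g' n (ppos p m) with hh2
    set k1 := kk g p m with hk1
    set k2 := kk g' p m with hk2
    have e1 : g = n • h1 + k1 • e := hHK g n (ppos p m)
    have e2 : g' = n • h2 + k2 • e := hHK g' n (ppos p m)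
    have e3 : g + g' = n • (H (g+g') n (ppos p m)) + kk (g+g') p m • e := hHK (g+g') n (ppos p m)
    have e4 : g + g' = n • (h1 + h2) + (k1 + k2) • e := by
      rw [smul_add, add_smul, e1, e2]; abel
    have hDdvd : n ∣ kk (g+g') p m - (k1 + k2) := zg_kdiff htf hnd (ppos p m) e4 e3
    have D : ‖((kk (g+g') p m - k1 - k2 : ℤ) : ℤ_[(p : ℕ)])‖ ≤ ((p : ℕ) : ℝ) ^ (-(m : ℤ)) := by
      apply PadicInt.norm_int_le_pow_iff_dvd.mpr
      simpa [sub_sub] using hDdvd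
    have A := hchar (g+g') p m
    have B := hchar g p m
    have Cc := hchar g' p m
    have hxid : L (g + g') p - (L g p + L g' p) =
        (L (g+g') p - ((kk (g+g') p m : ℤ_[(p : ℕ)]))) - (L g p - ((k1 : ℤ_[(p : ℕ)])))
          - (L g' p - ((k2 : ℤ_[(p : ℕ)])))
          + ((kk (g+g') p m - k1 - k2 : ℤ) : ℤ_[(p : ℕ)]) := by
      push_cast; ring
    rw [hxid]
    set X1 := L (g+g') p - ((kk (g+g') p m : ℤ_[(p : ℕ)])) with hX1
    set X2 := L g p - ((k1 : ℤ_[(p : ℕ)])) with hX2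
    set X3 := L g' p - ((k2 : ℤ_[(p : ℕ)])) with hX3
    set X4 := ((kk (g+g') p m - k1 - k2 : ℤ) : ℤ_[(p : ℕ)]) with hX4
    have t1 : ‖X1 - X2 - X3 + X4‖ ≤ ‖X1 - X2 - X3‖ + ‖X4‖ := norm_add_le _ _
    have t2 : ‖X1 - X2 - X3‖ ≤ ‖X1 - X2‖ + ‖X3‖ := norm_sub_le _ _
    have t3 : ‖X1 - X2‖ ≤ ‖X1‖ + ‖X2‖ := norm_sub_le _ _
    linarith
  refine ⟨AddMonoidHom.mk' (fun g => fun p => L g p)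
      (fun g g' => by funext p; simp only [Pi.add_apply]; exact haddL g g' p), ?_, ?_⟩
  · -- res e = 1
    funext p
    show L e p = 1
    apply padic_eq_of_norm_le _ _ 2
    intro m
    have A := hchar e p m
    have hDdvd : ((p : ℕ) : ℤ) ^ m ∣ kk e p m - 1 := by
      have e1 := hHK e (((p : ℕ) : ℤ) ^ m) (ppos p m)
      have e2 : e = ((p : ℕ) : ℤ) ^ m • (0 : G) + (1 : ℤ) • e := by simp
      exact zg_kdiff htf hnd (ppos p m) e2 e1
    have D : ‖((kk e p m - 1 : ℤ) : ℤ_[(p : ℕ)])‖ ≤ ((p : ℕ) : ℝ) ^ (-(m : ℤ)) :=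
      PadicInt.norm_int_le_pow_iff_dvd.mpr hDdvd
    have hid : L e p - 1 = (L e p - ((kk e p m : ℤ_[(p : ℕ)])))
        + ((kk e p m - 1 : ℤ) : ℤ_[(p : ℕ)]) := by push_cast; ring
    rw [hid]
    have t1 := norm_add_le (L e p - ((kk e p m : ℤ_[(p : ℕ)])))
      ((kk e p m - 1 : ℤ) : ℤ_[(p : ℕ)])
    linarith
  · -- uniqueness
    intro f hf
    ext g p
    show f g p = L g p
    apply padic_eq_of_norm_le _ _ 2
    intro m
    set n : ℤ := ((p : ℕ) : ℤ) ^ m with hn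
    set h1 := H g n (ppos p m) with hh1
    set k1 := kk g p m with hk1
    have e1 : g = n • h1 + k1 • e := hHK g n (ppos p m)
    have hfg : f g p = (n : ℤ_[(p : ℕ)]) * (f h1 p) + ((k1 : ℤ_[(p : ℕ)])) := by
      conv_lhs => rw [e1]
      rw [map_add, map_zsmul, map_zsmul, hf]
      simp only [Pi.add_apply, Pi.smul_apply, Pi.one_apply]
      rw [zsmul_eq_mul, zsmul_eq_mul, mul_one]
    have hnnorm : ‖(n : ℤ_[(p : ℕ)])‖ ≤ ((p : ℕ) : ℝ) ^ (-(m : ℤ)) := by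
      apply PadicInt.norm_int_le_pow_iff_dvd.mpr
      exact dvd_rfl
    have hB : ‖f g p - ((k1 : ℤ_[(p : ℕ)]))‖ ≤ ((p : ℕ) : ℝ) ^ (-(m : ℤ)) := by
      rw [hfg]
      have : (n : ℤ_[(p : ℕ)]) * (f h1 p) + ((k1 : ℤ_[(p : ℕ)])) - ((k1 : ℤ_[(p : ℕ)]))
          = (n : ℤ_[(p : ℕ)]) * (f h1 p) := by ring
      rw [this, norm_mul]
      calc ‖(n : ℤ_[(p : ℕ)])‖ * ‖f h1 p‖ ≤ ((p : ℕ) : ℝ) ^ (-(m : ℤ)) * 1 :=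
            mul_le_mul hnnorm (PadicInt.norm_le_one _) (norm_nonneg _) (hppow_nonneg p m)
        _ = ((p : ℕ) : ℝ) ^ (-(m : ℤ)) := mul_one _
    have A := hchar g p m
    have hid : f g p - L g p = (f g p - ((k1 : ℤ_[(p : ℕ)])))
        - (L g p - ((k1 : ℤ_[(p : ℕ)]))) := by ring
    rw [hid]
    have t1 := norm_sub_le (f g p - ((k1 : ℤ_[(p : ℕ)]))) (L g p - ((k1 : ℤ_[(p : ℕ)])))
    linarith
end

section
/- Let (G, e) be an unordered Z-group satisfying ⋂_{n>0} nG = {0}. Then there exists an injective additive group homomorphism φ : G → ∏_p ℤ_p with φ(e) = 1 whose image is a pure subgroup of ∏_p ℤ_p. -/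
open Filter Topology

lemma auxA {G : Type} [AddCommGroup G] (e : G)
    (htf : ∀ (n : ℤ) (g : G), n ≠ 0 → n • g = 0 → g = 0)
    (hnd : ∀ p : ℕ, p.Prime → ¬ ∃ h : G, e = (p : ℤ) • h)
    (m n : ℤ) (hn : n ≠ 0) (x : G) (hme : m • e = n • x) : n ∣ m := by
  have hdpos : 0 < Int.gcd m n := Int.gcd_pos_iff.mpr (Or.inr hn)
  set d : ℤ := (Int.gcd m n : ℤ) with hd
  have hd0 : d ≠ 0 := by
    rw [hd]
    exact_mod_cast hdpos.ne'
  have hdm : d ∣ m := Int.gcd_dvd_left m n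
  have hdn : d ∣ n := Int.gcd_dvd_right m n
  obtain ⟨m₁, hm₁⟩ := hdm
  obtain ⟨n₁, hn₁⟩ := hdn
  have hcop : Int.gcd m₁ n₁ = 1 := by
    have h1 : m / d = m₁ := by rw [hm₁]; exact Int.mul_ediv_cancel_left _ hd0
    have h2 : n / d = n₁ := by rw [hn₁]; exact Int.mul_ediv_cancel_left _ hd0
    have := Int.gcd_div_gcd_div_gcd (i := m) (j := n) hdpos
    rwa [← hd, h1, h2] at this
  have hstep : m₁ • e = n₁ • x := by
    have h1 : d • (m₁ • e - n₁ • x) = 0 := by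
      rw [smul_sub, ← mul_smul, ← mul_smul, ← hm₁, ← hn₁, hme, sub_self]
    have := htf d _ hd0 h1
    rwa [sub_eq_zero] at this
  have hb : (1 : ℤ) = m₁ * Int.gcdA m₁ n₁ + n₁ * Int.gcdB m₁ n₁ := by
    have := Int.gcd_eq_gcd_ab m₁ n₁
    rwa [hcop] at this
  set a := Int.gcdA m₁ n₁
  set b := Int.gcdB m₁ n₁
  have he : e = n₁ • (a • x + b • e) := by
    calc e = (1 : ℤ) • e := (one_smul ℤ e).symm
    _ = (m₁ * a + n₁ * b) • e := by rw [← hb]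
    _ = a • (m₁ • e) + n₁ • (b • e) := by
        rw [add_smul, mul_comm m₁ a, mul_smul, mul_smul]
    _ = a • (n₁ • x) + n₁ • (b • e) := by rw [hstep]
    _ = n₁ • (a • x + b • e) := by rw [smul_comm, ← smul_add]
  set q : ℕ := n₁.natAbs with hq
  have hq0 : q ≠ 0 := by
    intro h0
    exact hn (by rw [hn₁, Int.natAbs_eq_zero.mp (hq.symm.trans h0), mul_zero])
  by_cases hq1 : q = 1
  · -- n₁ = ±1, so n ∣ d ∣ m
    have : n₁ = 1 ∨ n₁ = -1 := Int.isUnit_iff.mp (Int.isUnit_iff_natAbs_eq.mpr (hq ▸ hq1))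
    have hnd' : n ∣ d := by
      rcases this with h | h
      · exact ⟨1, by rw [hn₁, h, mul_one, mul_one]⟩
      · exact ⟨-1, by rw [hn₁, h]; ring⟩
    exact hnd'.trans ⟨m₁, hm₁⟩
  · obtain ⟨p, hp, hpq⟩ := Nat.exists_prime_and_dvd hq1
    exfalso
    apply hnd p hp
    obtain ⟨t, ht⟩ := hpq
    rcases Int.natAbs_eq n₁ with h | h
    · refine ⟨(t : ℤ) • (a • x + b • e), ?_⟩
      conv_lhs => rw [he]
      rw [← mul_smul, h, ← hq, ht]
      push_cast
      ring_nf
    · refine ⟨(-(t : ℤ)) • (a • x + b • e), ?_⟩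
      conv_lhs => rw [he]
      rw [← mul_smul, h, ← hq, ht]
      push_cast
      ring_nf

/-- A Leibnizian unordered Z-group embeds into `∏_p ℤ_p` as a pure subgroup,
by an embedding sending `e` to `1`. -/
theorem leibnizian_embeds_pure (G : Type) [AddCommGroup G] (e : G)
    (htf : ∀ (n : ℤ) (g : G), n ≠ 0 → n • g = 0 → g = 0)
    (hne : e ≠ 0)
    (hnd : ∀ p : ℕ, p.Prime → ¬ ∃ h : G, e = (p : ℤ) • h)
    (hdiv : ∀ g : G, ∀ n : ℤ, 0 < n → ∃ h : G, ∃ k : ℤ, g = n • h + k • e)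
    (hleib : ∀ g : G, (∀ n : ℤ, 0 < n → ∃ h : G, g = n • h) → g = 0) :
    ∃ φ : G →+ Zhat, Function.Injective φ ∧ φ e = 1 ∧
      (∀ (n : ℤ) (b : Zhat), 0 < n → n • b ∈ Set.range φ → b ∈ Set.range φ) := by
  classical
  -- choose division data
  have hdiv' : ∀ (g : G) (n : ℕ), ∃ (h : G) (k : ℤ), 0 < n → g = (n : ℤ) • h + k • e := by
    intro g n
    rcases Nat.eq_zero_or_pos n with h0 | h0
    · exact ⟨0, 0, by omega⟩
    · obtain ⟨h, k, hk⟩ := hdiv g n (by exact_mod_cast h0)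
      exact ⟨h, k, fun _ => hk⟩
  choose H K hHK using hdiv'
  -- uniqueness of the residue mod n
  have uniq : ∀ (n : ℕ), 0 < n → ∀ (h h' : G) (k k' : ℤ),
      (n : ℤ) • h + k • e = (n : ℤ) • h' + k' • e → (n : ℤ) ∣ k - k' := by
    intro n hn h h' k k' heq
    apply auxA e htf hnd _ _ (by exact_mod_cast hn.ne') (h' - h)
    rw [sub_smul, smul_sub, sub_eq_sub_iff_add_eq_add, add_comm]
    exact heq
  -- the residues are compatible
  have congK : ∀ (g : G) (m n : ℕ), 0 < m → 0 < n → m ∣ n → (m : ℤ) ∣ K g n - K g m := by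
    intro g m n hm hn hmn
    obtain ⟨c, rfl⟩ := hmn
    have h1 := hHK g (m * c) hn
    have e1 : ((m : ℤ)) • ((c : ℤ) • H g (m * c)) + K g (m * c) • e = g := by
      rw [smul_smul]
      push_cast at h1 ⊢
      exact h1.symm
    exact uniq m hm _ _ _ _ (e1.trans (hHK g m hm))
  -- the approximating sequences
  have hbnd : ∀ (g : G) (p : Nat.Primes) (i j : ℕ), i ≤ j →
      ‖((K g ((p : ℕ) ^ j) : ℤ_[(p : ℕ)]) : ℤ_[(p : ℕ)]) - (K g ((p : ℕ) ^ i) : ℤ_[(p : ℕ)])‖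
        ≤ ((p : ℕ) : ℝ) ^ (-(i : ℤ)) := by
    intro g p i j hij
    have hpos : ∀ t : ℕ, 0 < (p : ℕ) ^ t := fun t => pow_pos p.2.pos t
    have hd : ((p : ℕ) ^ i : ℤ) ∣ K g ((p : ℕ) ^ j) - K g ((p : ℕ) ^ i) := by
      exact_mod_cast congK g ((p : ℕ) ^ i) ((p : ℕ) ^ j) (hpos i) (hpos j)
        (pow_dvd_pow _ hij)
    have : ((K g ((p : ℕ) ^ j) : ℤ_[(p : ℕ)]) : ℤ_[(p : ℕ)]) - (K g ((p : ℕ) ^ i) : ℤ_[(p : ℕ)])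
        = ((K g ((p : ℕ) ^ j) - K g ((p : ℕ) ^ i) : ℤ) : ℤ_[(p : ℕ)]) := by push_cast; ring
    rw [this]
    exact PadicInt.norm_int_le_pow_iff_dvd.mpr (by exact_mod_cast hd)
  have hplt : ∀ p : Nat.Primes, (1 : ℝ) < ((p : ℕ) : ℝ) := by
    intro p; exact_mod_cast p.2.one_lt
  have hzpow : ∀ (p : Nat.Primes) (i : ℕ),
      ((p : ℕ) : ℝ) ^ (-(i : ℤ)) = ((((p : ℕ) : ℝ))⁻¹) ^ i := by
    intro p i
    rw [zpow_neg, ← inv_zpow, zpow_natCast]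
  have hcauchy : ∀ (g : G) (p : Nat.Primes),
      CauchySeq (fun i : ℕ => (K g ((p : ℕ) ^ i) : ℤ_[(p : ℕ)])) := by
    intro g p
    apply cauchySeq_of_le_geometric ((((p : ℕ) : ℝ))⁻¹) 1
      (inv_lt_one_of_one_lt₀ (hplt p))
    intro i
    rw [dist_eq_norm, norm_sub_rev, one_mul, ← hzpow p i]
    exact hbnd g p i (i + 1) (Nat.le_succ i)
  have hex : ∀ (g : G) (p : Nat.Primes), ∃ x : ℤ_[(p : ℕ)],
      Tendsto (fun i : ℕ => (K g ((p : ℕ) ^ i) : ℤ_[(p : ℕ)])) atTop (𝓝 x) :=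
    fun g p => cauchySeq_tendsto_of_complete (hcauchy g p)
  choose φv hφv using hex
  have hlim0 : ∀ p : Nat.Primes,
      Tendsto (fun i : ℕ => ((p : ℕ) : ℝ) ^ (-(i : ℤ))) atTop (𝓝 0) := by
    intro p
    simp_rw [hzpow p]
    exact tendsto_pow_atTop_nhds_zero_of_lt_one
      (inv_nonneg.mpr (by positivity)) (inv_lt_one_of_one_lt₀ (hplt p))
  -- distance from the limit
  have hchar : ∀ (g : G) (p : Nat.Primes) (i : ℕ),
      ‖φv g p - (K g ((p : ℕ) ^ i) : ℤ_[(p : ℕ)])‖ ≤ ((p : ℕ) : ℝ) ^ (-(i : ℤ)) := by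
    intro g p i
    apply le_of_tendsto ((hφv g p).sub tendsto_const_nhds).norm
    filter_upwards [eventually_ge_atTop i] with j hj
    exact hbnd g p i j hj
  -- small norm forces divisibility of the residue
  have normK_of : ∀ (g : G) (p : Nat.Primes) (a : ℕ),
      ‖φv g p‖ ≤ ((p : ℕ) : ℝ) ^ (-(a : ℤ)) → (((p : ℕ) ^ a : ℕ) : ℤ) ∣ K g ((p : ℕ) ^ a) := by
    intro g p a h
    have key : ‖(K g ((p : ℕ) ^ a) : ℤ_[(p : ℕ)])‖ ≤ ((p : ℕ) : ℝ) ^ (-(a : ℤ)) := by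
      have h2 : (K g ((p : ℕ) ^ a) : ℤ_[(p : ℕ)])
          = ((K g ((p : ℕ) ^ a) : ℤ_[(p : ℕ)]) - φv g p) + φv g p := by ring
      calc ‖(K g ((p : ℕ) ^ a) : ℤ_[(p : ℕ)])‖
          = ‖((K g ((p : ℕ) ^ a) : ℤ_[(p : ℕ)]) - φv g p) + φv g p‖ := by rw [← h2]
        _ ≤ max ‖(K g ((p : ℕ) ^ a) : ℤ_[(p : ℕ)]) - φv g p‖ ‖φv g p‖ :=
            PadicInt.nonarchimedean _ _
        _ ≤ ((p : ℕ) : ℝ) ^ (-(a : ℤ)) := by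
            apply max_le _ h
            rw [norm_sub_rev]
            exact hchar g p a
    have := PadicInt.norm_int_le_pow_iff_dvd.mp key
    exact_mod_cast this
  -- divisibility of residue at n from local data
  have keyDvd : ∀ (g : G) (N : ℕ), 0 < N →
      (∀ (p : Nat.Primes) (k : ℕ), (p : ℕ) ^ k ∣ N → ‖φv g p‖ ≤ ((p : ℕ) : ℝ) ^ (-(k : ℤ))) →
      (N : ℤ) ∣ K g N := by
    intro g N hN hloc
    have : N ∣ (K g N).natAbs := by
      rw [Nat.dvd_iff_prime_pow_dvd_dvd]
      intro p k hp hpk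
      set P : Nat.Primes := ⟨p, hp⟩
      have h1 : (((p : ℕ) ^ k : ℕ) : ℤ) ∣ K g (p ^ k) := normK_of g P k (hloc P k hpk)
      have h2 : ((p ^ k : ℕ) : ℤ) ∣ K g N - K g (p ^ k) := by
        exact_mod_cast congK g (p ^ k) N (pow_pos hp.pos k) hN hpk
      have h3 : ((p ^ k : ℕ) : ℤ) ∣ K g N := by
        have := dvd_add h2 h1
        rwa [sub_add_cancel] at this
      have h4 := Int.natAbs_dvd_natAbs.mpr h3
      rwa [Int.natAbs_natCast] at h4
    exact Int.dvd_natAbs.mp (Int.natCast_dvd_natCast.mpr this)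
  have hppos : ∀ (p : Nat.Primes) (t : ℕ), 0 < (p : ℕ) ^ t :=
    fun p t => pow_pos p.2.pos t
  -- additivity
  have hadd : ∀ g g' : G, φv (g + g') = φv g + φv g' := by
    intro g g'
    funext p
    have hdvd : ∀ i : ℕ, (((p : ℕ) ^ i : ℕ) : ℤ) ∣
        K (g + g') ((p : ℕ) ^ i) - (K g ((p : ℕ) ^ i) + K g' ((p : ℕ) ^ i)) := by
      intro i
      have eq1 : (((p : ℕ) ^ i : ℕ) : ℤ) • (H g ((p : ℕ) ^ i) + H g' ((p : ℕ) ^ i))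
          + (K g ((p : ℕ) ^ i) + K g' ((p : ℕ) ^ i)) • e = g + g' := by
        rw [smul_add, add_smul]
        conv_rhs => rw [hHK g _ (hppos p i), hHK g' _ (hppos p i)]
        abel
      exact uniq _ (hppos p i) _ _ _ _ ((hHK (g + g') _ (hppos p i)).symm.trans eq1.symm)
    have hdiff0 : Tendsto (fun i : ℕ =>
        (K (g + g') ((p : ℕ) ^ i) : ℤ_[(p : ℕ)])
          - ((K g ((p : ℕ) ^ i) : ℤ_[(p : ℕ)]) + (K g' ((p : ℕ) ^ i) : ℤ_[(p : ℕ)])))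
        atTop (𝓝 0) := by
      apply squeeze_zero_norm _ (hlim0 p)
      intro i
      have heq : (K (g + g') ((p : ℕ) ^ i) : ℤ_[(p : ℕ)])
          - ((K g ((p : ℕ) ^ i) : ℤ_[(p : ℕ)]) + (K g' ((p : ℕ) ^ i) : ℤ_[(p : ℕ)]))
          = ((K (g + g') ((p : ℕ) ^ i) - (K g ((p : ℕ) ^ i) + K g' ((p : ℕ) ^ i)) : ℤ)
              : ℤ_[(p : ℕ)]) := by push_cast; ring
      rw [heq]
      exact PadicInt.norm_int_le_pow_iff_dvd.mpr (by exact_mod_cast hdvd i)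
    have h1 := ((hφv g p).add (hφv g' p)).add hdiff0
    rw [add_zero] at h1
    have h3 : Tendsto (fun i : ℕ => (K (g + g') ((p : ℕ) ^ i) : ℤ_[(p : ℕ)])) atTop
        (𝓝 (φv g p + φv g' p)) :=
      Filter.Tendsto.congr (fun i => by abel) h1
    exact tendsto_nhds_unique (hφv (g + g') p) h3
  refine ⟨AddMonoidHom.mk' φv hadd, ?_, ?_, ?_⟩
  · -- injectivity
    rw [injective_iff_map_eq_zero]
    intro g hg
    have hg0 : φv g = 0 := hg
    apply hleib g
    intro n hn
    lift n to ℕ using hn.le with N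
    have hN : 0 < N := by exact_mod_cast hn
    have hdvd : (N : ℤ) ∣ K g N := by
      apply keyDvd g N hN
      intro p k _
      rw [show φv g p = 0 from congrFun hg0 p, norm_zero]
      positivity
    obtain ⟨t, ht⟩ := hdvd
    refine ⟨H g N + t • e, ?_⟩
    calc g = (N : ℤ) • H g N + K g N • e := hHK g N hN
      _ = (N : ℤ) • (H g N + t • e) := by rw [ht, mul_smul, smul_add]
  · -- e maps to 1
    funext p
    apply tendsto_nhds_unique (hφv e p)
    have h1p : (1 : Zhat) p = 1 := rfl
    rw [h1p]
    have hdvd : ∀ i : ℕ, (((p : ℕ) ^ i : ℕ) : ℤ) ∣ K e ((p : ℕ) ^ i) - 1 := by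
      intro i
      apply uniq _ (hppos p i) (H e ((p : ℕ) ^ i)) 0
      rw [← hHK e _ (hppos p i), smul_zero, zero_add, one_smul]
    have h0 : Tendsto (fun i : ℕ => (K e ((p : ℕ) ^ i) : ℤ_[(p : ℕ)]) - 1) atTop (𝓝 0) := by
      apply squeeze_zero_norm _ (hlim0 p)
      intro i
      have heq : (K e ((p : ℕ) ^ i) : ℤ_[(p : ℕ)]) - 1
          = ((K e ((p : ℕ) ^ i) - 1 : ℤ) : ℤ_[(p : ℕ)]) := by push_cast; ring
      rw [heq]
      exact PadicInt.norm_int_le_pow_iff_dvd.mpr (by exact_mod_cast hdvd i)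
    have h1 := h0.add (tendsto_const_nhds (x := (1 : ℤ_[(p : ℕ)])))
    rw [zero_add] at h1
    exact Filter.Tendsto.congr (fun i => by ring) h1
  · -- purity
    intro n b hn hmem
    obtain ⟨g, hg⟩ := hmem
    lift n to ℕ using hn.le with N
    have hN : 0 < N := by exact_mod_cast hn
    have hg' : φv g = (N : ℤ) • b := hg
    have hdvd : (N : ℤ) ∣ K g N := by
      apply keyDvd g N hN
      intro p k hpk
      rw [congrFun hg' p]
      have h2 : ((N : ℤ) • b) p = (((N : ℤ)) : ℤ_[(p : ℕ)]) * b p := by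
        simp [Pi.smul_apply, zsmul_eq_mul]
      rw [h2, norm_mul]
      calc ‖(((N : ℤ)) : ℤ_[(p : ℕ)])‖ * ‖b p‖
          ≤ ‖(((N : ℤ)) : ℤ_[(p : ℕ)])‖ * 1 :=
            mul_le_mul_of_nonneg_left (PadicInt.norm_le_one _) (norm_nonneg _)
        _ = ‖(((N : ℤ)) : ℤ_[(p : ℕ)])‖ := mul_one _
        _ ≤ ((p : ℕ) : ℝ) ^ (-(k : ℤ)) :=
            PadicInt.norm_int_le_pow_iff_dvd.mpr (by exact_mod_cast hpk)
    obtain ⟨t, ht⟩ := hdvd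
    have hgdiv : g = (N : ℤ) • (H g N + t • e) := by
      calc g = (N : ℤ) • H g N + K g N • e := hHK g N hN
        _ = (N : ℤ) • (H g N + t • e) := by rw [ht, mul_smul, smul_add]
    refine ⟨H g N + t • e, ?_⟩
    have h2 : (N : ℤ) • φv (H g N + t • e) = (N : ℤ) • b := by
      rw [← hg']
      conv_rhs => rw [hgdiv]
      exact (map_zsmul (AddMonoidHom.mk' φv hadd) _ _).symm
    funext p
    have h3 := congrFun h2 p
    have hNne : (((N : ℤ)) : ℤ_[(p : ℕ)]) ≠ 0 := by
      have : (N : ℤ) ≠ 0 := by exact_mod_cast hN.ne'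
      exact Int.cast_ne_zero.mpr this
    apply mul_left_cancel₀ hNne
    simpa [Pi.smul_apply, zsmul_eq_mul] using h3
end

section
/- Let H and K be pure additive subgroups of ∏_p ℤ_p, each containing the element 1 = (1)_p. If there exists a group isomorphism φ : H → K with φ(1) = 1, then H = K. -/
set_option maxSynthPendingDepth 2
set_option synthInstance.maxHeartbeats 400000

lemma padic_eq_zero_of_forall_dvd {p : ℕ} [Fact p.Prime] (y : ℤ_[p])
    (h : ∀ k : ℕ, (p : ℤ_[p]) ^ k ∣ y) : y = 0 := by
  have hp1 : (1 : ℝ) < p := by exact_mod_cast (Fact.out : p.Prime).one_lt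
  by_contra hy
  have h0 : 0 < ‖y‖ := norm_pos_iff.mpr hy
  obtain ⟨k, hk⟩ := exists_pow_lt_of_lt_one h0 (by rw [inv_lt_one_iff₀]; right; exact hp1 : (p:ℝ)⁻¹ < 1)
  have hle : ‖y‖ ≤ (p : ℝ) ^ (-(k:ℤ)) := by
    rw [PadicInt.norm_le_pow_iff_mem_span_pow, Ideal.mem_span_singleton]
    exact h k
  rw [zpow_neg, zpow_natCast, ← inv_pow] at hle
  exact absurd (hle.trans_lt hk) (lt_irrefl _)

lemma exists_approx (x : Zhat) (p : Nat.Primes) (k : ℕ) :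
    ∃ (r : ℤ) (b : Zhat), x = r • (1 : Zhat) + ((p : ℕ) ^ k : ℤ) • b := by
  set r : ℕ := (x p).appr k with hr
  have hdvd : ∀ q : Nat.Primes, ((p : ℕ) : ℤ_[(q : ℕ)]) ^ k ∣ (x q - (r : ℤ_[(q : ℕ)])) := by
    intro q
    by_cases hq : q = p
    · subst hq
      have := (x q).appr_spec k
      rwa [Ideal.mem_span_singleton] at this
    · have hu : IsUnit ((p : ℕ) : ℤ_[(q : ℕ)]) := by
        rw [PadicInt.isUnit_iff]
        refine le_antisymm (PadicInt.norm_le_one _) ?_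
        by_contra hlt
        push_neg at hlt
        have : ((q:ℕ) : ℤ) ∣ ((p:ℕ) : ℤ) := by
          rw [← PadicInt.norm_int_lt_one_iff_dvd]
          exact_mod_cast hlt
        have : (q:ℕ) ∣ (p:ℕ) := by exact_mod_cast this
        exact hq (Nat.Primes.coe_nat_injective ((Nat.prime_dvd_prime_iff_eq q.2 p.2).mp this))
      exact (hu.pow k).dvd
  choose b hb using hdvd
  refine ⟨(r : ℤ), b, ?_⟩
  funext q
  have h2 : x q = (r : ℤ_[(q : ℕ)]) + ((p : ℕ) : ℤ_[(q : ℕ)]) ^ k * b q := by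
    linear_combination hb q
  show x q = (r : ℤ) • (1 : ℤ_[(q : ℕ)]) + ((p : ℕ) ^ k : ℤ) • b q
  rw [zsmul_eq_mul, zsmul_eq_mul]
  push_cast
  rw [h2]; ring

lemma phi_fix (H K : AddSubgroup Zhat)
    (hHpure : ∀ (n : ℤ) (b : Zhat), 0 < n → n • b ∈ H → b ∈ H)
    (h1H : (1 : Zhat) ∈ H) (h1K : (1 : Zhat) ∈ K)
    (φ : H ≃+ K) (hφ : (φ ⟨1, h1H⟩ : Zhat) = 1) (x : H) :
    (φ x : Zhat) = (x : Zhat) := by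
  have key : ∀ (q : Nat.Primes) (k : ℕ),
      ((q : ℕ) : ℤ_[(q : ℕ)]) ^ k ∣ ((φ x : Zhat) q - (x : Zhat) q) := by
    intro q k
    obtain ⟨r, b, hx⟩ := exists_approx (x : Zhat) q k
    have hpos : (0 : ℤ) < ((q : ℕ) ^ k : ℤ) := by exact_mod_cast pow_pos q.2.pos k
    have hbH : b ∈ H := by
      apply hHpure _ _ hpos
      have : ((q : ℕ) ^ k : ℤ) • b = (x : Zhat) - r • (1 : Zhat) := by
        rw [hx]; abel
      rw [this]
      exact sub_mem x.2 (zsmul_mem h1H r)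
    have hxeq : x = r • (⟨1, h1H⟩ : H) + ((q : ℕ) ^ k : ℤ) • (⟨b, hbH⟩ : H) := by
      apply Subtype.ext
      exact hx
    have hφx : (φ x : Zhat) = r • (1 : Zhat) + ((q : ℕ) ^ k : ℤ) • (φ ⟨b, hbH⟩ : Zhat) := by
      rw [hxeq, map_add, map_zsmul, map_zsmul]
      push_cast [hφ]
      ring
    have : (φ x : Zhat) - (x : Zhat) = ((q : ℕ) ^ k : ℤ) • ((φ ⟨b, hbH⟩ : Zhat) - b) := by
      rw [hφx, hx]; rw [smul_sub]; abel
    refine ⟨((φ ⟨b, hbH⟩ : Zhat) - b) q, ?_⟩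
    have := congrFun this q
    simpa [zsmul_eq_mul] using this
  have : ∀ q : Nat.Primes, (φ x : Zhat) q - (x : Zhat) q = 0 := fun q =>
    padic_eq_zero_of_forall_dvd _ (key q)
  funext q
  exact sub_eq_zero.mp (this q)

/-- Distinct pure subgroups of `∏_p ℤ_p` containing `1` (i.e., distinct
Z-subgroups of `Ẑ`) are non-isomorphic over `1`: if a group isomorphism between two
of them fixes `1`, then they are equal. -/
theorem pure_subgroups_iso_eq (H K : AddSubgroup Zhat)
    (hHpure : ∀ (n : ℤ) (b : Zhat), 0 < n → n • b ∈ H → b ∈ H)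
    (hKpure : ∀ (n : ℤ) (b : Zhat), 0 < n → n • b ∈ K → b ∈ K)
    (h1H : (1 : Zhat) ∈ H) (h1K : (1 : Zhat) ∈ K)
    (φ : H ≃+ K) (hφ : (φ ⟨1, h1H⟩ : Zhat) = 1) :
    H = K := by
  have hf := phi_fix H K hHpure h1H h1K φ hφ
  have hφ1 : φ ⟨1, h1H⟩ = ⟨1, h1K⟩ := Subtype.ext hφ
  have hφ' : (φ.symm ⟨1, h1K⟩ : Zhat) = 1 := by
    rw [← hφ1, AddEquiv.symm_apply_apply]
  have hg := phi_fix K H hKpure h1K h1H φ.symm hφ'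
  apply le_antisymm
  · intro z hz
    have : (φ ⟨z, hz⟩ : Zhat) = z := hf ⟨z, hz⟩
    rw [← this]; exact (φ ⟨z, hz⟩).2
  · intro z hz
    have : (φ.symm ⟨z, hz⟩ : Zhat) = z := hg ⟨z, hz⟩
    rw [← this]; exact (φ.symm ⟨z, hz⟩).2
end

section
/- For every cardinal κ with ℵ₀ ≤ κ ≤ 2^ℵ₀ there exists a Z-group G of cardinality κ that is not archimedean and satisfies ⋂_{n>0} nG = {0}. -/
open Cardinal

section Helpers

instance ZG_perfect : PerfectSpace ℚ_[2] := by
  rw [perfectSpace_iff_forall_not_isolated]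
  exact fun x => NormedField.nhdsNE_neBot x

lemma ZG_mk_padic_two : #ℚ_[2] = 𝔠 := by
  apply le_antisymm
  · have e : ∀ x : ℚ_[2], ∀ n : ℕ, ∃ r : ℚ, ‖x - r‖ < 1/(n+1) := by
      intro x n
      exact Padic.rat_dense 2 x (by positivity)
    choose f hf using e
    have hinj : Function.Injective f := by
      intro x y hxy
      by_contra hne
      have hd : 0 < ‖x - y‖ := by
        simp [norm_pos_iff, sub_eq_zero, hne]
      obtain ⟨n, hn⟩ := exists_nat_one_div_lt (half_pos hd)
      have h1 := hf x n
      have h2 := hf y n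
      rw [hxy] at h1
      have h3 : ‖x - y‖ ≤ ‖x - (f y n : ℚ_[2])‖ + ‖(f y n : ℚ_[2]) - y‖ := by
        simpa using norm_add_le (x - (f y n : ℚ_[2])) ((f y n : ℚ_[2]) - y)
      rw [norm_sub_rev ((f y n : ℚ_[2])) y] at h3
      nlinarith
    calc #ℚ_[2] ≤ #(ℕ → ℚ) := mk_le_of_injective hinj
    _ ≤ 𝔠 := by
        rw [mk_arrow]
        simp only [mk_denumerable, lift_aleph0, lift_id]
        rw [aleph0_power_aleph0]
  · obtain ⟨f, _, _, hinj⟩ := (PerfectSpace.univ_perfect (α := ℚ_[2])).exists_nat_bool_injection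
      (Set.univ_nonempty)
    have hbz : #(ℕ → Bool) = 𝔠 := by
      rw [mk_arrow]
      simp [mk_bool, two_power_aleph0]
    calc 𝔠 = #(ℕ → Bool) := hbz.symm
    _ ≤ #ℚ_[2] := mk_le_of_injective hinj

lemma ZG_norm_two : ‖(2:ℚ_[2])‖ = 2⁻¹ := by
  have := @Padic.norm_p 2 ⟨Nat.prime_two⟩
  push_cast at this
  simpa using this

lemma ZG_exists_int_close (β : ℚ_[2]) (hβ : ‖β‖ ≤ 1) (s : ℕ) :
    ∃ k : ℤ, ‖β - (k : ℚ_[2])‖ ≤ (2:ℝ) ^ (-(s:ℤ)) := by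
  set B : ℤ_[2] := ⟨β, hβ⟩ with hB
  refine ⟨(B.appr s : ℤ), ?_⟩
  have h1 : B - ((B.appr s : ℤ) : ℤ_[2]) ∈ Ideal.span {(2:ℤ_[2])^s} := by
    have := PadicInt.appr_spec s B
    simpa using this
  have h2 : ‖B - ((B.appr s : ℤ) : ℤ_[2])‖ ≤ (2:ℝ) ^ (-(s:ℤ)) := by
    have := (PadicInt.norm_le_pow_iff_mem_span_pow (B - ((B.appr s : ℤ) : ℤ_[2])) s).2
    have h3 := this (by simpa using h1)
    simpa using h3
  have heq : ((B - ((B.appr s : ℤ) : ℤ_[2]) : ℤ_[2]) : ℚ_[2]) = β - ((B.appr s : ℤ) : ℚ_[2]) := by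
    push_cast [hB]
    rfl
  rwa [PadicInt.norm_def, heq] at h2

lemma ZG_exists_pow_mul_norm_le_one (γ : ℚ_[2]) : ∃ t : ℕ, ‖(2:ℚ_[2])^t * γ‖ ≤ 1 := by
  obtain ⟨n, hn⟩ := exists_nat_gt ‖γ‖
  have hn2 : ‖γ‖ ≤ (2:ℝ)^n := le_trans hn.le (by exact_mod_cast (Nat.lt_two_pow_self (n := n)).le)
  refine ⟨n, ?_⟩
  rw [norm_mul, norm_pow, ZG_norm_two, inv_pow]
  rw [inv_mul_le_iff₀ (by positivity), mul_one]
  exact hn2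

lemma ZG_exists_dyadic_close (γ : ℚ_[2]) : ∃ (a : ℤ) (t : ℕ), ‖γ + ((a : ℚ_[2]) / 2^t)‖ ≤ 1 := by
  obtain ⟨t, hβ⟩ := ZG_exists_pow_mul_norm_le_one γ
  obtain ⟨k, hk⟩ := ZG_exists_int_close _ hβ t
  refine ⟨-k, t, ?_⟩
  have h2t : (2:ℚ_[2])^t ≠ 0 := pow_ne_zero _ two_ne_zero
  have heq : γ + (((-k : ℤ) : ℚ_[2]) / 2^t) = ((2:ℚ_[2])^t * γ - k) / 2^t := by
    field_simp
    push_cast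
    ring
  rw [heq, norm_div, norm_pow, ZG_norm_two]
  rw [div_le_iff₀ (by positivity), one_mul, inv_pow]
  calc ‖(2:ℚ_[2])^t * γ - k‖ ≤ (2:ℝ)^(-(t:ℤ)) := hk
  _ ≤ ((2:ℝ)^t)⁻¹ := by rw [zpow_neg, zpow_natCast]

lemma ZG_norm_nat (n : ℕ) (hn : n ≠ 0) :
    ‖((n:ℤ) : ℚ_[2])‖ = (2:ℝ) ^ (-(n.factorization 2 : ℤ)) := by
  set s := n.factorization 2
  set u := n / 2^s with hu
  have hmul : 2^s * u = n := Nat.ordProj_mul_ordCompl_eq_self n 2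
  have h2u : ¬ (2 ∣ u) := Nat.not_dvd_ordCompl Nat.prime_two hn
  have hu1 : ‖((u:ℤ) : ℚ_[2])‖ = 1 := by
    have hle := Padic.norm_int_le_one (p := 2) (u : ℤ)
    have hlt := (Padic.norm_intCast_lt_one_iff (p := 2) (k := (u : ℤ)))
    rcases lt_or_eq_of_le hle with h | h
    · exfalso; exact h2u (by exact_mod_cast hlt.1 h)
    · exact h
  have hcast : ((n:ℤ) : ℚ_[2]) = (2:ℚ_[2])^s * ((u:ℤ) : ℚ_[2]) := by
    rw [← hmul]; push_cast; ring
  rw [hcast, norm_mul, norm_pow, ZG_norm_two, hu1, mul_one, inv_pow, zpow_neg, zpow_natCast]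

lemma ZG_div_key (β : ℚ_[2]) (hβ : ‖β‖ ≤ 1) (n : ℕ) (hn : n ≠ 0) (a : ℤ) (t : ℕ) :
    ∃ (k b : ℤ) (t' : ℕ),
      ((a : ℚ)/2^t - k) / n = (b : ℚ) / 2^t' ∧ ‖(β - k) / ((n:ℤ) : ℚ_[2])‖ ≤ 1 := by
  set s := n.factorization 2 with hs
  set u := n / 2^s with hu
  have hmul : 2^s * u = n := Nat.ordProj_mul_ordCompl_eq_self n 2
  have h2u : ¬ (2 ∣ u) := Nat.not_dvd_ordCompl Nat.prime_two hn
  have hu0 : u ≠ 0 := by intro h; rw [h, mul_zero] at hmul; exact hn hmul.symm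
  obtain ⟨k₀, hk₀⟩ := ZG_exists_int_close β hβ s
  have hcop : Nat.Coprime (2^(s+t)) u :=
    Nat.Coprime.pow_left _ (Nat.Prime.coprime_iff_not_dvd Nat.prime_two |>.mpr h2u)
  have hbez := Nat.gcd_eq_gcd_ab (2^(s+t)) u
  rw [hcop] at hbez
  set x := Nat.gcdA (2^(s+t)) u
  set yb := Nat.gcdB (2^(s+t)) u
  set c : ℤ := a - k₀ * 2^t with hc
  set m : ℤ := x * c with hm
  set k : ℤ := k₀ + 2^s * m with hk
  have hdvd : (u:ℤ) ∣ (a - k * 2^t) := by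
    have h1 : a - k * 2^t = c - 2^(s+t) * m := by rw [hk, hc]; push_cast; ring
    have h2 : c - 2^(s+t) * m = c * ((u:ℤ) * yb) := by
      have hb : ((2:ℤ)^(s+t)) * x + (u:ℤ) * yb = 1 := by exact_mod_cast hbez.symm
      calc c - 2^(s+t) * m = c * (1 - 2^(s+t) * x) := by rw [hm]; ring
      _ = c * ((u:ℤ) * yb) := by rw [← hb]; ring
    rw [h1, h2]
    exact ⟨c * yb, by ring⟩
  obtain ⟨w, hw⟩ := hdvd
  refine ⟨k, w, s + t, ?_, ?_⟩
  · have hn' : (n:ℚ) ≠ 0 := Nat.cast_ne_zero.mpr hn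
    have hnq : (n:ℚ) = 2^s * u := by exact_mod_cast hmul.symm
    have hu' : (u:ℚ) ≠ 0 := Nat.cast_ne_zero.mpr hu0
    have haw : (a:ℚ) - k * 2^t = u * w := by exact_mod_cast congrArg (Int.cast : ℤ → ℚ) hw
    rw [hnq]
    field_simp
    linear_combination (2:ℚ)^(s+t) * haw
  · have hnorm_n : ‖((n:ℤ) : ℚ_[2])‖ = (2:ℝ)^(-(s:ℤ)) := ZG_norm_nat n hn
    have hβk : ‖β - (k:ℚ_[2])‖ ≤ (2:ℝ)^(-(s:ℤ)) := by
      have h1 : β - (k:ℚ_[2]) = (β - (k₀:ℚ_[2])) - (2:ℚ_[2])^s * (m:ℚ_[2]) := by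
        rw [hk]; push_cast; ring
      have h2 : ‖(2:ℚ_[2])^s * (m:ℚ_[2])‖ ≤ (2:ℝ)^(-(s:ℤ)) := by
        rw [norm_mul, norm_pow, ZG_norm_two]
        calc (2:ℝ)⁻¹^s * ‖(m:ℚ_[2])‖ ≤ (2:ℝ)⁻¹^s * 1 := by
              exact mul_le_mul_of_nonneg_left (Padic.norm_int_le_one m) (by positivity)
        _ = (2:ℝ)^(-(s:ℤ)) := by rw [mul_one, inv_pow, zpow_neg, zpow_natCast]
      rw [h1]
      calc ‖(β - (k₀:ℚ_[2])) - (2:ℚ_[2])^s * (m:ℚ_[2])‖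
          ≤ max ‖β - (k₀:ℚ_[2])‖ ‖(2:ℚ_[2])^s * (m:ℚ_[2])‖ := by
            have := Padic.nonarchimedean (β - (k₀:ℚ_[2])) (-((2:ℚ_[2])^s * (m:ℚ_[2])))
            simpa [sub_eq_add_neg, norm_neg] using this
      _ ≤ (2:ℝ)^(-(s:ℤ)) := max_le hk₀ h2
    have hn0 : ((n:ℤ) : ℚ_[2]) ≠ 0 := by exact_mod_cast Nat.cast_ne_zero.mpr hn
    rw [norm_div, hnorm_n, div_le_one (by positivity)]
    exact hβk

/-- dyadic rationals -/
def ZG_Dyadic (y : ℚ) : Prop := ∃ (a : ℤ) (t : ℕ), y = (a : ℚ) / 2^t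

lemma ZG_Dyadic.zero : ZG_Dyadic 0 := ⟨0, 0, by norm_num⟩

lemma ZG_Dyadic.one : ZG_Dyadic 1 := ⟨1, 0, by norm_num⟩

lemma ZG_Dyadic.neg {y : ℚ} (h : ZG_Dyadic y) : ZG_Dyadic (-y) := by
  obtain ⟨a, t, rfl⟩ := h
  exact ⟨-a, t, by push_cast; ring⟩

lemma ZG_Dyadic.add {y z : ℚ} (hy : ZG_Dyadic y) (hz : ZG_Dyadic z) : ZG_Dyadic (y + z) := by
  obtain ⟨a, t, rfl⟩ := hy
  obtain ⟨b, r, rfl⟩ := hz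
  refine ⟨a * 2^r + b * 2^t, t + r, ?_⟩
  have h1 : ((2:ℚ))^t ≠ 0 := by positivity
  have h2 : ((2:ℚ))^r ≠ 0 := by positivity
  field_simp
  push_cast
  ring_nf

end Helpers

/-- A Z-group: a linearly ordered abelian group with a least positive element `one`
such that every element is congruent to an integer multiple of `one` modulo `n`,
for every integer `n > 0`. -/
structure ZGroup where
  carrier : Type
  [grp : AddCommGroup carrier]
  [ord : LinearOrder carrier]
  [isOrd : IsOrderedAddMonoid carrier]
  one : carrier
  one_pos : 0 < one
  one_least : ∀ x : carrier, 0 < x → one ≤ x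
  div : ∀ g : carrier, ∀ n : ℤ, 0 < n → ∃ h : carrier, ∃ k : ℤ, g = n • h + k • one

attribute [instance] ZGroup.grp ZGroup.ord ZGroup.isOrd

set_option maxHeartbeats 1000000 in
/-- For every infinite cardinal `κ ≤ 2^ℵ₀` there is a non-archimedean Leibnizian
Z-group of cardinality `κ`. -/
theorem exists_nonarchimedean_leibnizian_zgroup (κ : Cardinal)
    (h1 : Cardinal.aleph0 ≤ κ) (h2 : κ ≤ 2 ^ Cardinal.aleph0) :
    ∃ Z : ZGroup, Cardinal.mk Z.carrier = κ ∧
      ¬ (∀ x y : Z.carrier, 0 < x → ∃ n : ℕ, y ≤ n • x) ∧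
      (∀ g : Z.carrier, (∀ n : ℤ, 0 < n → ∃ h : Z.carrier, g = n • h) → g = 0) := by
  rw [Cardinal.two_power_aleph0] at h2
  -- rank facts
  have hrk : Module.rank ℚ ℚ_[2] = 𝔠 := by
    rw [Module.Free.rank_eq_mk_of_infinite_lt ℚ ℚ_[2] (by
        simp [ZG_mk_padic_two, Cardinal.mkRat]
        exact aleph0_lt_continuum)]
    exact ZG_mk_padic_two
  -- independent set in ℝ
  obtain ⟨S, hScard, hSli⟩ := le_rank_iff_exists_linearIndependent.mp
    (show κ ≤ Module.rank ℚ ℝ by rw [Real.rank_rat_real]; exact h2)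
  replace hSli : LinearIndependent ℚ (Subtype.val : ↥S → ℝ) := hSli
  -- quotient by span of 1
  set N : Submodule ℚ ℚ_[2] := Submodule.span ℚ ({1} : Set ℚ_[2]) with hN
  have hrankW : κ ≤ Module.rank ℚ (ℚ_[2] ⧸ N) := by
    have h := Submodule.rank_quotient_add_rank N
    rw [hrk] at h
    have hNle : Module.rank ℚ N ≤ 1 := le_trans (rank_span_le _) (by simp)
    have hge : 𝔠 ≤ Module.rank ℚ (ℚ_[2] ⧸ N) + 1 := by
      rw [← h]; exact add_le_add_right hNle _
    rcases le_or_gt ℵ₀ (Module.rank ℚ (ℚ_[2] ⧸ N)) with hle | hlt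
    · refine h2.trans (le_trans hge ?_)
      rw [add_one_eq hle]
    · exfalso
      have hsmall : Module.rank ℚ (ℚ_[2] ⧸ N) + 1 < ℵ₀ := add_lt_aleph0 hlt one_lt_aleph0
      exact absurd (hge.trans_lt hsmall) (by simp [not_lt]; exact aleph0_le_continuum)
  obtain ⟨T, hTcard, hTli⟩ := le_rank_iff_exists_linearIndependent.mp hrankW
  replace hTli : LinearIndependent ℚ (Subtype.val : ↥T → ℚ_[2] ⧸ N) := hTli
  obtain ⟨e⟩ : Nonempty (↥S ≃ ↥T) := Cardinal.eq.mp (hScard.trans hTcard.symm)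
  -- lift T to ℚ_[2], choosing representatives in the unit ball
  have hlift : ∀ t : ↥T, ∃ z : ℚ_[2], N.mkQ z = (t : ℚ_[2] ⧸ N) ∧ ‖z‖ ≤ 1 := by
    intro t
    obtain ⟨z₀, hz₀⟩ := N.mkQ_surjective (t : ℚ_[2] ⧸ N)
    obtain ⟨a, tt, hn⟩ := ZG_exists_dyadic_close z₀
    refine ⟨z₀ + ((a : ℚ_[2]) / 2^tt), ?_, hn⟩
    have hmemN : ((a : ℚ_[2]) / 2^tt) ∈ N := by
      rw [hN, Submodule.mem_span_singleton]
      refine ⟨(a : ℚ)/2^tt, ?_⟩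
      rw [Rat.smul_def, mul_one]
      push_cast
      ring
    rw [map_add, hz₀]
    have : N.mkQ ((a : ℚ_[2]) / 2^tt) = 0 := by
      rw [Submodule.mkQ_apply, Submodule.Quotient.mk_eq_zero]
      exact hmemN
    rw [this, add_zero]
  choose z hz hznorm using hlift
  set α : ↥S → ℚ_[2] := fun s => z (e s) with hα
  have hαnorm : ∀ s, ‖α s‖ ≤ 1 := fun s => hznorm (e s)
  -- linear independence of the projections of α
  have hπα : LinearIndependent ℚ (fun s : ↥S => N.mkQ (α s)) := by
    have h0 : LinearIndependent ℚ (fun s : ↥S => ((e s : ℚ_[2] ⧸ N))) :=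
      hTli.comp e e.injective
    have heqf : (fun s : ↥S => N.mkQ (α s)) = (fun s : ↥S => ((e s : ℚ_[2] ⧸ N))) :=
      funext (fun s => hz (e s))
    rw [heqf]
    exact h0
  -- the ordered vector space V and basis
  set V : Submodule ℚ ℝ := Submodule.span ℚ S with hV
  have hVeq' : Submodule.span ℚ (Set.range (Subtype.val : ↥S → ℝ)) = V := by
    rw [Subtype.range_val]
  set b : Module.Basis ↥S ℚ V := (Module.Basis.span hSli).map (LinearEquiv.ofEq _ _ hVeq') with hb
  set Φ : V →ₗ[ℚ] ℚ_[2] := b.constr ℚ α with hΦ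
  have hΦb : ∀ s : ↥S, Φ (b s) = α s := fun s => b.constr_basis ℚ α s
  -- the kernel property
  have hker : ∀ (v : V) (y : ℚ), Φ v + (y : ℚ_[2]) = 0 → v = 0 ∧ y = 0 := by
    intro v y hvy
    have hπ1 : N.mkQ (1:ℚ_[2]) = 0 := by
      rw [Submodule.mkQ_apply, Submodule.Quotient.mk_eq_zero]
      exact Submodule.mem_span_singleton_self _
    have hy1 : (y:ℚ_[2]) = y • (1:ℚ_[2]) := by rw [Rat.smul_def, mul_one]
    have h2 := congrArg N.mkQ hvy
    rw [map_add, map_zero, hy1, map_smul, hπ1, smul_zero, add_zero] at h2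
    have h3 : N.mkQ (Φ v) = Finsupp.linearCombination ℚ (fun s => N.mkQ (α s)) (b.repr v) := by
      rw [Finsupp.linearCombination_apply, hΦ, Module.Basis.constr_apply, map_finsuppSum]
      simp [map_smul]
    have h4 : b.repr v = 0 := linearIndependent_iff.mp hπα _ (by rw [← h3]; exact h2)
    have hv0 : v = 0 := by
      have := congrArg b.repr.symm (h4 : b.repr v = 0)
      simpa using this
    refine ⟨hv0, ?_⟩
    rw [hv0, map_zero, zero_add] at hvy
    exact_mod_cast hvy
  -- the subgroup G
  set Gc : Set (Lex (↥V × ℚ)) :=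
    {g | ZG_Dyadic (ofLex g).2 ∧ ‖Φ (ofLex g).1 + (((ofLex g).2 : ℚ) : ℚ_[2])‖ ≤ 1} with hGc
  have hmem : ∀ g : Lex (↥V × ℚ), g ∈ Gc ↔
      ZG_Dyadic (ofLex g).2 ∧ ‖Φ (ofLex g).1 + (((ofLex g).2 : ℚ) : ℚ_[2])‖ ≤ 1 :=
    fun g => Iff.rfl
  set G : AddSubgroup (Lex (↥V × ℚ)) :=
    { carrier := Gc
      zero_mem' := by
        refine ⟨ZG_Dyadic.zero, ?_⟩
        show ‖Φ 0 + ((0:ℚ) : ℚ_[2])‖ ≤ 1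
        simp
      add_mem' := by
        rintro x y ⟨hx1, hx2⟩ ⟨hy1, hy2⟩
        refine ⟨hx1.add hy1, ?_⟩
        show ‖Φ ((ofLex x).1 + (ofLex y).1) +((((ofLex x).2 + (ofLex y).2 : ℚ)) : ℚ_[2])‖ ≤ 1
        rw [map_add]
        push_cast
        have heq : Φ (ofLex x).1 + Φ (ofLex y).1 + (((ofLex x).2 : ℚ_[2]) + ((ofLex y).2 : ℚ_[2]))
            = (Φ (ofLex x).1 + ((ofLex x).2 : ℚ_[2])) + (Φ (ofLex y).1 + ((ofLex y).2 : ℚ_[2])) := by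
          ring
        rw [heq]
        exact le_trans (Padic.nonarchimedean _ _) (max_le hx2 hy2)
      neg_mem' := by
        rintro x ⟨hx1, hx2⟩
        refine ⟨hx1.neg, ?_⟩
        show ‖Φ (-(ofLex x).1) + (((-(ofLex x).2 : ℚ)) : ℚ_[2])‖ ≤ 1
        rw [map_neg]
        push_cast
        rw [← neg_add, norm_neg]
        exact hx2 } with hG
  -- the one element
  have hone_mem : toLex ((0 : V), (1:ℚ)) ∈ G := by
    refine ⟨ZG_Dyadic.one, ?_⟩
    show ‖Φ 0 + ((1:ℚ) : ℚ_[2])‖ ≤ 1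
    simp
  set Z : ZGroup :=
    { carrier := ↥G
      one := ⟨toLex ((0 : V), (1:ℚ)), hone_mem⟩
      one_pos := by
        have : (0 : Lex (↥V × ℚ)) < toLex ((0 : V), (1:ℚ)) :=
          Prod.Lex.lt_iff.mpr (Or.inr ⟨rfl, one_pos⟩)
        exact this
      one_least := by
        rintro ⟨xval, hxD, hxnorm⟩ hx
        have hx' : (0 : Lex (↥V × ℚ)) < xval := hx
        have hlt : (0:V) < (ofLex xval).1 ∨ (0:V) = (ofLex xval).1 ∧ (0:ℚ) < (ofLex xval).2 :=
          Prod.Lex.lt_iff.mp hx'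
        have hgoal : toLex ((0 : V), (1:ℚ)) ≤ xval → _ ≤ _ := fun h => h
        refine hgoal ?_
        rw [show xval = toLex (ofLex xval) from rfl]
        refine Prod.Lex.le_iff.mpr ?_
        rcases hlt with hv | ⟨hv0, hy0⟩
        · exact Or.inl hv
        · refine Or.inr ⟨hv0, ?_⟩
          -- second coordinate is a positive integer
          obtain ⟨a, t, hya⟩ := hxD
          have hΦ0 : Φ (ofLex xval).1 = 0 := by rw [← hv0, map_zero]
          have hnorm2 : ‖(((ofLex xval).2 : ℚ) : ℚ_[2])‖ ≤ 1 := by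
            have := hxnorm
            rw [hΦ0, zero_add] at this
            exact this
          rw [hya] at hnorm2
          have hcast : (((a : ℚ) / 2^t : ℚ) : ℚ_[2]) = (a : ℚ_[2]) / 2^t := by push_cast; ring
          rw [hcast, norm_div, norm_pow, ZG_norm_two] at hnorm2
          have h2t : (0:ℝ) < 2⁻¹^t := by positivity
          have hna : ‖(a : ℚ_[2])‖ ≤ (2:ℝ)^(-(t:ℤ)) := by
            rw [div_le_one h2t] at hnorm2
            calc ‖(a : ℚ_[2])‖ ≤ 2⁻¹^t := hnorm2
            _ = (2:ℝ)^(-(t:ℤ)) := by rw [inv_pow, zpow_neg, zpow_natCast]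
          have hdvd : ((2:ℤ)^t) ∣ a := by
            have := (Padic.norm_int_le_pow_iff_dvd (p := 2) a t).mp (by exact_mod_cast hna)
            exact_mod_cast this
          obtain ⟨bb, rfl⟩ := hdvd
          have hyb : (ofLex xval).2 = (bb : ℚ) := by
            rw [hya]; push_cast; field_simp
          rw [hyb] at hy0; rw [show (ofLex (toLex (ofLex xval))).2 = (bb:ℚ) from hyb]
          have hy0' : (0:ℚ) < (bb:ℚ) := hy0
          have hbbpos : (0:ℤ) < bb := by exact_mod_cast hy0'
          show (1:ℚ) ≤ (bb:ℚ)
          exact_mod_cast hbbpos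
      div := by
        rintro ⟨gval, hgD, hgnorm⟩ n hn
        set v := (ofLex gval).1 with hv
        set y := (ofLex gval).2 with hy
        obtain ⟨a, t, hya⟩ := hgD
        set n' := n.toNat with hn'
        have hnn : (n' : ℤ) = n := Int.toNat_of_nonneg hn.le
        have hn0 : n' ≠ 0 := by
          intro h; rw [h] at hnn; exact absurd (hnn ▸ hn) (by norm_num)
        set β := Φ v + (y : ℚ_[2]) with hβ
        obtain ⟨k, bb, t', hrat, hnormdiv⟩ := ZG_div_key β hgnorm n' hn0 a t
        have hnQ : (n : ℚ) ≠ 0 := by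
          exact_mod_cast (ne_of_gt hn)
        set y' : ℚ := (y - k)/(n:ℚ) with hy'
        have hy'D : ZG_Dyadic y' := by
          refine ⟨bb, t', ?_⟩
          rw [hy', hya, ← hrat, ← hnn]
          push_cast
          ring
        set v' : ↥V := ((n:ℚ)⁻¹) • v with hv'
        have hcastn : (((n:ℚ) : ℚ) : ℚ_[2]) = ((n' : ℤ) : ℚ_[2]) := by
          rw [hnn]; push_cast; rfl
        have hnP : ((n' : ℤ) : ℚ_[2]) ≠ 0 := by
          have : ((n' : ℤ) : ℚ_[2]) = ((n:ℚ) : ℚ_[2]) := hcastn.symm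
          rw [this]
          exact_mod_cast hnQ
        have hΦv' : Φ v' + (y' : ℚ_[2]) = (β - k) / ((n' : ℤ) : ℚ_[2]) := by
          rw [hv', map_smul, Rat.smul_def, hy', hβ]
          push_cast [← hnn]
          field_simp
          ring
        have hmem2 : toLex (v', y') ∈ G := by
          refine ⟨hy'D, ?_⟩
          show ‖Φ v' + (y' : ℚ_[2])‖ ≤ 1
          rw [hΦv']
          exact hnormdiv
        refine ⟨⟨toLex (v', y'), hmem2⟩, k, ?_⟩
        apply Subtype.ext
        show gval = ((n • (⟨toLex (v', y'), hmem2⟩ : ↥G) + k • (⟨toLex ((0:V), (1:ℚ)), hone_mem⟩ : ↥G) : ↥G) : Lex (↥V × ℚ))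
        push_cast
        have hrhs : n • toLex (v', y') + k • toLex ((0:V), (1:ℚ))
            = toLex (n • v' + k • (0:V), n • y' + k • (1:ℚ)) := rfl
        rw [hrhs]
        have hfst : v = n • v' + k • (0:V) := by
          rw [smul_zero, add_zero, hv', ← Int.cast_smul_eq_zsmul ℚ, smul_smul,
            mul_inv_cancel₀ (by exact_mod_cast hnQ), one_smul]
        have hsnd : y = n • y' + k • (1:ℚ) := by
          rw [zsmul_eq_mul, zsmul_eq_mul, mul_one, hy']
          field_simp
          ring
        rw [show gval = toLex (ofLex gval) from rfl]
        congr 1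
        exact Prod.ext hfst hsnd }
  have hVcard : #↥V = κ := by
    have hVeq : #↥V = #(↥S →₀ ℚ) := Cardinal.mk_congr b.repr.toEquiv
    rw [hVeq]
    have hinf : Infinite ↥S := by
      rw [Cardinal.infinite_iff, hScard]; exact h1
    rw [mk_finsupp_lift_of_infinite]
    simp only [lift_id, Cardinal.mkRat, hScard]
    exact sup_eq_left.mpr h1
  refine ⟨Z, ?_, ?_, ?_⟩
  · -- cardinality
    show #↥G = κ
    apply le_antisymm
    · calc #↥G ≤ #(Lex (↥V × ℚ)) := mk_le_of_injective Subtype.val_injective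
      _ = #(↥V × ℚ) := (Cardinal.mk_congr (toLex : ↥V × ℚ ≃ Lex (↥V × ℚ))).symm
      _ = #↥V * #ℚ := by rw [Cardinal.mk_prod, lift_id, lift_id]
      _ = κ * ℵ₀ := by rw [hVcard, Cardinal.mkRat]
      _ = κ := by
          rw [Cardinal.mul_eq_max h1 le_rfl]
          exact max_eq_left h1
    · have hsurj : Function.Surjective (fun g : ↥G => (ofLex g.val).1) := by
        intro v
        obtain ⟨a, t, hnrm⟩ := ZG_exists_dyadic_close (Φ v)
        have hmemg : toLex (v, ((a:ℚ)/2^t)) ∈ G := by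
          refine ⟨⟨a, t, rfl⟩, ?_⟩
          show ‖Φ v + (((a:ℚ)/2^t : ℚ) : ℚ_[2])‖ ≤ 1
          have hc : (((a:ℚ)/2^t : ℚ) : ℚ_[2]) = (a:ℚ_[2])/2^t := by push_cast; ring
          rw [hc]; exact hnrm
        exact ⟨⟨toLex (v, ((a:ℚ)/2^t)), hmemg⟩, rfl⟩
      calc κ = #↥V := hVcard.symm
      _ ≤ #↥G := Cardinal.mk_le_of_surjective hsurj
  · -- non-archimedean
    intro harch
    have hSne : Nonempty ↥S := by
      rw [← Cardinal.mk_ne_zero_iff, hScard]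
      exact ne_of_gt (lt_of_lt_of_le aleph0_pos h1)
    obtain ⟨s₀⟩ := hSne
    set vs : ↥V := ⟨(s₀ : ℝ), Submodule.subset_span s₀.2⟩ with hvs
    have hb0 : b s₀ = vs := by
      apply Subtype.ext
      rw [hb, Module.Basis.map_apply, LinearEquiv.coe_ofEq_apply]
      exact congrArg Subtype.val (Module.Basis.span_apply hSli s₀)
    have hΦvs : Φ vs = α s₀ := by rw [← hb0]; exact hΦb s₀
    have hs0ne : (s₀ : ℝ) ≠ 0 := hSli.ne_zero s₀
    have hmemw : toLex (vs, (0:ℚ)) ∈ G := by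
      refine ⟨ZG_Dyadic.zero, ?_⟩
      show ‖Φ vs + ((0:ℚ) : ℚ_[2])‖ ≤ 1
      rw [hΦvs]
      simpa using hαnorm s₀
    set w : ↥G := ⟨toLex (vs, (0:ℚ)), hmemw⟩ with hw
    -- the witness with positive first coordinate
    have hkey : ∀ u : ↥G, 0 < (ofLex u.val).1 → False := by
      intro u hu
      obtain ⟨n, hn⟩ := harch Z.one u Z.one_pos
      have hval : u.val ≤ (n • Z.one : ↥G).val := hn
      have hsm : ((n • Z.one : ↥G) : Lex (↥V × ℚ)) = toLex ((0:V), (n:ℚ)) := by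
        push_cast
        show n • toLex ((0:V), (1:ℚ)) = toLex ((0:V), (n:ℚ))
        have : n • toLex ((0:V), (1:ℚ)) = toLex (n • (0:V), n • (1:ℚ)) := rfl
        rw [this, smul_zero, nsmul_eq_mul, mul_one]
      rw [hsm] at hval
      rw [show u.val = toLex (ofLex u.val) from rfl] at hval
      rcases (Prod.Lex.le_iff.mp hval :
          (ofLex u.val).1 < (0:V) ∨ (ofLex u.val).1 = (0:V) ∧ (ofLex u.val).2 ≤ (n:ℚ)) with hlt | ⟨heq, -⟩
      · exact absurd hu (not_lt.mpr (le_of_lt hlt))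
      · rw [show (ofLex u.val).1 = (0:V) from heq] at hu; exact lt_irrefl _ hu
    rcases lt_or_gt_of_ne hs0ne with hneg | hpos
    · -- use -w
      apply hkey (-w)
      have : (ofLex ((-w : ↥G) : Lex (↥V × ℚ))).1 = -vs := by
        push_cast
        rfl
      rw [this]
      have : (0:ℝ) < -(s₀ : ℝ) := by linarith
      exact this
    · apply hkey w
      exact hpos
  · -- Leibnizian
    rintro ⟨gval, hgD, hgnorm⟩ hdiv
    set v := (ofLex gval).1 with hv
    set y := (ofLex gval).2 with hy
    set β := Φ v + (y : ℚ_[2]) with hβ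
    have hβj : ∀ j : ℕ, ‖β‖ ≤ (2:ℝ)^(-(j:ℤ)) := by
      intro j
      obtain ⟨h, hh⟩ := hdiv ((2:ℤ)^j) (by positivity)
      obtain ⟨hval, hhD, hhnorm⟩ := h
      have hval_eq : gval = ((2:ℤ)^j) • hval := by
        have := congrArg Subtype.val hh
        exact this
      have hfst : v = ((2:ℤ)^j) • (ofLex hval).1 := by rw [hv, hval_eq]; rfl
      have hsnd : y = ((2:ℤ)^j) • (ofLex hval).2 := by rw [hy, hval_eq]; rfl
      have hΦeq : β = (((2:ℤ)^j : ℤ) : ℚ_[2]) * (Φ (ofLex hval).1 + ((ofLex hval).2 : ℚ_[2])) := by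
        rw [hβ, hfst, hsnd, map_zsmul]
        push_cast [zsmul_eq_mul]
        ring
      rw [hΦeq, norm_mul]
      have hn2 : ‖(((2:ℤ)^j : ℤ) : ℚ_[2])‖ = (2:ℝ)^(-(j:ℤ)) := by
        have hc : (((2:ℤ)^j : ℤ) : ℚ_[2]) = (2:ℚ_[2])^j := by push_cast; rfl
        rw [hc, norm_pow, ZG_norm_two, inv_pow, zpow_neg, zpow_natCast]
      rw [hn2]
      calc (2:ℝ)^(-(j:ℤ)) * ‖Φ (ofLex hval).1 + ((ofLex hval).2 : ℚ_[2])‖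
          ≤ (2:ℝ)^(-(j:ℤ)) * 1 := by
            exact mul_le_mul_of_nonneg_left hhnorm (by positivity)
      _ = (2:ℝ)^(-(j:ℤ)) := mul_one _
    have hβ0 : β = 0 := by
      by_contra hne
      have hpos : 0 < ‖β‖ := norm_pos_iff.mpr hne
      obtain ⟨j, hj⟩ := exists_pow_lt_of_lt_one hpos (by norm_num : (1:ℝ)/2 < 1)
      have hb2 := hβj j
      have : (2:ℝ)^(-(j:ℤ)) = (1/2)^j := by
        rw [zpow_neg, zpow_natCast, one_div, inv_pow]
      rw [this] at hb2
      linarith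
    obtain ⟨hv0, hy0⟩ := hker v y hβ0
    apply Subtype.ext
    show gval = 0
    rw [show gval = toLex (ofLex gval) from rfl]
    show toLex (v, y) = (0 : Lex (↥V × ℚ))
    rw [hv0, hy0]
    rfl
end

section
/- Let (G, e) be an unordered Z-group satisfying ⋂_{n>0} nG = {0}. Then every group automorphism f of G with f(e) = e is the identity. -/
/-- A Leibnizian unordered Z-group is rigid: every group automorphism fixing the
distinguished element `e` is the identity. -/
theorem leibnizian_rigid (G : Type*) [AddCommGroup G] (e : G)
    (htf : ∀ (n : ℤ) (g : G), n ≠ 0 → n • g = 0 → g = 0)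
    (hne : e ≠ 0)
    (hnd : ∀ p : ℕ, p.Prime → ¬ ∃ h : G, e = (p : ℤ) • h)
    (hdiv : ∀ g : G, ∀ n : ℤ, 0 < n → ∃ h : G, ∃ k : ℤ, g = n • h + k • e)
    (hleib : ∀ g : G, (∀ n : ℤ, 0 < n → ∃ h : G, g = n • h) → g = 0)
    (f : G ≃+ G) (hf : f e = e) :
    ∀ x : G, f x = x := by
  intro x
  have h0 : f x - x = 0 := by
    apply hleib
    intro n hn
    obtain ⟨h, k, hk⟩ := hdiv x n hn
    refine ⟨f h - h, ?_⟩
    have : f x = n • f h + k • e := by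
      rw [hk]; simp [hf]
    rw [this, hk, smul_sub]; abel
  have := sub_eq_zero.mp h0
  exact this
end

section
/- Let (G, e) be an unordered Z-group and let D = ⋂_{n>0} nG. Then D is a divisible subgroup of G, and there exists a subgroup L of G with e ∈ L such that G is the internal direct sum of D and L (i.e., D ∩ L = {0} and D + L = G), L is a pure subgroup of G, and ⋂_{n>0} nL = {0} (where nL = {n·l : l ∈ L}). -/
/-- The subgroup `⋂_{n>0} nG` of all elements divisible by every positive integer. -/
def divisiblePart (G : Type*) [AddCommGroup G] : AddSubgroup G where
  carrier := {g | ∀ n : ℤ, 0 < n → ∃ h, g = n • h}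
  zero_mem' := fun n _ => ⟨0, by simp⟩
  add_mem' := by
    rintro a b ha hb n hn
    obtain ⟨x, rfl⟩ := ha n hn
    obtain ⟨y, rfl⟩ := hb n hn
    exact ⟨x + y, by rw [smul_add]⟩
  neg_mem' := by
    rintro a ha n hn
    obtain ⟨x, rfl⟩ := ha n hn
    exact ⟨-x, by rw [smul_neg]⟩

/-- In an unordered Z-group `(G, e)`, the subgroup `D = ⋂_{n>0} nG` is divisible,
and `G = D ⊕ L` for some pure subgroup `L` containing `e` with `⋂_{n>0} nL = 0`. -/
theorem direct_sum_decomposition (G : Type*) [AddCommGroup G] (e : G)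
    (htf : ∀ (n : ℤ) (g : G), n ≠ 0 → n • g = 0 → g = 0)
    (hne : e ≠ 0)
    (hnd : ∀ p : ℕ, p.Prime → ¬ ∃ h : G, e = (p : ℤ) • h)
    (hdiv : ∀ g : G, ∀ n : ℤ, 0 < n → ∃ h : G, ∃ k : ℤ, g = n • h + k • e) :
    (∀ d ∈ divisiblePart G, ∀ n : ℤ, 0 < n → ∃ d' ∈ divisiblePart G, d = n • d') ∧
    ∃ L : AddSubgroup G, e ∈ L ∧
      (∀ g : G, g ∈ divisiblePart G → g ∈ L → g = 0) ∧
      (∀ g : G, ∃ d ∈ divisiblePart G, ∃ l ∈ L, g = d + l) ∧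
      (∀ (n : ℤ) (b : G), 0 < n → n • b ∈ L → b ∈ L) ∧
      (∀ l ∈ L, (∀ n : ℤ, 0 < n → ∃ l' ∈ L, l = n • l') → l = 0) := by
  classical
  set D := divisiblePart G with hDdef
  -- Part 1: D is divisible (within D).
  have hP1 : ∀ d ∈ D, ∀ n : ℤ, 0 < n → ∃ d' ∈ D, d = n • d' := by
    intro d hd n hn
    obtain ⟨x, hx⟩ := hd n hn
    refine ⟨x, ?_, hx⟩
    intro m hm
    obtain ⟨y, hy⟩ := hd (n * m) (by positivity)
    have hx2 : x - m • y = 0 := by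
      refine htf n _ hn.ne' ?_
      rw [smul_sub, ← hx, ← mul_smul, ← hy, sub_self]
    exact ⟨y, by rw [← sub_eq_zero]; exact hx2⟩
  -- D ∩ ℤe = 0.
  have hKE : ∀ k : ℤ, k • e ∈ D → k = 0 := by
    intro k hk
    by_contra hk0
    obtain ⟨p, hpk, hp⟩ := Nat.exists_infinite_primes (k.natAbs + 1)
    obtain ⟨h, hh⟩ := hk (p : ℤ) (by exact_mod_cast hp.pos)
    have hcop : IsCoprime (p : ℤ) k := by
      rw [Int.isCoprime_iff_gcd_eq_one]
      have hnd' : ¬ p ∣ k.natAbs := by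
        intro hdvd
        have h1 : k.natAbs ≠ 0 := by
          simpa [Int.natAbs_eq_zero] using hk0
        have := Nat.le_of_dvd (Nat.pos_of_ne_zero h1) hdvd
        omega
      simpa [Int.gcd] using (Nat.Prime.coprime_iff_not_dvd hp).mpr hnd'
    obtain ⟨a, b, hab⟩ := hcop
    refine hnd p hp ⟨a • e + b • h, ?_⟩
    calc e = (a * (p : ℤ) + b * k) • e := by rw [hab, one_smul]
      _ = (p : ℤ) • (a • e) + b • (k • e) := by
          rw [add_smul, mul_comm a, mul_smul, mul_smul]
      _ = (p : ℤ) • (a • e) + b • ((p : ℤ) • h) := by rw [hh]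
      _ = (p : ℤ) • (a • e + b • h) := by rw [smul_add, smul_comm b]
  -- Divisibility inside the subgroup D.
  have hP1' : ∀ (d : ↥D) (n : ℤ), 0 < n → ∃ d' : ↥D, d = n • d' := by
    intro d n hn
    obtain ⟨d', hd', hdd⟩ := hP1 d d.2 n hn
    exact ⟨⟨d', hd'⟩, Subtype.ext (by simpa using hdd)⟩
  haveI : DivisibleBy ↥D ℤ :=
    { div := fun d n => if h : 0 < n then (hP1' d n h).choose
        else if h' : 0 < -n then -((hP1' d (-n) h').choose) else 0
      div_zero := fun a => by simp
      div_cancel := fun {n} a hn => by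
        rcases lt_trichotomy 0 n with h | h | h
        · rw [dif_pos h]; exact ((hP1' a n h).choose_spec).symm
        · exact absurd h.symm hn
        · have h' : 0 < -n := by omega
          rw [dif_neg (by omega), dif_pos h', smul_neg, ← neg_smul]
          exact ((hP1' a (-n) h').choose_spec).symm }
  have baer : Module.Baer ℤ ↥D := Module.Baer.of_divisible ↥D
  -- The embedding D × ℤ → G, (d, k) ↦ d + k • e.
  let f : ↥D × ℤ →+ G :=
    (D.subtype.comp (AddMonoidHom.fst _ _)) +
      ((zmultiplesHom G e).comp (AddMonoidHom.snd _ _))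
  have hfap : ∀ x : ↥D × ℤ, f x = (x.1 : G) + x.2 • e := fun x => rfl
  have hfinj : Function.Injective f := by
    rw [injective_iff_map_eq_zero]
    intro x hx
    rw [hfap] at hx
    have hx1 : (x.1 : G) = (-x.2) • e := by
      rw [neg_smul]
      exact eq_neg_of_add_eq_zero_left hx
    have hk : -x.2 = 0 := hKE (-x.2) (hx1 ▸ x.1.2)
    have hk2 : x.2 = 0 := by omega
    have hx10 : (x.1 : G) = 0 := by rw [hx1, hk, zero_smul]
    exact Prod.ext (Subtype.ext hx10) hk2
  obtain ⟨π, hπ⟩ := baer.extension_property_addMonoidHom f hfinj (AddMonoidHom.fst ↥D ℤ)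
  have hπf : ∀ (d : ↥D) (k : ℤ), π ((d : G) + k • e) = d := by
    intro d k
    have := DFunLike.congr_fun hπ (d, k)
    simpa [hfap] using this
  have hπD : ∀ d : ↥D, π (d : G) = d := fun d => by simpa using hπf d 0
  have hπe : π e = 0 := by simpa using hπf 0 1
  refine ⟨hP1, π.ker, ?_, ?_, ?_, ?_, ?_⟩
  · exact hπe
  · intro g hgD hgL
    have h1 : π g = ⟨g, hgD⟩ := hπD ⟨g, hgD⟩
    have h2 : π g = 0 := hgL
    have : (⟨g, hgD⟩ : ↥D) = 0 := h1 ▸ h2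
    simpa using congrArg (Subtype.val) this
  · intro g
    refine ⟨π g, (π g).2, g - (π g : G), ?_, by abel⟩
    have : π (g - (π g : G)) = 0 := by
      rw [map_sub, hπD (π g), sub_self]
    exact this
  · intro n b hn hb
    have h2 : π (n • b) = 0 := hb
    rw [map_zsmul] at h2
    have h3 : n • (π b : G) = 0 := by
      have := congrArg (Subtype.val) h2
      simpa using this
    have : (π b : G) = 0 := htf n _ hn.ne' h3
    show π b = 0
    exact Subtype.ext this
  · intro l hl hdl
    have hlD : l ∈ D := by
      intro n hn
      obtain ⟨l', _, h⟩ := hdl n hn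
      exact ⟨l', h⟩
    have h1 : π l = ⟨l, hlD⟩ := hπD ⟨l, hlD⟩
    have h2 : π l = 0 := hl
    have : (⟨l, hlD⟩ : ↥D) = 0 := h1 ▸ h2
    simpa using congrArg (Subtype.val) this
end

section
/- Let (G, e) be an unordered Z-group, D = ⋂_{n>0} nG, and L a subgroup of G with e ∈ L such that G is the internal direct sum of D and L. Then: (a) every group automorphism f of G with f(e) = e maps D onto D, and setting g = f restricted to D and h(l) = f(l) − l for l ∈ L yields a group automorphism g of D and a group homomorphism h : L → D with h(e) = 0 such that f(d + l) = g(d) + h(l) + l for all d ∈ D and l ∈ L; (b) conversely, for every group automorphism g of D and every group homomorphism h : L → D with h(e) = 0, the map sending d + l to g(d) + h(l) + l (d ∈ D, l ∈ L) is a group automorphism f of G with f(e) = e. -/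
/-- Description of automorphisms of an unordered Z-group `G = D ⊕ L` fixing `e`:
(a) every such automorphism maps `D` onto `D`, restricts on `D` to an automorphism `g`,
and `h(l) = f(l) − l` is a homomorphism `L → D` with `h(e) = 0` and
`f(d + l) = g(d) + h(l) + l`; (b) conversely any such pair `(g, h)` yields an
automorphism of `G` fixing `e`. -/
theorem automorphism_description (G : Type*) [AddCommGroup G] (e : G)
    (htf : ∀ (n : ℤ) (g : G), n ≠ 0 → n • g = 0 → g = 0)
    (hne : e ≠ 0)
    (hnd : ∀ p : ℕ, p.Prime → ¬ ∃ h : G, e = (p : ℤ) • h)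
    (hdiv : ∀ g : G, ∀ n : ℤ, 0 < n → ∃ h : G, ∃ k : ℤ, g = n • h + k • e)
    (L : AddSubgroup G) (heL : e ∈ L)
    (hDL : ∀ g : G, g ∈ divisiblePart G → g ∈ L → g = 0)
    (hsum : ∀ g : G, ∃ d ∈ divisiblePart G, ∃ l ∈ L, g = d + l) :
    (∀ f : G ≃+ G, f e = e →
      (⇑f '' (divisiblePart G : Set G) = (divisiblePart G : Set G)) ∧
      (∀ l ∈ L, f l - l ∈ divisiblePart G) ∧
      (∀ d ∈ divisiblePart G, ∀ l ∈ L, f (d + l) = f d + (f l - l) + l)) ∧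
    (∀ (g : divisiblePart G ≃+ divisiblePart G) (h : L →+ divisiblePart G),
      h ⟨e, heL⟩ = 0 →
      ∃ f : G ≃+ G, f e = e ∧
        ∀ (d : divisiblePart G) (l : L),
          f ((d : G) + (l : G)) = (g d : G) + (h l : G) + (l : G)) := by

  classical
  constructor
  · intro f hfe
    have hmapD : ∀ (f : G ≃+ G) (d : G), d ∈ divisiblePart G → f d ∈ divisiblePart G := by
      intro f d hd n hn
      obtain ⟨x, hx⟩ := hd n hn
      exact ⟨f x, by rw [hx, map_zsmul]⟩
    have hsub : ∀ x : G, f x - x ∈ divisiblePart G := by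
      intro x n hn
      obtain ⟨y, k, hxx⟩ := hdiv x n hn
      refine ⟨f y - y, ?_⟩
      rw [hxx, map_add, map_zsmul, map_zsmul, hfe, smul_sub]
      abel
    refine ⟨?_, fun l _ => hsub l, fun d _ l _ => by rw [map_add]; abel⟩
    apply Set.Subset.antisymm
    · rintro _ ⟨d, hd, rfl⟩
      exact hmapD f d hd
    · intro d hd
      exact ⟨f.symm d, hmapD f.symm d hd, f.apply_symm_apply d⟩
  · intro g h he0
    have hdecomp : ∀ x : G, ∃ p : divisiblePart G × L, x = (p.1 : G) + (p.2 : G) := by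
      intro x
      obtain ⟨d, hd, l, hl, hx⟩ := hsum x
      exact ⟨(⟨d, hd⟩, ⟨l, hl⟩), hx⟩
    choose p hp using hdecomp
    set dP : G → divisiblePart G := fun x => (p x).1 with hdPdef
    set lP : G → L := fun x => (p x).2 with hlPdef
    have hx : ∀ x : G, x = (dP x : G) + (lP x : G) := hp
    have huniq : ∀ (d d' : divisiblePart G) (l l' : L),
        (d : G) + l = (d' : G) + l' → d = d' ∧ l = l' := by
      intro d d' l l' hEq
      have h1 : (d : G) - d' = (l' : G) - l :=
        sub_eq_sub_iff_add_eq_add.mpr (by rw [hEq, add_comm])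
      have h2 : (d : G) - d' = 0 :=
        hDL _ (sub_mem d.2 d'.2) (by rw [h1]; exact sub_mem l'.2 l.2)
      have h3 : (l' : G) - l = 0 := by rw [← h1, h2]
      exact ⟨Subtype.ext (sub_eq_zero.mp h2), (Subtype.ext (sub_eq_zero.mp h3)).symm⟩
    have hdl : ∀ (d : divisiblePart G) (l : L),
        dP ((d : G) + l) = d ∧ lP ((d : G) + l) = l := by
      intro d l
      exact huniq _ d _ l (hx _).symm
    have hdadd : ∀ x y : G, dP (x + y) = dP x + dP y ∧ lP (x + y) = lP x + lP y := by
      intro x y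
      have h3 : ((dP x + dP y : divisiblePart G) : G) + ((lP x + lP y : L) : G) = x + y := by
        conv_rhs => rw [hx x, hx y]
        push_cast
        abel
      obtain ⟨ha, hb⟩ := huniq _ _ _ _ (h3.trans (hx (x + y)))
      exact ⟨ha.symm, hb.symm⟩
    refine ⟨{ toFun := fun x => ((g (dP x) : G) + (h (lP x) : G)) + (lP x : G)
              invFun := fun x => (g.symm (dP x - h (lP x)) : G) + (lP x : G)
              left_inv := ?_
              right_inv := ?_
              map_add' := ?_ }, ?_, ?_⟩
    · intro x
      dsimp only
      have e1 : ((g (dP x) : G) + (h (lP x) : G)) + (lP x : G)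
          = ((g (dP x) + h (lP x) : divisiblePart G) : G) + (lP x : G) := by
        push_cast; abel
      rw [e1, (hdl _ _).1, (hdl _ _).2]
      rw [add_sub_cancel_right, g.symm_apply_apply]
      exact (hx x).symm
    · intro x
      dsimp only
      rw [(hdl _ _).1, (hdl _ _).2]
      rw [g.apply_symm_apply]
      push_cast
      rw [sub_add_cancel]
      exact (hx x).symm
    · intro x y
      rw [(hdadd x y).1, (hdadd x y).2, map_add, map_add]
      push_cast
      abel
    · show ((g (dP e) : G) + (h (lP e) : G)) + (lP e : G) = e
      have he : dP e = 0 ∧ lP e = ⟨e, heL⟩ :=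
        huniq (dP e) 0 (lP e) ⟨e, heL⟩ (by rw [← hx e]; simp)
      rw [he.1, he.2, map_zero, he0]
      simp
    · intro d l
      show ((g (dP _) : G) + (h (lP _) : G)) + (lP _ : G) = _
      rw [(hdl d l).1, (hdl d l).2]
end

section
/- Let (G, e) be an unordered Z-group such that every group automorphism f of G with f(e) = e is the identity. Then ⋂_{n>0} nG = {0}. -/
/-- A rigid unordered Z-group is Leibnizian: if every group automorphism of `G`
fixing `e` is the identity, then `⋂_{n>0} nG = 0`. -/
theorem rigid_unordered_is_leibnizian (G : Type*) [AddCommGroup G] (e : G)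
    (htf : ∀ (n : ℤ) (g : G), n ≠ 0 → n • g = 0 → g = 0)
    (hne : e ≠ 0)
    (hnd : ∀ p : ℕ, p.Prime → ¬ ∃ h : G, e = (p : ℤ) • h)
    (hdiv : ∀ g : G, ∀ n : ℤ, 0 < n → ∃ h : G, ∃ k : ℤ, g = n • h + k • e)
    (hrig : ∀ f : G ≃+ G, f e = e → ∀ x : G, f x = x) :
    ∀ g : G, (∀ n : ℤ, 0 < n → ∃ h : G, g = n • h) → g = 0 := by
  intro g hg
  by_cases hcase : ∃ m a : ℤ, m ≠ 0 ∧ m • g = a • e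
  · -- g is rationally dependent on e
    obtain ⟨m, a, hm, hma⟩ := hcase
    by_cases ha : a = 0
    · exact htf m g hm (by rw [hma, ha, zero_smul])
    · exfalso
      obtain ⟨p, hple, hp⟩ := Nat.exists_infinite_primes (a.natAbs + 1)
      apply hnd p hp
      have hpa : ¬ (p : ℤ) ∣ a := by
        intro hdvd
        have h1 : p ∣ a.natAbs := Int.natAbs_dvd_natAbs.mpr (by simpa using hdvd)
        have h2 : p ≤ a.natAbs := Nat.le_of_dvd (Int.natAbs_pos.mpr ha) h1
        omega
      have hc : IsCoprime (p : ℤ) a :=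
        (Prime.coprime_iff_not_dvd (Nat.prime_iff_prime_int.mp hp)).mpr hpa
      obtain ⟨u, v, huv⟩ := hc
      obtain ⟨h, hh⟩ := hg p (by exact_mod_cast hp.pos)
      refine ⟨u • e + v • (m • h), ?_⟩
      have hae : a • e = (p : ℤ) • (m • h) := by
        rw [← hma, hh]; module
      calc e = (1 : ℤ) • e := (one_smul _ _).symm
        _ = (u * p + v * a) • e := by rw [huv]
        _ = (u * p) • e + v • (a • e) := by module
        _ = (u * p) • e + v • ((p : ℤ) • (m • h)) := by rw [hae]
        _ = (p : ℤ) • (u • e + v • (m • h)) := by module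
  · -- g is rationally independent of e; build a nontrivial automorphism fixing e
    push_neg at hcase
    -- the "division" family for g
    have exu : ∀ n : ℕ, ∃ h : G, 0 < n → (n : ℤ) • h = g := by
      intro n
      rcases Nat.eq_zero_or_pos n with h0 | h0
      · exact ⟨0, by omega⟩
      · obtain ⟨h, hh⟩ := hg n (by exact_mod_cast h0)
        exact ⟨h, fun _ => hh.symm⟩
    choose gd hgd using exu
    -- the character ψ : G →ₗ[ℤ] ℚ with ψ e = 0, ψ g = 1
    set P : Submodule ℤ G := Submodule.span ℤ {e} with hP
    set gbar : G ⧸ P := Submodule.Quotient.mk g with hgbar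
    set i : ℤ →ₗ[ℤ] G ⧸ P := LinearMap.toSpanSingleton ℤ _ gbar with hi
    have hinj : Function.Injective i := by
      intro x y hxy
      have hz : i (x - y) = 0 := by rw [map_sub, hxy, sub_self]
      have hz' : (x - y) • gbar = 0 := by
        simpa [hi, LinearMap.toSpanSingleton_apply] using hz
      by_contra hxyne
      have hsub : x - y ≠ 0 := sub_ne_zero.mpr hxyne
      have hz2 : Submodule.Quotient.mk ((x - y) • g) = (0 : G ⧸ P) := by
        rw [Submodule.Quotient.mk_smul]; exact hz'
      have hmem : (x - y) • g ∈ P := (Submodule.Quotient.mk_eq_zero P).mp hz2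
      rw [hP, Submodule.mem_span_singleton] at hmem
      obtain ⟨c, hc⟩ := hmem
      exact hcase (x - y) c hsub hc.symm
    obtain ⟨ψ', hψ'⟩ := (Module.Baer.of_divisible ℚ).extension_property i hinj
      (LinearMap.toSpanSingleton ℤ ℚ 1)
    set ψ : G →ₗ[ℤ] ℚ := ψ'.comp P.mkQ with hψ
    have ψe : ψ e = 0 := by
      have : P.mkQ e = 0 := by
        rw [Submodule.mkQ_apply, Submodule.Quotient.mk_eq_zero]
        exact Submodule.mem_span_singleton_self e
      simp [hψ, this]
    have ψg : ψ g = 1 := by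
      have h1 : i 1 = gbar := by simp [hi, LinearMap.toSpanSingleton_apply]
      have := congrFun (congrArg (fun f => f.toFun) hψ') 1
      have h2 : ψ' gbar = 1 := by
        rw [← h1]
        have := LinearMap.congr_fun hψ' 1
        simpa [LinearMap.toSpanSingleton_apply] using this
      simpa [hψ, hgbar] using h2
    -- the map ρ : ℚ → G, ρ q = q • g
    set ρ : ℚ → G := fun q => q.num • gd q.den with hρ
    have hgden : ∀ q : ℚ, ((q.den : ℤ)) • gd q.den = g := fun q =>
      hgd q.den q.pos
    -- ψ ∘ ρ = id
    have ψρ : ∀ q : ℚ, ψ (ρ q) = q := by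
      intro q
      have h1 : (q.den : ℚ) * ψ (gd q.den) = 1 := by
        have := congrArg ψ (hgden q)
        rw [map_zsmul, ψg] at this
        simpa [zsmul_eq_mul] using this
      have hden : (q.den : ℚ) ≠ 0 := by exact_mod_cast q.den_nz
      have h2 : ψ (gd q.den) = (q.den : ℚ)⁻¹ := by
        field_simp at h1 ⊢
        linarith [h1]
      rw [hρ]
      simp only [map_zsmul, h2, zsmul_eq_mul]
      rw [← div_eq_mul_inv, Rat.num_div_den]
    -- ρ is additive
    have ρadd : ∀ q r : ℚ, ρ (q + r) = ρ q + ρ r := by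
      intro q r
      set s : ℚ := q + r with hs
      have keyz : s.num * (q.den * r.den) = (q.num * r.den + r.num * q.den) * s.den := by
        have hQ : (((s.num * (q.den * r.den) : ℤ)) : ℚ)
            = (((q.num * r.den + r.num * q.den) * s.den : ℤ) : ℚ) := by
          have hqd : (q.den : ℚ) ≠ 0 := by exact_mod_cast q.den_nz
          have eq1 : (q.num : ℚ) = q * q.den := (div_eq_iff hqd).mp (Rat.num_div_den q)
          have hrd : (r.den : ℚ) ≠ 0 := by exact_mod_cast r.den_nz
          have eq2 : (r.num : ℚ) = r * r.den := (div_eq_iff hrd).mp (Rat.num_div_den r)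
          have hsd : (s.den : ℚ) ≠ 0 := by exact_mod_cast s.den_nz
          have eq3 : (s.num : ℚ) = s * s.den := (div_eq_iff hsd).mp (Rat.num_div_den s)
          push_cast
          rw [eq1, eq2, eq3, hs]
          ring
        exact_mod_cast hQ
      have hNne : ((s.den : ℤ) * ((q.den : ℤ) * (r.den : ℤ))) ≠ 0 := by
        have := q.pos; have := r.pos; have := s.pos
        positivity
      apply eq_of_sub_eq_zero
      apply htf ((s.den : ℤ) * ((q.den : ℤ) * (r.den : ℤ))) _ hNne
      have H1 : ((s.den : ℤ) * ((q.den : ℤ) * (r.den : ℤ))) • (s.num • gd s.den)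
          = (s.num * ((q.den : ℤ) * (r.den : ℤ))) • g := by
        rw [← hgden s]; module
      have H2 : ((s.den : ℤ) * ((q.den : ℤ) * (r.den : ℤ))) • (q.num • gd q.den)
          = (q.num * ((s.den : ℤ) * (r.den : ℤ))) • g := by
        rw [← hgden q]; module
      have H3 : ((s.den : ℤ) * ((q.den : ℤ) * (r.den : ℤ))) • (r.num • gd r.den)
          = (r.num * ((s.den : ℤ) * (q.den : ℤ))) • g := by
        rw [← hgden r]; module
      rw [hρ]
      simp only [smul_sub, smul_add, H1, H2, H3]
      rw [← add_smul, ← sub_smul]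
      have hz : s.num * ((q.den : ℤ) * (r.den : ℤ))
          - (q.num * ((s.den : ℤ) * (r.den : ℤ)) + r.num * ((s.den : ℤ) * (q.den : ℤ))) = 0 := by
        linear_combination keyz
      rw [hz, zero_smul]
    have ρzero : ρ 0 = 0 := by simp [hρ]
    have ρhalf : ∀ q : ℚ, ρ (q / 2 + q / 2) = ρ q := by
      intro q; congr 1; ring
    -- the automorphism
    set F : G ≃+ G :=
      { toFun := fun x => x + ρ (ψ x)
        invFun := fun x => x - ρ (ψ x / 2)
        left_inv := by
          intro x
          simp only
          rw [map_add, ψρ]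
          have : (ψ x + ψ x) / 2 = ψ x := by ring
          rw [this]
          abel
        right_inv := by
          intro y
          simp only
          rw [map_sub, ψρ]
          have h1 : ψ y - ψ y / 2 = ψ y / 2 := by ring
          rw [h1]
          have h2 : ρ (ψ y / 2 + ψ y / 2) = ρ (ψ y / 2) + ρ (ψ y / 2) := ρadd _ _
          rw [ρhalf] at h2
          have : y - ρ (ψ y / 2) + ρ (ψ y / 2) = y := by abel
          rw [this]
        map_add' := by
          intro x y
          rw [map_add, ρadd]
          abel } with hF
    have hFe : F e = e := by
      show e + ρ (ψ e) = e
      rw [ψe, ρzero, add_zero]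
    have := hrig F hFe g
    have hFg : g + ρ (ψ g) = g := this
    rw [ψg] at hFg
    have hρ1 : ρ 1 = g := by
      have h1 : ((1 : ℚ)).num • gd ((1 : ℚ)).den = g := by
        have : ((1 : ℚ)).den = 1 := rfl
        have h2 := hgd 1 (by norm_num)
        simpa using h2
      simpa [hρ] using h1
    rw [hρ1] at hFg
    -- g + g = g implies g = 0
    have : g + g = g := hFg
    have : g = 0 := by
      have := congrArg (fun z => z - g) this
      simpa using this
    exact this
end

section
/- Let G be a rigid Z-group and let D = ⋂_{n>0} nG. Then there is no convex subgroup C of G such that 1 ∈ C, C ≠ G, and C + D = G. -/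
/-- In a rigid Z-group `G` with `D = ⋂_{n>0} nG`, there is no proper convex
subgroup `C` containing `1` with `C + D = G`. -/
theorem no_proper_convex_complement (G : Type*) [AddCommGroup G] [LinearOrder G] [IsOrderedAddMonoid G] (one : G)
    (hpos : 0 < one) (hleast : ∀ x : G, 0 < x → one ≤ x)
    (hdiv : ∀ g : G, ∀ n : ℤ, 0 < n → ∃ h : G, ∃ k : ℤ, g = n • h + k • one)
    (hrig : ∀ f : G ≃+ G, Monotone f → f one = one → ∀ x : G, f x = x)
    (D : Set G) (hD : D = {g : G | ∀ n : ℤ, 0 < n → ∃ h : G, g = n • h}) :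
    ¬ ∃ C : AddSubgroup G,
        (∀ x y : G, -y ≤ x → x ≤ y → y ∈ C → x ∈ C) ∧
        one ∈ C ∧ C ≠ ⊤ ∧
        (∀ g : G, ∃ c ∈ C, ∃ d ∈ D, g = c + d) := by
  subst hD
  rintro ⟨C, hconv, honeC, hCtop, hsum⟩
  classical
  -- the subgroup of infinitely divisible elements
  set Dsub : AddSubgroup G :=
    { carrier := {g : G | ∀ n : ℤ, 0 < n → ∃ h : G, g = n • h}
      zero_mem' := fun n hn => ⟨0, by simp⟩
      add_mem' := by
        rintro a b ha hb n hn
        obtain ⟨x, hx⟩ := ha n hn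
        obtain ⟨y, hy⟩ := hb n hn
        exact ⟨x + y, by rw [hx, hy, smul_add]⟩
      neg_mem' := by
        rintro a ha n hn
        obtain ⟨x, hx⟩ := ha n hn
        exact ⟨-x, by rw [hx, smul_neg]⟩ } with hDsub
  -- divisibility inside Dsub
  have hDdvd : ∀ d ∈ Dsub, ∀ n : ℤ, 0 < n → ∃ h ∈ Dsub, d = n • h := by
    intro d hd n hn
    obtain ⟨h, hh⟩ := hd n hn
    refine ⟨h, ?_, hh⟩
    intro m hm
    obtain ⟨h', hh'⟩ := hd (n * m) (mul_pos hn hm)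
    refine ⟨h', ?_⟩
    have key : n • h = n • (m • h') := by
      rw [← hh, hh', mul_smul]
    exact zsmul_right_injective (ne_of_gt hn) key
  set E : AddSubgroup G := C ⊓ Dsub with hE
  -- E is divisible
  have hEdvd : ∀ e ∈ E, ∀ n : ℤ, 0 < n → ∃ h ∈ E, e = n • h := by
    intro e he n hn
    obtain ⟨h, hhD, hh⟩ := hDdvd e he.2 n hn
    refine ⟨h, ⟨?_, hhD⟩, hh⟩
    -- h ∈ C by convexity : |h| ≤ |e|
    have habs : |e| = n • |h| := by
      rw [hh, abs_zsmul, abs_of_pos hn]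
    have h2 : (0:G) ≤ (n - 1) • |h| := zsmul_nonneg (abs_nonneg h) (by omega)
    have h3 : (n - 1) • |h| = n • |h| - |h| := by rw [sub_smul, one_smul]
    have h1 : |h| ≤ |e| := by
      rw [habs]
      exact sub_nonneg.mp (h3 ▸ h2)
    have heC : |e| ∈ C := by
      rcases abs_choice e with h' | h'
      · rw [h']; exact he.1
      · rw [h']; exact neg_mem he.1
    exact hconv h |e| (le_trans (neg_le_neg h1) (neg_abs_le h))
      (le_trans (le_abs_self h) h1) heC
  -- E as a type is divisible, hence an injective ℤ-module
  have hexq : ∀ (a : ↥E) (n : ℤ), n ≠ 0 → ∃ x : ↥E, n • x = a := by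
    intro a n hn
    rcases hn.lt_or_gt with hneg | hpos'
    · obtain ⟨h, hhE, hh⟩ := hEdvd (a:G) a.2 (-n) (by omega)
      refine ⟨⟨-h, neg_mem hhE⟩, Subtype.ext ?_⟩
      show n • (-h) = (a : G)
      rw [smul_neg, ← neg_smul]
      exact hh.symm
    · obtain ⟨h, hhE, hh⟩ := hEdvd (a:G) a.2 n hpos'
      refine ⟨⟨h, hhE⟩, Subtype.ext ?_⟩
      show n • h = (a : G)
      exact hh.symm
  haveI : DivisibleBy ↥E ℤ :=
    { div := fun a n => if h : n = 0 then 0 else Classical.choose (hexq a n h)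
      div_zero := fun a => by simp
      div_cancel := fun {n} a hn => by
        simp only [dif_neg hn]
        exact Classical.choose_spec (hexq a n hn) }
  haveI hinj : Module.Injective ℤ ↥E := (Module.Baer.of_divisible ↥E).injective
  have hEle : E ≤ Dsub := inf_le_right
  -- extend the identity of E along E ↪ Dsub to get a retraction r : Dsub → E
  obtain ⟨r, hr⟩ := hinj.out ((AddSubgroup.inclusion hEle).toIntLinearMap)
    (fun x y hxy => AddSubgroup.inclusion_injective hEle hxy)
    (LinearMap.id : ↥E →ₗ[ℤ] ↥E)
  have hrE : ∀ e : ↥E, r (AddSubgroup.inclusion hEle e) = e := fun e => hr e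
  -- F : the kernel of r, viewed in G ; a divisible complement of C
  set F : AddSubgroup G :=
    AddSubgroup.map Dsub.subtype (LinearMap.ker r).toAddSubgroup with hF
  have hFle : F ≤ Dsub := by
    rintro x ⟨y, _, rfl⟩
    exact y.2
  have hmemF : ∀ x : ↥Dsub, r x = 0 → (x : G) ∈ F := fun x hx => ⟨x, hx, rfl⟩
  have hCF : ∀ x : G, x ∈ C → x ∈ F → x = 0 := by
    rintro x hxC ⟨y, hy, rfl⟩
    have hry : r y = 0 := hy
    have hyE : (y : G) ∈ E := ⟨hxC, y.2⟩
    have h1 : AddSubgroup.inclusion hEle ⟨(y:G), hyE⟩ = y := Subtype.ext rfl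
    have h2 : ((r (AddSubgroup.inclusion hEle ⟨(y:G), hyE⟩) : ↥E) : G)
        = ((r y : ↥E) : G) := by rw [h1]
    have h3 : ((r (AddSubgroup.inclusion hEle ⟨(y:G), hyE⟩) : ↥E) : G) = (y : G) :=
      congrArg Subtype.val (hrE ⟨(y:G), hyE⟩)
    have h4 : ((r y : ↥E) : G) = (y : G) := h2.symm.trans h3
    rw [hry] at h4
    exact h4.symm
  -- every element decomposes as c + d with c ∈ C, d ∈ F
  have hdecomp : ∀ g : G, ∃ d, d ∈ F ∧ g - d ∈ C := by
    intro g
    obtain ⟨c, hc, d0, hd0, rfl⟩ := hsum g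
    set y : ↥Dsub := ⟨d0, hd0⟩ with hy
    refine ⟨d0 - ((r y : ↥E) : G), ?_, ?_⟩
    · have hker : r (y - AddSubgroup.inclusion hEle (r y)) = 0 := by
        rw [map_sub, hrE, sub_self]
      have hx := hmemF _ hker
      simpa using hx
    · have heq : c + d0 - (d0 - ((r y : ↥E) : G)) = c + ((r y : ↥E) : G) := by abel
      rw [heq]
      exact add_mem hc (r y).2.1
  -- the F-component is unique
  have huniq : ∀ g d d' : G, d ∈ F → g - d ∈ C → d' ∈ F → g - d' ∈ C → d = d' := by
    intro g d d' hd hgd hd' hgd'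
    have h1 : d - d' ∈ F := sub_mem hd hd'
    have h2 : d - d' ∈ C := by
      have h3 := sub_mem hgd' hgd
      rwa [show g - d' - (g - d) = d - d' by abel] at h3
    exact sub_eq_zero.mp (hCF _ h2 h1)
  set p : G → G := fun g => Classical.choose (hdecomp g) with hp
  have hpF : ∀ g, p g ∈ F := fun g => (Classical.choose_spec (hdecomp g)).1
  have hpC : ∀ g, g - p g ∈ C := fun g => (Classical.choose_spec (hdecomp g)).2
  have puniq : ∀ g d, d ∈ F → g - d ∈ C → p g = d :=
    fun g d hd hgd => huniq g (p g) d (hpF g) (hpC g) hd hgd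
  have padd : ∀ x y, p (x + y) = p x + p y := by
    intro x y
    refine puniq _ _ (add_mem (hpF x) (hpF y)) ?_
    rw [show x + y - (p x + p y) = (x - p x) + (y - p y) by abel]
    exact add_mem (hpC x) (hpC y)
  have pone : p one = 0 := puniq one 0 (zero_mem F) (by rwa [sub_zero])
  -- positivity : positive elements have nonnegative F-component
  have hposp : ∀ g : G, 0 < g → 0 ≤ p g := by
    intro g hg
    by_contra hneg
    push_neg at hneg
    have hc : g - p g ∈ C := hpC g
    have i1 : -(g - p g) ≤ -p g := by
      rw [neg_sub]
      have w1 : p g - g < 0 - g := sub_lt_sub_right hneg g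
      rw [zero_sub] at w1
      exact le_of_lt (w1.trans (neg_lt_neg (lt_trans hneg hg)))
    have i2 : -p g ≤ g - p g := by
      have w2 : (0:G) - p g ≤ g - p g := sub_le_sub_right (le_of_lt hg) _
      rwa [zero_sub] at w2
    have hmem : -p g ∈ C := hconv _ _ i1 i2 hc
    have := hCF _ hmem (neg_mem (hpF g))
    exact absurd this (ne_of_gt (neg_pos.mpr hneg))
  -- the automorphism g ↦ g + p g
  set φ : G →+ G :=
    { toFun := fun g => g + p g
      map_zero' := by
        have h0 : p 0 = 0 := puniq 0 0 (zero_mem F) (by rw [sub_zero]; exact zero_mem C)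
        show (0:G) + p 0 = 0
        rw [h0, add_zero]
      map_add' := fun x y => by
        show x + y + p (x + y) = (x + p x) + (y + p y)
        rw [padd]; abel } with hφ
  have psub : ∀ x y : G, p (y - x) = p y - p x := by
    intro x y
    have h := (padd (y - x) x).symm
    rw [sub_add_cancel] at h
    exact eq_sub_of_add_eq h
  have hsmono : StrictMono φ := by
    intro x y hlt
    have h0 : 0 < y - x := sub_pos.mpr hlt
    have h1 : 0 ≤ p y - p x := by rw [← psub x y]; exact hposp _ h0
    show x + p x < y + p y
    exact add_lt_add_of_lt_of_le hlt (sub_nonneg.mp h1)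
  have hmono : Monotone φ := hsmono.monotone
  have hsurj : Function.Surjective φ := by
    intro g
    obtain ⟨d, hdF, hgC⟩ := hdecomp g
    obtain ⟨h, hhD, hh⟩ := hDdvd d (hFle hdF) 2 (by norm_num)
    -- h ∈ F
    have hhF : h ∈ F := by
      obtain ⟨y, hy, hyval⟩ := hdF
      have hry : r y = 0 := hy
      have hval : ((2:ℤ) • (⟨h, hhD⟩ : ↥Dsub)) = y := by
        apply Subtype.ext
        show (2:ℤ) • h = (y : G)
        rw [← hh]
        exact hyval.symm
      refine hmemF ⟨h, hhD⟩ ?_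
      have h2 : (2:ℤ) • r (⟨h, hhD⟩ : ↥Dsub) = r y := by
        rw [← map_zsmul, hval]
      rw [hry] at h2
      have h2' : (2:ℤ) • r (⟨h, hhD⟩ : ↥Dsub) = (2:ℤ) • (0 : ↥E) := by
        rw [h2, smul_zero]
      exact zsmul_right_injective (by norm_num) h2'
    refine ⟨g - d + h, ?_⟩
    have hph : p (g - d + h) = h := by
      refine puniq _ _ hhF ?_
      rwa [add_sub_cancel_right]
    show g - d + h + p (g - d + h) = g
    rw [hph, hh, two_zsmul]
    abel
  set f : G ≃+ G := AddEquiv.ofBijective φ ⟨hsmono.injective, hsurj⟩ with hf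
  have hfmono : Monotone f := hmono
  have hfone : f one = one := by
    show one + p one = one
    rw [pone, add_zero]
  have hid := hrig f hfmono hfone
  -- conclude : p g = 0 for all g, so C = ⊤
  apply hCtop
  rw [AddSubgroup.eq_top_iff']
  intro g
  have h1 : g + p g = g + 0 := by rw [add_zero]; exact hid g
  have hp0 : p g = 0 := add_left_cancel h1
  have h2 := hpC g
  rwa [hp0, sub_zero] at h2
end

section
/- Let G be a rigid Z-group and let D = ⋂_{n>0} nG. If C is a convex subgroup of G with 1 ∈ C and C ∩ D ≠ {0}, then C + D = G. -/
/-- In a rigid Z-group `G` with `D = ⋂_{n>0} nG`, any convex subgroup `C`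
containing `1` that intersects `D` nontrivially satisfies `C + D = G`. -/
theorem convex_meeting_D_is_everything (G : Type*) [AddCommGroup G] [LinearOrder G] [IsOrderedAddMonoid G] (one : G)
    (hpos : 0 < one) (hleast : ∀ x : G, 0 < x → one ≤ x)
    (hdiv : ∀ g : G, ∀ n : ℤ, 0 < n → ∃ h : G, ∃ k : ℤ, g = n • h + k • one)
    (hrig : ∀ f : G ≃+ G, Monotone f → f one = one → ∀ x : G, f x = x)
    (D : Set G) (hD : D = {g : G | ∀ n : ℤ, 0 < n → ∃ h : G, g = n • h})
    (C : AddSubgroup G)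
    (hconv : ∀ x y : G, -y ≤ x → x ≤ y → y ∈ C → x ∈ C)
    (honeC : one ∈ C)
    (hmeet : ∃ d ∈ D, d ∈ C ∧ d ≠ 0) :
    ∀ g : G, ∃ c ∈ C, ∃ d ∈ D, g = c + d := by
  intro g₀
  classical
  by_contra hg
  -- membership in D
  have hDmem : ∀ x : G, x ∈ D ↔ ∀ n : ℤ, 0 < n → ∃ h : G, x = n • h := by
    intro x; rw [hD]; exact Iff.rfl
  have hD0 : (0 : G) ∈ D := (hDmem 0).2 fun n hn => ⟨0, by simp⟩
  have hDadd : ∀ x y : G, x ∈ D → y ∈ D → x + y ∈ D := by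
    intro x y hx hy
    refine (hDmem _).2 fun n hn => ?_
    obtain ⟨a, ha⟩ := (hDmem x).1 hx n hn
    obtain ⟨b, hb⟩ := (hDmem y).1 hy n hn
    exact ⟨a + b, by rw [smul_add, ← ha, ← hb]⟩
  have hDneg : ∀ x : G, x ∈ D → -x ∈ D := by
    intro x hx
    refine (hDmem _).2 fun n hn => ?_
    obtain ⟨a, ha⟩ := (hDmem x).1 hx n hn
    exact ⟨-a, by rw [smul_neg, ← ha]⟩
  have hDdiv : ∀ x ∈ D, ∀ n : ℤ, 0 < n → ∃ e ∈ D, x = n • e := by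
    intro x hx n hn
    obtain ⟨e, he⟩ := (hDmem x).1 hx n hn
    refine ⟨e, (hDmem e).2 fun m hm => ?_, he⟩
    obtain ⟨h', hh'⟩ := (hDmem x).1 hx (n * m) (by positivity)
    refine ⟨h', (zsmul_right_inj hn.ne').1 ?_⟩
    rw [← he, hh', mul_zsmul]
  -- the subgroup K = C + D
  let K : AddSubgroup G :=
    { carrier := {x | ∃ c ∈ C, ∃ d ∈ D, x = c + d}
      zero_mem' := ⟨0, C.zero_mem, 0, hD0, by simp⟩
      add_mem' := by
        rintro x y ⟨c, hc, d, hd, rfl⟩ ⟨c', hc', d', hd', rfl⟩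
        exact ⟨c + c', C.add_mem hc hc', d + d', hDadd _ _ hd hd', by abel⟩
      neg_mem' := by
        rintro x ⟨c, hc, d, hd, rfl⟩
        exact ⟨-c, C.neg_mem hc, -d, hDneg _ hd, by abel⟩ }
  have hKmem : ∀ x : G, x ∈ K ↔ ∃ c ∈ C, ∃ d ∈ D, x = c + d := fun x => Iff.rfl
  have hgK : g₀ ∉ K := hg
  have hCK : ∀ c ∈ C, c ∈ K := fun c hc => ⟨c, hc, 0, hD0, by simp⟩
  -- elements outside C that are positive dominate C
  have hCbig : ∀ x : G, 0 < x → x ∉ C → ∀ c ∈ C, c < x := by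
    intro x hx hxC c hc
    by_contra hcx
    push_neg at hcx
    exact hxC (hconv x c (le_trans (by simpa using hx.le.trans hcx) hx.le) hcx hc)
  -- K is "pure": n • x ∈ K → x ∈ K
  have hKtf : ∀ n : ℤ, 0 < n → ∀ x : G, n • x ∈ K → x ∈ K := by
    intro n hn x hx
    have hn1 : (1 : ℤ) ≤ n := hn
    obtain ⟨c, hc, d, hd, hcd⟩ := hx
    obtain ⟨e, heD, rfl⟩ := hDdiv d hd n hn
    have h1 : n • (x - e) = c := by rw [smul_sub, hcd]; abel
    have h2 : x - e ∈ C := by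
      rcases le_total 0 (x - e) with h | h
      · have hle : x - e ≤ c := by
          rw [← h1]
          calc x - e = (1 : ℤ) • (x - e) := (one_zsmul _).symm
            _ ≤ n • (x - e) := zsmul_le_zsmul_left h hn1
        have hc0 : (0 : G) ≤ c := le_trans h hle
        exact hconv _ c (le_trans (neg_nonpos.2 hc0) h) hle hc
      · have h4 : -(x - e) ≤ n • -(x - e) := by
          calc -(x - e) = (1 : ℤ) • -(x - e) := (one_zsmul _).symm
            _ ≤ n • -(x - e) := zsmul_le_zsmul_left (neg_nonneg.2 h) hn1
        have h5 : n • (x - e) ≤ x - e := by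
          rw [zsmul_neg] at h4
          exact neg_le_neg_iff.1 h4
        have hle : c ≤ x - e := h1 ▸ h5
        have hge : x - e ≤ -c := le_trans h (neg_nonneg.2 (hle.trans h))
        exact hconv _ (-c) (by rw [neg_neg]; exact hle) hge (C.neg_mem hc)
    exact ⟨x - e, h2, e, heD, by abel⟩
  have hνzero : ∀ n : ℤ, n • g₀ ∈ K → n = 0 := by
    intro n h
    rcases lt_trichotomy n 0 with hn | rfl | hn
    · exfalso
      exact hgK (hKtf (-n) (by omega) g₀ (by simpa [neg_zsmul] using K.neg_mem h))
    · rfl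
    · exact absurd (hKtf n hn g₀ h) hgK
  -- a positive element of C ∩ D
  obtain ⟨d0, hd0D, hd0C, hd0pos⟩ : ∃ d0, d0 ∈ D ∧ d0 ∈ C ∧ 0 < d0 := by
    obtain ⟨d', hd'D, hd'C, hd'ne⟩ := hmeet
    rcases hd'ne.lt_or_gt with h | h
    · exact ⟨-d', hDneg _ hd'D, C.neg_mem hd'C, neg_pos.2 h⟩
    · exact ⟨d', hd'D, hd'C, h⟩
  -- roots of d0
  have hr0 : ∀ n : ℕ, 0 < n → ∃ h : G, d0 = (n : ℤ) • h :=
    fun n hn => (hDmem d0).1 hd0D n (by exact_mod_cast hn)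
  let r : ℕ → G := fun n => if h : 0 < n then (hr0 n h).choose else 0
  have hrspec : ∀ n : ℕ, 0 < n → (n : ℤ) • r n = d0 := by
    intro n hn
    simp only [r, dif_pos hn]
    exact ((hr0 n hn).choose_spec).symm
  have hrC : ∀ n : ℕ, 0 < n → r n ∈ C ∧ 0 < r n := by
    intro n hn
    have hn' : (0 : ℤ) < (n : ℤ) := by exact_mod_cast hn
    have hpos' : 0 < r n := by
      by_contra hle
      push_neg at hle
      have : (n : ℤ) • r n ≤ (n : ℤ) • (0 : G) := zsmul_le_zsmul_right hn'.le hle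
      rw [hrspec n hn, smul_zero] at this
      exact absurd this (not_le.2 hd0pos)
    have hled : r n ≤ d0 := by
      rw [← hrspec n hn]
      calc r n = (1 : ℤ) • r n := (one_zsmul _).symm
        _ ≤ (n : ℤ) • r n := zsmul_le_zsmul_left hpos'.le hn'
    exact ⟨hconv _ d0 (le_trans (by simpa using hd0pos.le) hpos'.le) hled hd0C, hpos'⟩
  -- the "q • d0" map ψ : ℚ → G
  let ψ : ℚ → G := fun q => q.num • r q.den
  have hψmul : ∀ q : ℚ, (q.den : ℤ) • ψ q = q.num • d0 := by
    intro q
    show (q.den : ℤ) • (q.num • r q.den) = q.num • d0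
    rw [smul_comm, hrspec q.den q.pos]
  have hψchar : ∀ (q : ℚ) (a b : ℤ) (x : G), 0 < b → (a : ℚ) / (b : ℚ) = q →
      b • x = a • d0 → x = ψ q := by
    intro q a b x hb hab hx
    have hden : (0 : ℤ) < (q.den : ℤ) := by exact_mod_cast q.pos
    have hbQ : ((b : ℚ)) ≠ 0 := by exact_mod_cast hb.ne'
    have hdQ : ((q.den : ℚ)) ≠ 0 := by exact_mod_cast q.den_nz
    have h1 : (a : ℚ) = q * b := by rwa [div_eq_iff hbQ] at hab
    have h2 : (a : ℚ) * q.den = q.num * b := by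
      linear_combination (q.den : ℚ) * h1 + (b : ℚ) * (Rat.mul_den_eq_num q)
    have hcross : a * (q.den : ℤ) = q.num * b := by exact_mod_cast h2
    have hL : ((q.den : ℤ) * b) • x = (a * (q.den : ℤ)) • d0 := by
      rw [mul_zsmul, hx, ← mul_zsmul, mul_comm]
    have hR : ((q.den : ℤ) * b) • ψ q = (q.num * b) • d0 := by
      rw [mul_comm ((q.den : ℤ)) b, mul_zsmul, hψmul, ← mul_zsmul, mul_comm b q.num]
    have key : ((q.den : ℤ) * b) • x = ((q.den : ℤ) * b) • ψ q := by
      rw [hL, hcross, hR]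
    exact (zsmul_right_inj (by positivity)).1 key
  have hψadd : ∀ q q' : ℚ, ψ (q + q') = ψ q + ψ q' := by
    intro q q'
    have hdQ : ((q.den : ℚ)) ≠ 0 := by exact_mod_cast q.den_nz
    have hdQ' : ((q'.den : ℚ)) ≠ 0 := by exact_mod_cast q'.den_nz
    have hb : (0 : ℤ) < (q.den : ℤ) * (q'.den : ℤ) := by positivity
    refine (hψchar (q + q') (q.num * q'.den + q'.num * q.den) ((q.den : ℤ) * (q'.den : ℤ))
      (ψ q + ψ q') hb ?_ ?_).symm
    · have hbQ : (((q.den : ℤ) * (q'.den : ℤ) : ℤ) : ℚ) ≠ 0 := by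
        push_cast
        positivity
      rw [div_eq_iff hbQ]
      push_cast
      linear_combination (-(q'.den : ℚ)) * (Rat.mul_den_eq_num q) + (-(q.den : ℚ)) * (Rat.mul_den_eq_num q')
    · rw [smul_add]
      have e1 : ((q.den : ℤ) * (q'.den : ℤ)) • ψ q = (q.num * q'.den) • d0 := by
        rw [mul_comm, mul_zsmul, hψmul, ← mul_zsmul, mul_comm]
      have e2 : ((q.den : ℤ) * (q'.den : ℤ)) • ψ q' = (q'.num * q.den) • d0 := by
        rw [mul_zsmul, hψmul, ← mul_zsmul, mul_comm]
      rw [e1, e2, ← add_zsmul]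
  have hψ0 : ψ 0 = 0 := by
    have h := hψadd 0 0
    rw [add_zero] at h
    exact (add_eq_left.1 h.symm)
  have hψsub : ∀ q q' : ℚ, ψ (q - q') = ψ q - ψ q' := by
    intro q q'
    have h := hψadd (q - q') q'
    rw [sub_add_cancel] at h
    rw [eq_sub_iff_add_eq, ← h]
  have hψone : ψ 1 = d0 := by
    have h1 : r 1 = d0 := by simpa using hrspec 1 one_pos
    show (1 : ℚ).num • r (1 : ℚ).den = d0
    simp [h1]
  have hψC : ∀ q : ℚ, ψ q ∈ C := fun q => C.zsmul_mem (hrC q.den q.pos).1 _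
  -- the coefficient function on K ⊔ ⟨g₀⟩
  have hPuniq : ∀ (x : G) (n m : ℤ), (∃ k ∈ K, x = k + n • g₀) → (∃ k ∈ K, x = k + m • g₀) →
      n = m := by
    rintro x n m ⟨k, hk, rfl⟩ ⟨k', hk', he⟩
    have h3 : k' = k + n • g₀ - m • g₀ := eq_sub_iff_add_eq.mpr he.symm
    have h2 : (n - m) • g₀ = k' - k := by rw [h3, sub_zsmul]; abel
    have := hνzero (n - m) (h2 ▸ K.sub_mem hk' hk)
    omega
  let P : G → ℤ → Prop := fun x n => ∃ k ∈ K, x = k + n • g₀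
  let ν : G → ℤ := fun x => if h : ∃ n, P x n then h.choose else 0
  have hνspec : ∀ x n, P x n → ν x = n := by
    intro x n h
    have hex : ∃ n, P x n := ⟨n, h⟩
    simp only [ν, dif_pos hex]
    exact hPuniq x _ n hex.choose_spec h
  let K' : AddSubgroup G := K ⊔ AddSubgroup.zmultiples g₀
  have hK'P : ∀ x : G, x ∈ K' → ∃ n, P x n := by
    intro x hx
    rw [AddSubgroup.mem_sup] at hx
    obtain ⟨k, hk, y, hy, hxy⟩ := hx
    obtain ⟨n, rfl⟩ := AddSubgroup.mem_zmultiples_iff.mp hy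
    exact ⟨n, k, hk, hxy.symm⟩
  -- extend ν to an additive hom χ = F : G →+ ℚ
  have baer : Module.Baer ℤ ℚ := Module.Baer.of_divisible ℚ
  have hν_add : ∀ x y : K', ((ν ((x : G) + (y : G)) : ℚ)) = (ν (x : G) : ℚ) + (ν (y : G) : ℚ) := by
    intro x y
    obtain ⟨n, k, hk, hkx⟩ := hK'P _ x.2
    obtain ⟨m, k', hk', hky⟩ := hK'P _ y.2
    have h1 : ν (x : G) = n := hνspec _ n ⟨k, hk, hkx⟩
    have h2 : ν (y : G) = m := hνspec _ m ⟨k', hk', hky⟩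
    have h3 : ν ((x : G) + (y : G)) = n + m := by
      refine hνspec _ (n + m) ⟨k + k', K.add_mem hk hk', ?_⟩
      rw [hkx, hky, add_zsmul]; abel
    rw [h1, h2, h3]; push_cast; ring
  let νhom : K' →+ ℚ := AddMonoidHom.mk' (fun x => (ν (x : G) : ℚ)) (by
    intro x y
    exact hν_add x y)
  obtain ⟨F, hF⟩ := baer.extension_property_addMonoidHom K'.subtype
    K'.subtype_injective νhom
  have hFval : ∀ x : K', F (x : G) = (ν (x : G) : ℚ) := by
    intro x
    have := DFunLike.congr_fun hF x
    simpa [νhom] using this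
  have hχK : ∀ k ∈ K, F k = 0 := by
    intro k hk
    have hk' : k ∈ K' := (le_sup_left : K ≤ K') hk
    have h0 : ν k = 0 := hνspec k 0 ⟨k, hk, by simp⟩
    have := hFval ⟨k, hk'⟩
    simp only [h0] at this
    simpa using this
  have hχg : F g₀ = 1 := by
    have hg' : g₀ ∈ K' := (le_sup_right : AddSubgroup.zmultiples g₀ ≤ K')
      (AddSubgroup.mem_zmultiples g₀)
    have h1 : ν g₀ = 1 := hνspec g₀ 1 ⟨0, K.zero_mem, by simp⟩
    have := hFval ⟨g₀, hg'⟩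
    simp only [h1] at this
    simpa using this
  have hψFK : ∀ q : ℚ, F (ψ q) = 0 := fun q => hχK _ (hCK _ (hψC q))
  -- the automorphism
  let f : G ≃+ G :=
    { toFun := fun x => x + ψ (F x)
      invFun := fun x => x - ψ (F x)
      left_inv := by
        intro x
        show x + ψ (F x) - ψ (F (x + ψ (F x))) = x
        rw [map_add, hψFK, add_zero]
        abel
      right_inv := by
        intro x
        show x - ψ (F x) + ψ (F (x - ψ (F x))) = x
        rw [map_sub, hψFK, sub_zero]
        abel
      map_add' := by
        intro x y
        show (x + y) + ψ (F (x + y)) = (x + ψ (F x)) + (y + ψ (F y))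
        rw [map_add, hψadd]
        abel }
  have hfdef : ∀ x : G, f x = x + ψ (F x) := fun x => rfl
  have keypos : ∀ z : G, 0 ≤ z → 0 ≤ z + ψ (F z) := by
    intro z hz
    rcases eq_or_ne (F z) 0 with h | h
    · rw [h, hψ0, add_zero]; exact hz
    · have hzK : z ∉ K := fun hk => h (hχK z hk)
      have hz0 : z ≠ 0 := by rintro rfl; exact h (map_zero F)
      have hzpos : 0 < z := lt_of_le_of_ne hz (Ne.symm hz0)
      have hzC : z ∉ C := fun hc => hzK (hCK z hc)
      have hlt : -ψ (F z) < z := hCbig z hzpos hzC _ (C.neg_mem (hψC _))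
      exact (neg_lt_iff_pos_add.mp hlt).le
  have hmono : Monotone f := by
    intro a b hab
    rw [hfdef, hfdef, ← sub_nonneg]
    have h1 : 0 ≤ (b - a) + ψ (F (b - a)) := keypos _ (sub_nonneg.2 hab)
    rw [map_sub, hψsub] at h1
    have heq : b + ψ (F b) - (a + ψ (F a)) = b - a + (ψ (F b) - ψ (F a)) := by abel
    rw [heq]
    exact h1
  have hone : f one = one := by
    rw [hfdef, hχK one (hCK one honeC), hψ0, add_zero]
  have := hrig f hmono hone g₀
  rw [hfdef, hχg, hψone] at this
  exact hd0pos.ne' (add_eq_left.mp this)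
end

section
/- Let G be a rigid Z-group, D = ⋂_{n>0} nG, and L a pure subgroup of G with 1 ∈ L such that G is the internal direct sum of D and L. Then: (i) D is archimedean, i.e., for all d, d' ∈ D with 0 < d there is a natural number n with d' ≤ n·d; (ii) D = {0} or D is cofinal in G; (iii) L is cofinal in G. -/
set_option maxHeartbeats 1000000 in
private lemma lemA {G : Type*} [AddCommGroup G] [LinearOrder G] [IsOrderedAddMonoid G] (one : G)
    (hrig : ∀ f : G ≃+ G, Monotone f → f one = one → ∀ x : G, f x = x)
    (C : AddSubgroup G) (hconv : ∀ x y : G, 0 ≤ x → x ≤ y → y ∈ C → x ∈ C)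
    (honeC : one ∈ C) (d : G) (hd : 0 < d) (hdC : d ∈ C)
    (hdvd : ∀ n : ℤ, 0 < n → ∃ h : G, d = n • h)
    (hdom : ∀ x : G, x ∉ C → 0 < x → ∀ n : ℕ, n • d < x)
    (g0 : G) (hg0 : g0 ∉ C) : False := by
  classical
  -- abs membership
  have habs : ∀ x : G, x ∈ C → |x| ∈ C := by
    intro x hx
    rcases le_total 0 x with h | h
    · rwa [abs_of_nonneg h]
    · rw [abs_of_nonpos h]; exact C.neg_mem hx
  have habs' : ∀ x : G, |x| ∈ C → x ∈ C := by
    intro x hx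
    rcases le_total 0 x with h | h
    · exact hconv x |x| h (le_abs_self x) hx
    · have : -x ∈ C := hconv (-x) |x| (neg_nonneg.2 h) (neg_le_abs x) hx
      simpa using C.neg_mem this
  -- the rational span of d
  set A : AddSubgroup G :=
    { carrier := {x : G | ∃ a b : ℤ, 0 < b ∧ b • x = a • d}
      zero_mem' := ⟨0, 1, one_pos, by simp⟩
      add_mem' := by
        rintro x y ⟨a, b, hb, hx⟩ ⟨a', b', hb', hy⟩
        refine ⟨a * b' + a' * b, b * b', mul_pos hb hb', ?_⟩
        have e1 : (b * b') • x = (b' * a) • d := by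
          rw [mul_comm b b', mul_zsmul, hx, ← mul_zsmul]
        have e2 : (b * b') • y = (b * a') • d := by
          rw [mul_zsmul, hy, ← mul_zsmul]
        rw [smul_add, e1, e2, ← add_zsmul]
        congr 1
        ring
      neg_mem' := by
        rintro x ⟨a, b, hb, hx⟩
        exact ⟨-a, b, hb, by rw [smul_neg, hx, neg_zsmul]⟩ } with hA
  have hAmem : ∀ x : G, x ∈ A ↔ ∃ a b : ℤ, 0 < b ∧ b • x = a • d := fun x => Iff.rfl
  -- boundedness of A by multiples of d
  have hAbound : ∀ x : G, x ∈ A → ∃ n : ℕ, |x| ≤ n • d := by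
    rintro x ⟨a, b, hb, hx⟩
    refine ⟨|a|.toNat, ?_⟩
    have h1 : b • |x| = |a| • d := by
      rw [← abs_of_pos hb, ← abs_zsmul, hx, abs_zsmul, abs_of_pos hd]
    have h2 : |x| ≤ b • |x| := by
      calc |x| = 1 • |x| := (one_zsmul _).symm
      _ ≤ b • |x| := zsmul_le_zsmul_left (abs_nonneg x) hb
    have h3 : (|a|.toNat : ℕ) • d = |a| • d := by
      rw [← natCast_zsmul, Int.toNat_of_nonneg (abs_nonneg a)]
    rw [h3]
    exact h2.trans h1.le
  have hAC : ∀ x : G, x ∈ A → x ∈ C := by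
    intro x hx
    obtain ⟨n, hn⟩ := hAbound x hx
    exact habs' x (hconv _ _ (abs_nonneg x) hn (AddSubgroup.nsmul_mem C hdC n))
  -- the quotient
  set V := G ⧸ C with hV
  set mk : G →+ V := QuotientAddGroup.mk' C with hmk
  have hmk0 : ∀ x : G, mk x = 0 ↔ x ∈ C := fun x => QuotientAddGroup.eq_zero_iff x
  -- torsion freeness of V
  have htf : ∀ (n : ℤ) (x : G), n • mk x = 0 → n ≠ 0 → mk x = 0 := by
    intro n x h hn
    rw [← map_zsmul, hmk0] at h
    rw [hmk0]
    refine habs' x (hconv _ |n • x| (abs_nonneg x) ?_ (habs _ h))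
    calc |x| = 1 • |x| := (one_zsmul _).symm
    _ ≤ |n| • |x| := zsmul_le_zsmul_left (abs_nonneg x) (Int.one_le_abs hn)
    _ = |n • x| := (abs_zsmul n x).symm
  haveI : NoZeroSMulDivisors ℤ V := by
    constructor
    intro n v h
    by_cases hn : n = 0
    · exact Or.inl hn
    · refine Or.inr ?_
      obtain ⟨x, rfl⟩ := QuotientAddGroup.mk'_surjective C v
      exact htf n x h hn
  -- divisibility of A
  have hzsmul_inj : ∀ (n : ℤ), n ≠ 0 → Function.Injective (fun x : G => n • x) :=
    fun n hn => zsmul_right_injective hn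
  have hdivA : ∀ (x : ↥A) (n : ℤ), 0 < n → ∃ y : ↥A, n • y = x := by
    rintro ⟨x, a, b, hb, hx⟩ n hn
    obtain ⟨h, hh⟩ := hdvd (n * b) (mul_pos hn hb)
    have hyA : (n * b) • (a • h) = a • d := by
      rw [hh, ← mul_zsmul, ← mul_zsmul, mul_comm a (n*b)]
    have hnx : n • (a • h) = x := by
      apply hzsmul_inj b (ne_of_gt hb)
      simp only
      rw [← mul_zsmul, hx, hh, ← mul_zsmul, ← mul_zsmul]
      ring_nf
    exact ⟨⟨a • h, a, n * b, mul_pos hn hb, hyA⟩, by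
      ext; simpa using hnx⟩
  haveI : DivisibleBy ↥A ℤ :=
    { div := fun x n =>
        if h : 0 < n then Classical.choose (hdivA x n h)
        else if h' : 0 < -n then -Classical.choose (hdivA x (-n) h') else 0
      div_zero := fun x => by simp
      div_cancel := by
        intro n x hn
        rcases lt_trichotomy 0 n with h | h | h
        · rw [dif_pos h]; exact Classical.choose_spec (hdivA x n h)
        · exact absurd h.symm hn
        · rw [dif_neg (not_lt.2 h.le), dif_pos (by omega : 0 < -n), smul_neg, ← neg_zsmul]
          exact Classical.choose_spec (hdivA x (-n) (by omega)) }
  have hInj : Module.Injective ℤ ↥A := (Module.Baer.of_divisible ↥A).injective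
  -- the element v0 и extension
  set v0 : V := mk g0 with hv0def
  have hv0 : v0 ≠ 0 := fun h => hg0 ((hmk0 g0).1 h)
  set dA : ↥A := ⟨d, 1, 1, one_pos, rfl⟩ with hdA
  let e := LinearEquiv.toSpanNonzeroSingleton ℤ V v0 hv0
  let i : (ℤ ∙ v0) →ₗ[ℤ] V := Submodule.subtype _
  let g : (ℤ ∙ v0) →ₗ[ℤ] ↥A := (LinearMap.toSpanSingleton ℤ ↥A dA).comp e.symm.toLinearMap
  obtain ⟨ψ, hψ⟩ := hInj.out i (Submodule.injective_subtype _) g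
  have hψv0 : ψ v0 = dA := by
    have h1 : (e 1 : V) = v0 := by simp [e, LinearEquiv.toSpanNonzeroSingleton]
    have := hψ (e 1)
    rw [show i (e 1) = v0 from h1] at this
    rw [this]
    simp [g, LinearMap.toSpanSingleton_apply]
  -- the shear automorphism
  have hmkA : ∀ y : ↥A, mk (y : G) = 0 := fun y => (hmk0 _).2 (hAC _ y.2)
  set F : G → G := fun x => x + (ψ (mk x) : G) with hF
  set Finv : G → G := fun x => x - (ψ (mk x) : G) with hFinv
  have hmkF : ∀ x : G, mk (F x) = mk x := by
    intro x
    rw [hF]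
    simp only [map_add, hmkA, add_zero]
  have hFadd : ∀ x y : G, F (x + y) = F x + F y := by
    intro x y
    simp only [hF, map_add]
    push_cast
    abel
  have hleft : ∀ x : G, Finv (F x) = x := by
    intro x
    simp only [hFinv, hmkF, hF, map_add, hmkA, add_zero]
    abel
  have hright : ∀ x : G, F (Finv x) = x := by
    intro x
    have hmkFi : mk (Finv x) = mk x := by
      simp only [hFinv, map_sub, hmkA, sub_zero]
    simp only [hF, hmkFi, hFinv, map_sub, hmkA, sub_zero]
    abel
  set f : G ≃+ G :=
    { toFun := F
      invFun := Finv
      left_inv := hleft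
      right_inv := hright
      map_add' := hFadd } with hf
  have hFpos : ∀ x : G, 0 ≤ x → 0 ≤ F x := by
    intro x hx
    rcases eq_or_lt_of_le hx with h | h
    · rw [← h]
      simp [hF]
    · by_cases hxC : x ∈ C
      · simp only [hF, (hmk0 x).2 hxC, map_zero, AddSubgroup.coe_zero, add_zero]
        exact hx
      · obtain ⟨n, hn⟩ := hAbound (ψ (mk x) : G) (ψ (mk x)).2
        have hlt := hdom x hxC h n
        have h2 : -(ψ (mk x) : G) < x := lt_of_le_of_lt ((neg_le_abs _).trans hn) hlt
        have h3 := add_lt_add_left h2 ((ψ (mk x) : G))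
        simp only [neg_add_cancel] at h3
        simp only [hF]
        exact h3.le
  have hmono : Monotone f := by
    intro a b hab
    have h0 : 0 ≤ F (b - a) := hFpos _ (sub_nonneg.2 hab)
    have h1 : F (b - a) = F b - F a := by
      simp only [hF, map_sub]
      push_cast
      abel
    rw [h1] at h0
    show F a ≤ F b
    exact sub_nonneg.1 h0
  have hone : f one = one := by
    show F one = one
    simp [hF, (hmk0 one).2 honeC]
  have := hrig f hmono hone g0
  have hg0' : F g0 = g0 := this
  simp only [hF, add_eq_left] at hg0'
  rw [← hv0def, hψv0] at hg0'
  have : d = 0 := hg0'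
  exact absurd this (ne_of_gt hd)


/-- In a rigid Z-group `G = D ⊕ L` (with `D = ⋂_{n>0} nG` and `L` a pure subgroup
containing `1`): `D` is archimedean, `D` is trivial or cofinal in `G`, and `L` is
cofinal in `G`. -/
theorem rigid_structure (G : Type*) [AddCommGroup G] [LinearOrder G] [IsOrderedAddMonoid G] (one : G)
    (hpos : 0 < one) (hleast : ∀ x : G, 0 < x → one ≤ x)
    (hdiv : ∀ g : G, ∀ n : ℤ, 0 < n → ∃ h : G, ∃ k : ℤ, g = n • h + k • one)
    (hrig : ∀ f : G ≃+ G, Monotone f → f one = one → ∀ x : G, f x = x)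
    (D : Set G) (hD : D = {g : G | ∀ n : ℤ, 0 < n → ∃ h : G, g = n • h})
    (L : AddSubgroup G) (honeL : one ∈ L)
    (hpure : ∀ (n : ℤ) (b : G), 0 < n → n • b ∈ L → b ∈ L)
    (hDL : ∀ g : G, g ∈ D → g ∈ L → g = 0)
    (hsum : ∀ g : G, ∃ d ∈ D, ∃ l ∈ L, g = d + l) :
    (∀ d ∈ D, ∀ d' ∈ D, 0 < d → ∃ n : ℕ, d' ≤ n • d) ∧
    (D = {0} ∨ ∀ g : G, ∃ d ∈ D, g ≤ d) ∧
    (∀ g : G, ∃ l ∈ L, g ≤ l) := by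
  classical
  have hDmem : ∀ x : G, x ∈ D ↔ ∀ n : ℤ, 0 < n → ∃ h : G, x = n • h := by
    intro x; rw [hD]; exact Iff.rfl
  have hD0 : (0 : G) ∈ D := (hDmem 0).2 fun n hn => ⟨0, by simp⟩
  have hDadd : ∀ x ∈ D, ∀ y ∈ D, x + y ∈ D := by
    intro x hx y hy
    rw [hDmem] at *
    intro n hn
    obtain ⟨hx', hhx⟩ := hx n hn
    obtain ⟨hy', hhy⟩ := hy n hn
    exact ⟨hx' + hy', by rw [smul_add, ← hhx, ← hhy]⟩
  have hDneg : ∀ x ∈ D, -x ∈ D := by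
    intro x hx
    rw [hDmem] at *
    intro n hn
    obtain ⟨h, hh⟩ := hx n hn
    exact ⟨-h, by rw [smul_neg, ← hh]⟩
  have hDsub : ∀ x ∈ D, ∀ y ∈ D, x - y ∈ D := by
    intro x hx y hy
    rw [sub_eq_add_neg]
    exact hDadd x hx (-y) (hDneg y hy)
  have hDnsmul : ∀ (m : ℕ), ∀ x ∈ D, m • x ∈ D := by
    intro m x hx
    rw [hDmem] at *
    intro n hn
    obtain ⟨h, hh⟩ := hx n hn
    refine ⟨(m : ℤ) • h, ?_⟩
    rw [← natCast_zsmul, hh, ← mul_zsmul, ← mul_zsmul, mul_comm]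
  -- part (i)
  have part1 : ∀ d ∈ D, ∀ d' ∈ D, 0 < d → ∃ n : ℕ, d' ≤ n • d := by
    intro d hdD d' hd'D hdpos
    by_contra hcon
    push_neg at hcon
    have hd'pos : 0 < d' := by simpa using hcon 0
    set C : AddSubgroup G :=
      { carrier := {x : G | ∃ n : ℕ, |x| ≤ n • d}
        zero_mem' := ⟨0, by simp⟩
        add_mem' := by
          rintro x y ⟨n, hn⟩ ⟨m, hm⟩
          exact ⟨n + m, (abs_add_le x y).trans (by rw [add_nsmul]; exact add_le_add hn hm)⟩
        neg_mem' := by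
          rintro x ⟨n, hn⟩
          exact ⟨n, by rwa [abs_neg]⟩ } with hC
    refine lemA one hrig C ?_ ⟨1, ?_⟩ d hdpos ⟨1, ?_⟩ (fun n hn => (hDmem d).1 hdD n hn) ?_ d' ?_
    · intro x y hx hxy ⟨n, hn⟩
      exact ⟨n, by rw [abs_of_nonneg hx]; exact hxy.trans ((le_abs_self y).trans hn)⟩
    · rw [abs_of_pos hpos, one_nsmul]; exact hleast d hdpos
    · rw [abs_of_pos hdpos, one_nsmul]
    · intro x hxC hx n
      have h1 : ¬ |x| ≤ n • d := fun h => hxC ⟨n, h⟩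
      rw [abs_of_pos hx] at h1
      exact not_le.1 h1
    · rintro ⟨n, hn⟩
      rw [abs_of_pos hd'pos] at hn
      exact absurd hn (not_le.2 (hcon n))
  -- part (ii)
  have part2 : D = {0} ∨ ∀ g : G, ∃ d ∈ D, g ≤ d := by
    by_cases htriv : D = {0}
    · exact Or.inl htriv
    right
    by_contra hcon
    push_neg at hcon
    obtain ⟨g, hg⟩ := hcon
    have hex : ∃ e ∈ D, e ≠ 0 := by
      by_contra h
      push_neg at h
      exact htriv (Set.eq_singleton_iff_unique_mem.2 ⟨hD0, fun x hx => h x hx⟩)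
    obtain ⟨e₀, he₀D, he₀⟩ := hex
    obtain ⟨e, heD, hepos⟩ : ∃ e ∈ D, 0 < e := by
      rcases he₀.lt_or_gt with h | h
      · exact ⟨-e₀, hDneg e₀ he₀D, neg_pos.2 h⟩
      · exact ⟨e₀, he₀D, h⟩
    set C : AddSubgroup G :=
      { carrier := {x : G | ∃ e' ∈ D, |x| ≤ e'}
        zero_mem' := ⟨0, hD0, by simp⟩
        add_mem' := by
          rintro x y ⟨a, ha, hxa⟩ ⟨b, hb, hyb⟩
          exact ⟨a + b, hDadd a ha b hb, (abs_add_le x y).trans (add_le_add hxa hyb)⟩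
        neg_mem' := by
          rintro x ⟨a, ha, hxa⟩
          exact ⟨a, ha, by rwa [abs_neg]⟩ } with hC
    refine lemA one hrig C ?_ ⟨e, heD, ?_⟩ e hepos ⟨e, heD, (abs_of_pos hepos).le⟩
      (fun n hn => (hDmem e).1 heD n hn) ?_ g ?_
    · intro x y hx hxy ⟨a, ha, hya⟩
      exact ⟨a, ha, by rw [abs_of_nonneg hx]; exact hxy.trans ((le_abs_self y).trans hya)⟩
    · rw [abs_of_pos hpos]; exact hleast e hepos
    · intro x hxC hx n
      have h1 : ¬ |x| ≤ n • e := fun h => hxC ⟨n • e, hDnsmul n e heD, h⟩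
      rw [abs_of_pos hx] at h1
      exact not_le.1 h1
    · rintro ⟨a, ha, hga⟩
      exact absurd ((le_abs_self g).trans hga) (not_le.2 (hg a ha))
  -- part (iii)
  have part3 : ∀ g : G, ∃ l ∈ L, g ≤ l := by
    by_contra hcon
    push_neg at hcon
    obtain ⟨g, hg⟩ := hcon
    obtain ⟨dg, hdgD, lg, hlgL, hgeq⟩ := hsum g
    have hdom : ∀ l ∈ L, l < dg := by
      intro l hl
      have h1 : l + lg < g := hg (l + lg) (L.add_mem hl hlgL)
      rw [hgeq] at h1
      exact lt_of_add_lt_add_right h1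
    have hdgpos : 0 < dg := hdom 0 L.zero_mem
    have hlex : ∀ x ∈ D, 0 < x → ∀ l ∈ L, 0 < x + l := by
      intro x hxD hxpos l hl
      obtain ⟨n, hn⟩ := part1 x hxD dg hdgD hxpos
      have h2 : -(n • l) < dg := by
        rw [← smul_neg]
        exact hdom _ (AddSubgroup.nsmul_mem L (L.neg_mem hl) n)
      have h3 : -(n • l) < n • x := h2.trans_le hn
      have h4 : 0 < n • (x + l) := by
        have h5 := add_lt_add_left h3 (n • l)
        rw [neg_add_cancel] at h5
        rw [smul_add]
        exact add_comm (n • l) (n • x) ▸ h5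
      by_contra hcx
      push_neg at hcx
      have h6 : 0 ≤ n • (-(x + l)) := nsmul_nonneg (neg_nonneg.2 hcx) n
      rw [smul_neg] at h6
      exact absurd h4 (not_lt.2 (neg_nonneg.1 h6))
    -- projections onto D
    choose df hdfD lf hlfL heq using hsum
    have huniq : ∀ (x a b : G), a ∈ D → b ∈ L → x = a + b → df x = a := by
      intro x a b ha hb hx
      have h1 : df x - a ∈ D := hDsub _ (hdfD x) _ ha
      have h4 : a + b = df x + lf x := by rw [← hx, ← heq x]
      have h2 : df x - a ∈ L := by
        have h3 : df x - a = b - lf x := by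
          rw [sub_eq_sub_iff_add_eq_add, ← h4, add_comm]
        rw [h3]
        exact L.sub_mem hb (hlfL x)
      exact sub_eq_zero.1 (hDL _ h1 h2)
    have hdf0 : df 0 = 0 := huniq 0 0 0 hD0 L.zero_mem (by simp)
    have hdfadd : ∀ x y : G, df (x + y) = df x + df y := by
      intro x y
      refine huniq (x + y) (df x + df y) (lf x + lf y)
        (hDadd _ (hdfD x) _ (hdfD y)) (L.add_mem (hlfL x) (hlfL y)) ?_
      conv_lhs => rw [heq x, heq y]
      abel
    -- halving in D
    have hhalf : ∀ x ∈ D, ∃ h ∈ D, x = h + h := by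
      intro x hx
      rw [hDmem] at hx
      obtain ⟨h, hh⟩ := hx 2 (by norm_num)
      refine ⟨h, ?_, by rw [hh, two_zsmul]⟩
      rw [hDmem]
      intro m hm
      obtain ⟨h', hh'⟩ := hx (2 * m) (by positivity)
      refine ⟨h', ?_⟩
      have h8 : (2 : ℤ) • h = (2 : ℤ) • (m • h') := by
        rw [← hh, hh', mul_zsmul]
      exact zsmul_right_injective two_ne_zero h8
    -- the doubling automorphism
    set F : G → G := fun x => x + df x with hF
    have hF0 : F 0 = 0 := by simp [hF, hdf0]
    have hFadd : ∀ x y : G, F (x + y) = F x + F y := by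
      intro x y
      simp only [hF, hdfadd]
      abel
    have hFneg : ∀ x : G, F (-x) = -F x := by
      intro x
      have h1 := hFadd x (-x)
      rw [add_neg_cancel, hF0] at h1
      exact eq_neg_of_add_eq_zero_right h1.symm
    have hFpos : ∀ x : G, 0 < x → 0 < F x := by
      intro x hx
      rcases lt_trichotomy (df x) 0 with h | h | h
      · exfalso
        have h1 := hlex (-df x) (hDneg _ (hdfD x)) (neg_pos.2 h) (-lf x) (L.neg_mem (hlfL x))
        rw [← neg_add] at h1
        have h2 : df x + lf x = x := (heq x).symm
        rw [h2] at h1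
        exact absurd hx (not_lt.2 (neg_pos.1 h1).le)
      · simp only [hF, h, add_zero]; exact hx
      · have h1 := hlex (df x + df x) (hDadd _ (hdfD x) _ (hdfD x)) (add_pos h h) (lf x) (hlfL x)
        simp only [hF]
        have h2 : df x + df x + lf x = x + df x := by
          have h3 : df x + lf x = x := (heq x).symm
          calc df x + df x + lf x = (df x + lf x) + df x := by abel
          _ = x + df x := by rw [h3]
        rw [h2] at h1
        exact h1
    have hFinj : Function.Injective F := by
      intro x y hxy
      rcases lt_trichotomy x y with h | h | h
      · exfalso
        have h1 : 0 < F (y - x) := hFpos _ (sub_pos.2 h)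
        have h2 : F (y - x) = F y - F x := by
          rw [sub_eq_add_neg, hFadd, hFneg, ← sub_eq_add_neg]
        rw [h2, hxy, sub_self] at h1
        exact lt_irrefl 0 h1
      · exact h
      · exfalso
        have h1 : 0 < F (x - y) := hFpos _ (sub_pos.2 h)
        have h2 : F (x - y) = F x - F y := by
          rw [sub_eq_add_neg, hFadd, hFneg, ← sub_eq_add_neg]
        rw [h2, hxy, sub_self] at h1
        exact lt_irrefl 0 h1
    have hFsurj : Function.Surjective F := by
      intro y
      obtain ⟨h, hhD, hyh⟩ := hhalf (df y) (hdfD y)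
      refine ⟨h + lf y, ?_⟩
      have hdfx : df (h + lf y) = h := huniq _ h (lf y) hhD (hlfL y) rfl
      simp only [hF, hdfx]
      calc h + lf y + h = (h + h) + lf y := by abel
      _ = df y + lf y := by rw [← hyh]
      _ = y := (heq y).symm
    set f2 : G ≃+ G := AddEquiv.mk' (Equiv.ofBijective F ⟨hFinj, hFsurj⟩) hFadd with hf2
    have hmono : Monotone f2 := by
      intro a b hab
      show F a ≤ F b
      rcases eq_or_lt_of_le hab with h | h
      · rw [h]
      · have h1 : 0 < F (b - a) := hFpos _ (sub_pos.2 h)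
        have h2 : F (b - a) = F b - F a := by
          rw [sub_eq_add_neg, hFadd, hFneg, ← sub_eq_add_neg]
        rw [h2] at h1
        exact (sub_pos.1 h1).le
    have hone2 : f2 one = one := by
      show F one = one
      have h1 : df one = 0 := huniq one 0 one hD0 honeL (by rw [zero_add])
      simp [hF, h1]
    have hfix := hrig f2 hmono hone2 dg
    have hFdg : F dg = dg := hfix
    have hdfdg : df dg = dg := huniq dg dg 0 hdgD L.zero_mem (by rw [add_zero])
    simp only [hF, hdfdg, add_eq_left] at hFdg
    exact absurd hFdg hdgpos.ne'
  exact ⟨part1, part2, part3⟩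
end

section
/- Every rigid Z-group has cardinality at most 2^ℵ₀. -/
section RatModule
variable {V : Type*} [AddCommGroup V]
variable (htf : ∀ n : ℤ, 0 < n → ∀ x : V, n • x = 0 → x = 0)
variable (hdv : ∀ n : ℤ, 0 < n → ∀ x : V, ∃ y, n • y = x)

private lemma rat_num_eq (q : ℚ) : (q.num : ℚ) = q * q.den :=
  (div_eq_iff (by exact_mod_cast q.den_pos.ne')).mp (Rat.num_div_den q)

noncomputable def qsmul (q : ℚ) (x : V) : V :=
  (hdv (q.den : ℤ) (by exact_mod_cast q.den_pos) (q.num • x)).choose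

theorem qsmul_spec (q : ℚ) (x : V) : (q.den : ℤ) • qsmul hdv q x = q.num • x :=
  (hdv (q.den : ℤ) (by exact_mod_cast q.den_pos) (q.num • x)).choose_spec

include htf in
theorem smul_uniq {a b a' b' : ℤ} (hb : 0 < b) (hb' : 0 < b') {x y y' : V}
    (h : b • y = a • x) (h' : b' • y' = a' • x) (hab : a * b' = a' * b) : y = y' := by
  have h1 : (b * b') • y = (a * b') • x := by
    rw [mul_comm b b', mul_smul, h, ← mul_smul, mul_comm b' a]
  have h2 : (b * b') • y' = (a' * b) • x := by
    rw [mul_smul, h', ← mul_smul, mul_comm b a']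
  have h3 : (b * b') • (y - y') = 0 := by
    rw [smul_sub, h1, h2, hab, sub_self]
  exact sub_eq_zero.mp (htf (b * b') (mul_pos hb hb') _ h3)

include htf in
theorem qsmul_eq {q : ℚ} {a b : ℤ} (hb : 0 < b) {x y : V}
    (h : b • y = a • x) (hab : (a : ℚ) = q * b) : y = qsmul hdv q x := by
  have hd : a * (q.den : ℤ) = q.num * b := by
    have key : (a : ℚ) * q.den = q.num * b := by
      rw [hab, rat_num_eq q]; ring
    exact_mod_cast key
  exact smul_uniq htf hb (by exact_mod_cast q.den_pos) h (qsmul_spec hdv q x) hd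

noncomputable def ratModuleOfDivisible : Module ℚ V where
  smul := qsmul hdv
  one_smul x := by
    show qsmul hdv 1 x = x
    symm
    exact qsmul_eq htf hdv one_pos (a := 1) (by simp) (by simp)
  mul_smul q r x := by
    show qsmul hdv (q * r) x = qsmul hdv q (qsmul hdv r x)
    symm
    have hr := qsmul_spec hdv r x
    have hq := qsmul_spec hdv q (qsmul hdv r x)
    refine qsmul_eq htf hdv (b := (q.den : ℤ) * (r.den : ℤ)) (a := q.num * r.num)
      (by positivity) ?_ ?_
    · rw [mul_comm (q.den:ℤ) (r.den:ℤ), mul_smul, hq, ← mul_smul, mul_comm (r.den:ℤ) q.num,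
        mul_smul, hr, ← mul_smul]
    · push_cast
      rw [rat_num_eq q, rat_num_eq r]; ring
  smul_zero q := by
    show qsmul hdv q 0 = 0
    have := qsmul_spec hdv q (0 : V)
    rw [smul_zero] at this
    exact htf _ (by exact_mod_cast q.den_pos) _ this
  smul_add q x y := by
    show qsmul hdv q (x + y) = qsmul hdv q x + qsmul hdv q y
    symm
    refine qsmul_eq htf hdv (b := (q.den : ℤ)) (a := q.num)
      (by exact_mod_cast q.den_pos) ?_ (by push_cast; exact rat_num_eq q)
    rw [smul_add, qsmul_spec, qsmul_spec, ← smul_add]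
  add_smul q r x := by
    show qsmul hdv (q + r) x = qsmul hdv q x + qsmul hdv r x
    symm
    have hr := qsmul_spec hdv r x
    have hq := qsmul_spec hdv q x
    refine qsmul_eq htf hdv (b := (q.den : ℤ) * (r.den : ℤ))
      (a := q.num * r.den + r.num * q.den) (by positivity) ?_ ?_
    · have e1 : ((q.den:ℤ) * (r.den:ℤ)) • qsmul hdv q x = (q.num * (r.den:ℤ)) • x := by
        rw [mul_comm, mul_smul, hq, ← mul_smul, mul_comm]
      have e2 : ((q.den:ℤ) * (r.den:ℤ)) • qsmul hdv r x = (r.num * (q.den:ℤ)) • x := by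
        rw [mul_smul, hr, ← mul_smul, mul_comm]
      rw [smul_add, e1, e2, add_smul]
    · push_cast
      rw [rat_num_eq q, rat_num_eq r]; ring
  zero_smul x := by
    show qsmul hdv 0 x = 0
    have := qsmul_spec hdv (0 : ℚ) x
    norm_num at this
    exact this

end RatModule
section Aux
variable {G : Type*} [AddCommGroup G] [LinearOrder G] [IsOrderedAddMonoid G]

/-- subgroup of elements divisible by every positive integer -/
def divSub (G : Type*) [AddCommGroup G] : AddSubgroup G where
  carrier := {g | ∀ n : ℤ, 0 < n → ∃ h, g = n • h}
  zero_mem' := fun n _ => ⟨0, by simp⟩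
  add_mem' := by
    rintro a b ha hb n hn
    obtain ⟨x, rfl⟩ := ha n hn
    obtain ⟨y, rfl⟩ := hb n hn
    exact ⟨x + y, by rw [smul_add]⟩
  neg_mem' := by
    rintro a ha n hn
    obtain ⟨x, rfl⟩ := ha n hn
    exact ⟨-x, by rw [smul_neg]⟩

theorem htfG : ∀ n : ℤ, 0 < n → ∀ x : G, n • x = 0 → x = 0 := by
  intro n hn x hx
  exact zsmul_right_injective hn.ne' (by simpa using hx)

end Aux

section Main
variable {G : Type*} [AddCommGroup G] [LinearOrder G] [IsOrderedAddMonoid G]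

/-- the convex subgroup of elements bounded by multiples of d₀ -/
def convSub (d₀ : G) : AddSubgroup G where
  carrier := {g | ∃ n : ℕ, |g| ≤ (n : ℤ) • d₀}
  zero_mem' := ⟨0, by simp⟩
  add_mem' := by
    rintro a b ⟨n, hn⟩ ⟨m, hm⟩
    refine ⟨n + m, le_trans (abs_add_le a b) ?_⟩
    push_cast
    rw [add_zsmul]
    exact add_le_add hn hm
  neg_mem' := by
    rintro a ⟨n, hn⟩
    exact ⟨n, by simpa using hn⟩

theorem arch_of_rigid (one : G)
    (hpos : 0 < one) (hleast : ∀ x : G, 0 < x → one ≤ x)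
    (hdiv : ∀ g : G, ∀ n : ℤ, 0 < n → ∃ h : G, ∃ k : ℤ, g = n • h + k • one)
    (hrig : ∀ f : G ≃+ G, Monotone f → f one = one → ∀ x : G, f x = x)
    (d₀ : G) (hd₀D : d₀ ∈ divSub G) (hd₀ : 0 < d₀) :
    ∀ g : G, ∃ n : ℕ, |g| ≤ (n : ℤ) • d₀ := by
  by_contra hcon
  push_neg at hcon
  obtain ⟨d₁, hd₁⟩ := hcon
  set C := convSub d₀ with hC
  -- one ∈ C
  have honeC : one ∈ C := ⟨1, by
    rw [abs_of_pos hpos]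
    simpa using hleast d₀ hd₀⟩
  have hd₁C : d₁ ∉ C := by
    rintro ⟨n, hn⟩
    exact absurd hn (not_le.mpr (hd₁ n))
  -- quotient is torsion-free and divisible
  have htfV : ∀ n : ℤ, 0 < n → ∀ x : G ⧸ C, n • x = 0 → x = 0 := by
    intro n hn x hx
    induction x using QuotientAddGroup.induction_on with
    | H g =>
      rw [← QuotientAddGroup.mk_zsmul, QuotientAddGroup.eq_zero_iff] at hx
      obtain ⟨m, hm⟩ := hx
      rw [QuotientAddGroup.eq_zero_iff]
      refine ⟨m, le_trans ?_ hm⟩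
      calc |g| = (1 : ℤ) • |g| := (one_zsmul _).symm
        _ ≤ n • |g| := zsmul_le_zsmul_left (abs_nonneg g) hn
        _ = |n| • |g| := by rw [abs_of_pos hn]
        _ = |n • g| := (abs_zsmul n g).symm
  have hdvV : ∀ n : ℤ, 0 < n → ∀ x : G ⧸ C, ∃ y, n • y = x := by
    intro n hn x
    induction x using QuotientAddGroup.induction_on with
    | H g =>
      obtain ⟨h, k, hk⟩ := hdiv g n hn
      refine ⟨QuotientAddGroup.mk h, ?_⟩
      rw [← QuotientAddGroup.mk_zsmul]
      have : ((k • one : G) : G ⧸ C) = 0 := by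
        rw [QuotientAddGroup.eq_zero_iff]
        exact AddSubgroup.zsmul_mem C honeC k
      calc (QuotientAddGroup.mk (n • h) : G ⧸ C)
          = QuotientAddGroup.mk (n • h) + ((k • one : G) : G ⧸ C) := by rw [this, add_zero]
        _ = ((n • h + k • one : G) : G ⧸ C) := rfl
        _ = QuotientAddGroup.mk g := by rw [← hk]
  letI : Module ℚ (G ⧸ C) := ratModuleOfDivisible htfV hdvV
  -- the functional ψ on the quotient
  set V := G ⧸ C
  set v₀ : V := QuotientAddGroup.mk d₁ with hv₀def
  have hv₀ : v₀ ≠ 0 := by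
    rw [hv₀def, Ne, QuotientAddGroup.eq_zero_iff]
    exact hd₁C
  obtain ⟨p', hcompl⟩ := Submodule.exists_isCompl (ℚ ∙ v₀)
  set proj := Submodule.linearProjOfIsCompl _ _ hcompl
  set e := LinearEquiv.toSpanNonzeroSingleton ℚ V v₀ hv₀
  set ψ : V →ₗ[ℚ] ℚ := e.symm.toLinearMap.comp proj with hψdef
  have hmem : v₀ ∈ (ℚ ∙ v₀) := Submodule.mem_span_singleton_self v₀
  have hψv₀ : ψ v₀ = 1 := by
    have h1 : proj v₀ = ⟨v₀, hmem⟩ :=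
      Submodule.linearProjOfIsCompl_apply_left hcompl ⟨v₀, hmem⟩
    have h2 : e 1 = ⟨v₀, hmem⟩ := by
      ext
      simp [e, LinearEquiv.toSpanNonzeroSingleton]
    rw [hψdef]
    simp only [LinearMap.comp_apply, LinearEquiv.coe_toLinearMap, h1, ← h2,
      LinearEquiv.symm_apply_apply]
  -- ℚ-module structure on the divisible subgroup
  have htfW : ∀ n : ℤ, 0 < n → ∀ x : ↥(divSub G), n • x = 0 → x = 0 := by
    intro n hn x hx
    ext
    have : n • (x : G) = 0 := by exact_mod_cast congrArg (Subtype.val) hx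
    simpa using htfG n hn _ this
  have hdvW : ∀ n : ℤ, 0 < n → ∀ x : ↥(divSub G), ∃ y, n • y = x := by
    intro n hn x
    obtain ⟨y, hy⟩ := x.2 n hn
    have hyD : y ∈ divSub G := by
      intro m hm
      obtain ⟨z, hz⟩ := x.2 (n * m) (mul_pos hn hm)
      refine ⟨z, ?_⟩
      have hc : n • (y - m • z) = 0 := by
        rw [smul_sub, ← mul_smul, ← hy, ← hz, sub_self]
      exact sub_eq_zero.mp (htfG n hn _ hc)
    exact ⟨⟨y, hyD⟩, by ext; simp [← hy]⟩
  letI : Module ℚ ↥(divSub G) := ratModuleOfDivisible htfW hdvW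
  set w₀ : ↥(divSub G) := ⟨d₀, hd₀D⟩ with hw₀def
  set μ : ℚ →+ G := (divSub G).subtype.comp
    (LinearMap.toSpanSingleton ℚ (↥(divSub G)) w₀).toAddMonoidHom with hμdef
  have hμspec : ∀ q : ℚ, ((q.den : ℤ)) • (μ q) = q.num • d₀ := by
    intro q
    have h := qsmul_spec hdvW q w₀
    have : (q.den : ℤ) • (q • w₀) = q.num • w₀ := h
    have h2 := congrArg (Subtype.val) this
    simpa [hμdef, LinearMap.toSpanSingleton_apply] using h2
  have hμ1 : μ 1 = d₀ := by
    simp [hμdef, LinearMap.toSpanSingleton_apply, hw₀def]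
  have hμC : ∀ q : ℚ, μ q ∈ C := by
    intro q
    refine ⟨q.num.natAbs, ?_⟩
    have hden : (0:ℤ) < (q.den : ℤ) := by exact_mod_cast q.den_pos
    have key : (q.den : ℤ) • (μ q) = q.num • d₀ := hμspec q
    have habs : |q.num • d₀| = |q.num| • d₀ := by
      rw [abs_zsmul, abs_of_pos hd₀]
    have h1 : |μ q| ≤ (q.den : ℤ) • |μ q| := by
      calc |μ q| = (1:ℤ) • |μ q| := (one_zsmul _).symm
        _ ≤ (q.den : ℤ) • |μ q| := zsmul_le_zsmul_left (abs_nonneg _) hden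
    have h2 : (q.den : ℤ) • |μ q| = |q.num| • d₀ := by
      rw [← habs, ← key, abs_zsmul, abs_of_pos hden]
    have h3 : |μ q| ≤ |q.num| • d₀ := h1.trans_eq h2
    rw [Int.abs_eq_natAbs] at h3; exact h3
  -- the additive map φ
  set φ : G →+ G := μ.comp (ψ.toAddMonoidHom.comp (QuotientAddGroup.mk' C)) with hφdef
  have hφC : ∀ g, g ∈ C → φ g = 0 := by
    intro g hg
    have : (QuotientAddGroup.mk' C) g = 0 := (QuotientAddGroup.eq_zero_iff g).mpr hg
    simp [hφdef, this]
  have hφmem : ∀ g, φ g ∈ C := fun g => hμC _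
  have hφφ : ∀ g, φ (φ g) = 0 := fun g => hφC _ (hφmem g)
  have hφd₁ : φ d₁ = d₀ := by
    have : (QuotientAddGroup.mk' C) d₁ = v₀ := rfl
    simp [hφdef, this, hψv₀, hμ1]
  -- the automorphism
  set f : G ≃+ G :=
    { toFun := fun g => g + φ g
      invFun := fun g => g - φ g
      left_inv := by
        intro g
        simp only [map_add, hφφ, add_zero]
        abel
      right_inv := by
        intro g
        simp only [map_sub, hφφ, sub_zero]
        abel
      map_add' := by
        intro a b
        simp only [map_add]
        abel } with hfdef
  have hmono : Monotone f := by
    intro x y hxy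
    have hfxy : f y - f x = (y - x) + φ (y - x) := by
      simp only [hfdef, AddEquiv.coe_mk, Equiv.coe_fn_mk, map_sub]
      abel
    rw [← sub_nonneg, hfxy]
    set z := y - x with hz
    have hz0 : 0 ≤ z := sub_nonneg.mpr hxy
    by_cases hzC : z ∈ C
    · rw [hφC z hzC, add_zero]; exact hz0
    · have hzpos : 0 < z := by
        rcases hz0.lt_or_eq with h | h
        · exact h
        · exact absurd (h ▸ C.zero_mem) hzC
      obtain ⟨n, hn⟩ := hφmem z
      have hlt : (n : ℤ) • d₀ < z := by
        by_contra hle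
        push_neg at hle
        exact hzC ⟨n, by rwa [abs_of_pos hzpos]⟩
      have hlt2 : -φ z < z := by
        calc -φ z ≤ |φ z| := neg_le_abs _
          _ ≤ (n : ℤ) • d₀ := hn
          _ < z := hlt
      have h4 := add_lt_add_right hlt2 (φ z)
      replace h4 := neg_lt_iff_pos_add.mp hlt2
      exact le_of_lt h4
  have hfone : f one = one := by
    simp only [hfdef, AddEquiv.coe_mk, Equiv.coe_fn_mk, hφC one honeC, add_zero]
  have := hrig f hmono hfone d₁
  simp only [hfdef, AddEquiv.coe_mk, Equiv.coe_fn_mk, hφd₁] at this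
  exact hd₀.ne' (add_left_cancel (this.trans (add_zero d₁).symm))


end Main

section MainThm
open Cardinal
universe u

theorem main_aux {G : Type u} [AddCommGroup G] [LinearOrder G] [IsOrderedAddMonoid G] (one : G)
    (hpos : 0 < one) (hleast : ∀ x : G, 0 < x → one ≤ x)
    (hdiv : ∀ g : G, ∀ n : ℤ, 0 < n → ∃ h : G, ∃ k : ℤ, g = n • h + k • one)
    (hrig : ∀ f : G ≃+ G, Monotone f → f one = one → ∀ x : G, f x = x) :
    Cardinal.mk G ≤ 2 ^ Cardinal.aleph0 := by
  classical
  rw [Cardinal.two_power_aleph0]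
  have arch := arch_of_rigid one hpos hleast hdiv hrig
  -- Step 1 : the divisible subgroup has size at most continuum
  have hD : #(↥(divSub G)) ≤ Cardinal.continuum := by
    by_cases h0 : ∀ d ∈ divSub G, d = (0:G)
    · have : Subsingleton ↥(divSub G) :=
        ⟨by rintro ⟨a, ha⟩ ⟨b, hb⟩; simp [Subtype.ext_iff, h0 a ha, h0 b hb]⟩
      exact Cardinal.mk_le_aleph0.trans Cardinal.aleph0_le_continuum
    · push_neg at h0
      obtain ⟨d, hdD, hd0⟩ := h0
      have hd₀D : |d| ∈ divSub G := by
        rcases abs_cases d with ⟨h, _⟩ | ⟨h, _⟩ <;> rw [h]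
        exacts [hdD, (divSub G).neg_mem hdD]
      have hd₀ : 0 < |d| := abs_pos.mpr hd0
      set d₀ := |d| with hd₀def
      have cutlem : ∀ a b : ↥(divSub G), (a : G) < (b : G) →
          {p : ℤ × ℤ | 0 < p.2 ∧ p.1 • d₀ ≤ p.2 • (a : G)} ≠
          {p : ℤ × ℤ | 0 < p.2 ∧ p.1 • d₀ ≤ p.2 • (b : G)} := by
        intro a b hab hEq
        have hu : (b : G) - a ∈ divSub G := (divSub G).sub_mem b.2 a.2
        have hupos : 0 < (b : G) - a := sub_pos.mpr hab
        obtain ⟨nb, hnb⟩ := arch _ hu hupos d₀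
        rw [abs_of_pos hd₀] at hnb
        have hBpos : (0 : ℤ) < (nb : ℤ) := by
          rcases Nat.eq_zero_or_pos nb with h | h
          · subst h; simp at hnb; exact absurd hnb (not_le.mpr hd₀)
          · exact_mod_cast h
        set B : ℤ := (nb : ℤ)
        obtain ⟨m, hm⟩ := arch d₀ hd₀D hd₀ (B • (b : G))
        have Hbdd : ∀ z : ℤ, z • d₀ ≤ B • (b : G) → z ≤ (m : ℤ) := by
          intro z hz
          have : z • d₀ ≤ (m : ℤ) • d₀ := hz.trans ((le_abs_self _).trans hm)
          exact (zsmul_le_zsmul_iff_left hd₀).mp this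
        have Hinh : (-(m : ℤ)) • d₀ ≤ B • (b : G) := by
          rw [neg_zsmul]
          exact (neg_le_neg hm).trans (neg_abs_le _)
        obtain ⟨A, hA, hAmax⟩ := Int.exists_greatest_of_bdd
          (P := fun z => z • d₀ ≤ B • (b : G)) ⟨(m : ℤ), Hbdd⟩ ⟨-(m : ℤ), Hinh⟩
        have hA1 : B • (b : G) < (A + 1) • d₀ := by
          by_contra hcon
          push_neg at hcon
          have := hAmax (A + 1) hcon
          omega
        have hlt : B • (a : G) < A • d₀ := by
          have hba : B • (a : G) ≤ B • (b : G) - d₀ := by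
            have h' : d₀ ≤ B • (b : G) - B • (a : G) := by
              have := hnb
              rwa [smul_sub] at this
            rw [le_sub_iff_add_le] at h' ⊢
            rw [add_comm (B • (a : G)) d₀]
            exact h'
          calc B • (a : G) ≤ B • (b : G) - d₀ := hba
            _ < (A + 1) • d₀ - d₀ := sub_lt_sub_right hA1 d₀
            _ = A • d₀ := by rw [add_zsmul, one_zsmul]; abel
        have h1 : ((A, B) : ℤ × ℤ) ∈ {p : ℤ × ℤ | 0 < p.2 ∧ p.1 • d₀ ≤ p.2 • (b : G)} :=
          ⟨hBpos, hA⟩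
        rw [← hEq] at h1
        exact absurd h1.2 (not_le.mpr hlt)
      set Amap : ↥(divSub G) → ULift.{u} (Set (ℤ × ℤ)) :=
        fun x => ⟨{p : ℤ × ℤ | 0 < p.2 ∧ p.1 • d₀ ≤ p.2 • (x : G)}⟩ with hAmap
      have hAinj : Function.Injective Amap := by
        intro x y h
        have hs := congrArg ULift.down h
        simp only [hAmap] at hs
        rcases lt_trichotomy (x : G) (y : G) with hlt | heq | hgt
        · exact absurd hs (cutlem x y hlt)
        · exact Subtype.ext heq
        · exact absurd hs.symm (cutlem y x hgt)
      calc #(↥(divSub G)) ≤ #(ULift.{u} (Set (ℤ × ℤ))) := Cardinal.mk_le_of_injective hAinj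
        _ = Cardinal.continuum := by
            rw [Cardinal.mk_uLift, Cardinal.mk_set]
            simp [Cardinal.mk_prod, Cardinal.two_power_aleph0, Cardinal.lift_continuum]
  -- Step 2 : residue map modulo each n
  have hpos' : ∀ n : ℕ, (0 : ℤ) < (n : ℤ) + 1 := fun n => by positivity
  set kf : G → ∀ n : ℕ, ℤ :=
    fun g n => (hdiv g ((n : ℤ) + 1) (hpos' n)).choose_spec.choose with hkfdef
  set hfw : G → ∀ n : ℕ, G := fun g n => (hdiv g ((n : ℤ) + 1) (hpos' n)).choose with hhfdef
  have hkf : ∀ (g : G) (n : ℕ), g = ((n : ℤ) + 1) • hfw g n + (kf g n) • one :=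
    fun g n => (hdiv g ((n : ℤ) + 1) (hpos' n)).choose_spec.choose_spec
  set ρ : G → ∀ n : ℕ, ZMod (n + 1) := fun g n => ((kf g n : ℤ) : ZMod (n + 1)) with hρdef
  have hfib : ∀ g g' : G, ρ g = ρ g' → g - g' ∈ divSub G := by
    intro g g' h m hm
    obtain ⟨n, rfl⟩ : ∃ n : ℕ, m = (n : ℤ) + 1 := ⟨(m - 1).toNat, by omega⟩
    have h1 : ((kf g n : ℤ) : ZMod (n + 1)) = ((kf g' n : ℤ) : ZMod (n + 1)) := congrFun h n
    have hdvd : ((n : ℤ) + 1) ∣ (kf g n - kf g' n) := by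
      have h2 := (ZMod.intCast_eq_intCast_iff' _ _ _).mp h1
      have h3 : ((n + 1 : ℕ) : ℤ) ∣ (kf g n - kf g' n) := Int.ModEq.dvd h2.symm
      push_cast at h3
      exact h3
    obtain ⟨t, ht⟩ := hdvd
    refine ⟨hfw g n - hfw g' n + t • one, ?_⟩
    calc g - g'
        = ((n : ℤ) + 1) • (hfw g n - hfw g' n) + (kf g n - kf g' n) • one := by
          rw [smul_sub, sub_zsmul]
          nth_rewrite 1 [hkf g n]
          nth_rewrite 1 [hkf g' n]
          abel
      _ = ((n : ℤ) + 1) • (hfw g n - hfw g' n) + (((n : ℤ) + 1) * t) • one := by rw [← ht]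
      _ = ((n : ℤ) + 1) • (hfw g n - hfw g' n + t • one) := by
          rw [mul_zsmul, smul_add]
  set base : (∀ n : ℕ, ZMod (n + 1)) → G :=
    fun v => if h : ∃ g, ρ g = v then h.choose else 0 with hbasedef
  have hbase : ∀ g, ρ (base (ρ g)) = ρ g := by
    intro g
    have h : ∃ g', ρ g' = ρ g := ⟨g, rfl⟩
    simp only [hbasedef, dif_pos h]
    exact h.choose_spec
  set ι : G → ULift.{u} (∀ n : ℕ, ZMod (n + 1)) × ↥(divSub G) :=
    fun g => (⟨ρ g⟩, ⟨g - base (ρ g), hfib _ _ (hbase g).symm⟩) with hιdef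
  have hι : Function.Injective ι := by
    intro g g' h
    obtain ⟨h1, h2⟩ := Prod.ext_iff.mp h
    have hρeq : ρ g = ρ g' := congrArg ULift.down h1
    have h3 : g - base (ρ g) = g' - base (ρ g') := congrArg Subtype.val h2
    rw [hρeq] at h3
    exact sub_left_injective h3
  have hPi : #(ULift.{u} (∀ n : ℕ, ZMod (n + 1))) ≤ Cardinal.continuum := by
    rw [Cardinal.mk_uLift]
    have hinj : Function.Injective (fun (f : ∀ n : ℕ, ZMod (n + 1)) (n : ℕ) => (f n).val) := by
      intro f f' h
      funext n
      have := congrFun h n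
      exact ZMod.val_injective _ this
    have h1 : #(∀ n : ℕ, ZMod (n + 1)) ≤ #(ℕ → ℕ) := Cardinal.mk_le_of_injective hinj
    have h2 : #(ℕ → ℕ) = Cardinal.continuum := by
      rw [← Cardinal.power_def, Cardinal.mk_nat, Cardinal.aleph0_power_aleph0]
    rw [← Cardinal.lift_continuum.{u, 0}]
    exact Cardinal.lift_le.mpr (h1.trans_eq h2)
  calc #G ≤ #(ULift.{u} (∀ n : ℕ, ZMod (n + 1)) × ↥(divSub G)) :=
        Cardinal.mk_le_of_injective hι
    _ = #(ULift.{u} (∀ n : ℕ, ZMod (n + 1))) * #(↥(divSub G)) := by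
        rw [Cardinal.mk_prod, Cardinal.lift_id, Cardinal.lift_id]
    _ ≤ Cardinal.continuum * Cardinal.continuum := mul_le_mul' hPi hD
    _ = Cardinal.continuum := Cardinal.mul_eq_self Cardinal.aleph0_le_continuum


end MainThm

/-- Every rigid Z-group has cardinality at most `2^ℵ₀`. -/
theorem rigid_zgroup_card_le_continuum (G : Type*) [AddCommGroup G] [LinearOrder G] [IsOrderedAddMonoid G] (one : G)
    (hpos : 0 < one) (hleast : ∀ x : G, 0 < x → one ≤ x)
    (hdiv : ∀ g : G, ∀ n : ℤ, 0 < n → ∃ h : G, ∃ k : ℤ, g = n • h + k • one)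
    (hrig : ∀ f : G ≃+ G, Monotone f → f one = one → ∀ x : G, f x = x) :
    Cardinal.mk G ≤ 2 ^ Cardinal.aleph0 := by
  exact main_aux one hpos hleast hdiv hrig
end

section
/- Let G be a Z-group, D = ⋂_{n>0} nG, and L a pure subgroup of G with 1 ∈ L such that G is the internal direct sum of D and L. Assume D is archimedean and both D and L are cofinal in G. Let ν : G → ℝ be a monotone additive group homomorphism whose kernel is the largest convex subgroup of G intersecting D trivially; concretely, assume x ≤ y implies ν(x) ≤ ν(y), and ν(x) = 0 holds if and only if every d ∈ D satisfying |d| ≤ n·|x| for some natural number n is zero. Then the following are equivalent: (1) G is rigid; (2) the only real number γ > 0 such that {γ·ν(d) : d ∈ D} = {ν(d) : d ∈ D} and (γ − 1)·ν(l) ∈ {ν(d) : d ∈ D} for all l ∈ L is γ = 1. -/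
/-- The rigidity criterion for a Z-group `G = D ⊕ L` with `D = ⋂_{n>0} nG`
archimedean and `D`, `L` cofinal: given a monotone homomorphism `ν : G → ℝ` whose
kernel is the largest convex subgroup of `G` intersecting `D` trivially, `G` is
rigid if and only if the only `γ > 0` with `γ·ν[D] = ν[D]` and `(γ−1)·ν[L] ⊆ ν[D]`
is `γ = 1`. -/
theorem rigid_iff_multiplier_criterion (G : Type*) [AddCommGroup G] [LinearOrder G] [IsOrderedAddMonoid G] (one : G)
    (hpos : 0 < one) (hleast : ∀ x : G, 0 < x → one ≤ x)
    (hdiv : ∀ g : G, ∀ n : ℤ, 0 < n → ∃ h : G, ∃ k : ℤ, g = n • h + k • one)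
    (D : Set G) (hD : D = {g : G | ∀ n : ℤ, 0 < n → ∃ h : G, g = n • h})
    (L : AddSubgroup G) (honeL : one ∈ L)
    (hpure : ∀ (n : ℤ) (b : G), 0 < n → n • b ∈ L → b ∈ L)
    (hDL : ∀ g : G, g ∈ D → g ∈ L → g = 0)
    (hsum : ∀ g : G, ∃ d ∈ D, ∃ l ∈ L, g = d + l)
    (harch : ∀ d ∈ D, ∀ d' ∈ D, 0 < d → ∃ n : ℕ, d' ≤ n • d)
    (hDcof : ∀ g : G, ∃ d ∈ D, g ≤ d)
    (hLcof : ∀ g : G, ∃ l ∈ L, g ≤ l)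
    (ν : G →+ ℝ)
    (hmono : ∀ x y : G, x ≤ y → ν x ≤ ν y)
    (hker : ∀ x : G, ν x = 0 ↔ ∀ d ∈ D, (∃ n : ℕ, |d| ≤ n • |x|) → d = 0) :
    (∀ f : G ≃+ G, Monotone f → f one = one → ∀ x : G, f x = x) ↔
    (∀ γ : ℝ, 0 < γ →
      (fun x : ℝ => γ * x) '' (ν '' D) = ν '' D →
      (∀ l ∈ L, (γ - 1) * ν l ∈ ν '' D) →
      γ = 1) := by
  -- Basic closure properties of D
  have Dzero : (0:G) ∈ D := by
    rw [hD]; exact fun n hn => ⟨0, by simp⟩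
  have Dsub : ∀ a ∈ D, ∀ b ∈ D, a - b ∈ D := by
    intro a ha b hb
    rw [hD] at ha hb ⊢
    intro n hn
    obtain ⟨h1, h1e⟩ := ha n hn
    obtain ⟨h2, h2e⟩ := hb n hn
    exact ⟨h1 - h2, by rw [h1e, h2e, smul_sub]⟩
  have Dadd : ∀ a ∈ D, ∀ b ∈ D, a + b ∈ D := by
    intro a ha b hb
    have := Dsub a ha (0 - b) (Dsub 0 Dzero b hb)
    simpa using this
  have Dneg : ∀ a ∈ D, -a ∈ D := by
    intro a ha
    simpa using Dsub 0 Dzero a ha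
  -- ν is injective on D
  have νinjD : ∀ d ∈ D, ν d = 0 → d = 0 := by
    intro d hd h0
    exact (hker d).mp h0 d hd ⟨1, by simp⟩
  have DinjD : ∀ a ∈ D, ∀ b ∈ D, ν a = ν b → a = b := by
    intro a ha b hb hab
    have := νinjD (a - b) (Dsub a ha b hb) (by rw [map_sub, hab, sub_self])
    exact sub_eq_zero.mp this
  -- positivity transfer
  have νposG : ∀ z : G, 0 < ν z → 0 < z := by
    intro z hz
    by_contra hle
    push_neg at hle
    have := hmono z 0 hle
    simp at this
    linarith
  have νnonneg : ∀ z : G, 0 ≤ z → 0 ≤ ν z := by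
    intro z hz
    have := hmono 0 z hz
    simpa using this
  -- ν one = 0
  have hνone : ν one = 0 := by
    rw [hker]
    rintro d hd ⟨n, hn⟩
    by_contra hd0
    rw [abs_of_pos hpos] at hn
    have hdD : |d| ∈ D := by
      rcases abs_choice d with h | h
      · rw [h]; exact hd
      · rw [h]; exact Dneg d hd
    rw [hD] at hdD
    obtain ⟨h, hh⟩ := hdD ((n:ℤ)+1) (by positivity)
    have hpos' : 0 < |d| := abs_pos.mpr hd0
    have hhpos : 0 < h := by
      by_contra hle
      push_neg at hle
      have : ((n:ℤ)+1) • h ≤ ((n:ℤ)+1) • (0:G) :=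
        zsmul_le_zsmul_right (by positivity) hle
      simp only [smul_zero] at this
      rw [hh] at hpos'
      exact absurd (lt_of_lt_of_le hpos' this) (lt_irrefl 0)
    have h1 : ((n:ℤ)+1) • one ≤ ((n:ℤ)+1) • h :=
      zsmul_le_zsmul_right (by positivity) (hleast h hhpos)
    have h2 : ((n:ℤ)+1) • one = (n:ℤ) • one + one := by
      rw [add_zsmul, one_zsmul]
    have h3 : (n:ℤ) • one = n • one := natCast_zsmul one n
    rw [hh] at hn
    rw [h2, h3] at h1
    have h4 : n • one + one ≤ n • one + 0 := by simpa using le_trans h1 hn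
    exact absurd (le_of_add_le_add_left h4) (not_le.mpr hpos)
  -- d₀ : a nonzero element of D with positive ν
  obtain ⟨d₀, hd₀D, hd₀⟩ := hDcof one
  have hd₀pos : 0 < d₀ := lt_of_lt_of_le hpos hd₀
  have hνd₀ : 0 < ν d₀ := by
    rcases lt_or_eq_of_le (νnonneg d₀ hd₀pos.le) with h | h
    · exact h
    · exact absurd (νinjD d₀ hd₀D h.symm) hd₀pos.ne'
  constructor
  · -- rigid → criterion
    intro hrigid γ hγ himg hL
    have uniq : ∀ u v : G, u - v ∈ D → ν u = ν v → u = v := by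
      intro u v hD0 hν
      have := νinjD (u - v) hD0 (by rw [map_sub, hν, sub_self])
      exact sub_eq_zero.mp this
    have hex : ∀ β : ℝ, ((fun x : ℝ => β * x) '' (ν '' D) = ν '' D) →
        (∀ l ∈ L, (β - 1) * ν l ∈ ν '' D) →
        ∀ g : G, ∃ u, u - g ∈ D ∧ ν u = β * ν g := by
      intro β himgβ hLβ g
      obtain ⟨d, hd, l, hl, hg⟩ := hsum g
      have h1 : β * ν d ∈ ν '' D := by
        rw [← himgβ]; exact ⟨ν d, ⟨d, hd, rfl⟩, rfl⟩
      obtain ⟨d', hd', hνd'⟩ := h1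
      obtain ⟨e, he, hνe⟩ := hLβ l hl
      refine ⟨d' + e + l, ?_, ?_⟩
      · have h2 : d' + e + l - g = d' + e - d := by rw [hg]; abel
        rw [h2]
        exact Dsub _ (Dadd d' hd' e he) d hd
      · rw [map_add, map_add, hνd', hνe, hg, map_add]; ring
    have himg' : (fun x : ℝ => γ⁻¹ * x) '' (ν '' D) = ν '' D := by
      ext x
      constructor
      · rintro ⟨y, hy, rfl⟩
        have hy2 : y ∈ (fun x : ℝ => γ * x) '' (ν '' D) := by rw [himg]; exact hy
        obtain ⟨z, hz, rfl⟩ := hy2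
        simpa [inv_mul_cancel_left₀ hγ.ne'] using hz
      · rintro ⟨d, hd, rfl⟩
        have h1 : γ * ν d ∈ ν '' D := by rw [← himg]; exact ⟨ν d, ⟨d, hd, rfl⟩, rfl⟩
        exact ⟨γ * ν d, h1, by field_simp⟩
    have hL' : ∀ l ∈ L, (γ⁻¹ - 1) * ν l ∈ ν '' D := by
      intro l hl
      obtain ⟨e, he, hνe⟩ := hL (-l) (neg_mem hl)
      have h1 : (γ⁻¹ - 1) * ν l = γ⁻¹ * ν e := by
        rw [hνe, map_neg]; field_simp; ring
      rw [h1, ← himg']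
      exact ⟨ν e, ⟨e, he, rfl⟩, rfl⟩
    set F : G → G := fun g => Classical.choose (hex γ himg hL g) with hFdef
    have hFspec : ∀ g, F g - g ∈ D ∧ ν (F g) = γ * ν g :=
      fun g => Classical.choose_spec (hex γ himg hL g)
    set F' : G → G := fun g => Classical.choose (hex γ⁻¹ himg' hL' g) with hF'def
    have hF'spec : ∀ g, F' g - g ∈ D ∧ ν (F' g) = γ⁻¹ * ν g :=
      fun g => Classical.choose_spec (hex γ⁻¹ himg' hL' g)
    have hleft : ∀ g, F' (F g) = g := by
      intro g
      apply uniq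
      · have h1 := (hF'spec (F g)).1
        have h2 := (hFspec g).1
        have h3 : F' (F g) - g = (F' (F g) - F g) + (F g - g) := by abel
        rw [h3]; exact Dadd _ h1 _ h2
      · rw [(hF'spec (F g)).2, (hFspec g).2, inv_mul_cancel_left₀ hγ.ne']
    have hright : ∀ g, F (F' g) = g := by
      intro g
      apply uniq
      · have h1 := (hFspec (F' g)).1
        have h2 := (hF'spec g).1
        have h3 : F (F' g) - g = (F (F' g) - F' g) + (F' g - g) := by abel
        rw [h3]; exact Dadd _ h1 _ h2
      · rw [(hFspec (F' g)).2, (hF'spec g).2, mul_inv_cancel_left₀ hγ.ne']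
    have hFadd : ∀ a b, F (a + b) = F a + F b := by
      intro a b
      apply uniq
      · have h1 : F (a+b) - (a+b) ∈ D := (hFspec (a+b)).1
        have h3 : F (a+b) - (F a + F b) =
            (F (a+b) - (a+b)) - ((F a - a) + (F b - b)) := by abel
        rw [h3]
        exact Dsub _ h1 _ (Dadd _ (hFspec a).1 _ (hFspec b).1)
      · rw [(hFspec (a+b)).2, map_add, map_add, (hFspec a).2, (hFspec b).2]; ring
    have hmonoF : ∀ z : G, 0 ≤ z → 0 ≤ F z := by
      intro z hz
      rcases lt_or_eq_of_le (νnonneg z hz) with h | h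
      · exact le_of_lt (νposG _ (by rw [(hFspec z).2]; exact mul_pos hγ h))
      · have h0 : ν (F z) = ν z := by rw [(hFspec z).2, ← h]; ring
        have h1 : F z = z := uniq _ _ (hFspec z).1 h0
        rw [h1]; exact hz
    let f : G ≃+ G :=
      { toFun := F, invFun := F', left_inv := hleft, right_inv := hright,
        map_add' := hFadd }
    have hfone : f one = one := by
      show F one = one
      apply uniq
      · exact (hFspec one).1
      · rw [(hFspec one).2, hνone]; ring
    have hfm : Monotone f := by
      intro a b hab
      show F a ≤ F b
      have h1 : F b = F (b - a) + F a := by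
        rw [← hFadd]; congr 1; abel
      have h2 : 0 ≤ F (b - a) := hmonoF _ (sub_nonneg.mpr hab)
      rw [h1]
      exact le_add_of_nonneg_left h2
    have hfd₀ : F d₀ = d₀ := hrigid f hfm hfone d₀
    have heq : γ * ν d₀ = 1 * ν d₀ := by
      rw [← (hFspec d₀).2, hfd₀, one_mul]
    exact mul_right_cancel₀ hνd₀.ne' heq
  · -- criterion → rigid
    intro hcrit f hf hfone
    have fD : ∀ e : G ≃+ G, ∀ d ∈ D, e d ∈ D := by
      intro e d hd
      rw [hD] at hd ⊢
      intro n hn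
      obtain ⟨h, hh⟩ := hd n hn
      exact ⟨e h, by rw [hh, map_zsmul]⟩
    have hfix : ∀ g : G, f g - g ∈ D := by
      intro g
      rw [hD]
      intro n hn
      obtain ⟨h, k, hg⟩ := hdiv g n hn
      refine ⟨f h - h, ?_⟩
      rw [hg, map_add, map_zsmul, map_zsmul, hfone, smul_sub]
      abel
    have hsm : StrictMono f := hf.strictMono_of_injective f.injective
    have hfsymm_mono : Monotone (f.symm : G ≃+ G) := by
      intro a b hab
      by_contra hcon
      push_neg at hcon
      have := hsm hcon
      simp only [AddEquiv.apply_symm_apply] at this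
      exact absurd hab (not_le.mpr this)
    have haux : ∀ (e : G ≃+ G), Monotone e → ∀ d : G, 0 < ν d → 0 < ν (e d) →
        ∀ x : G, ν (e x) * ν d ≤ ν (e d) * ν x := by
      intro e he d hd hed x
      by_contra hcon
      push_neg at hcon
      have hdiv1 : ν x / ν d < ν (e x) / ν (e d) := by
        rw [div_lt_div_iff₀ hd hed]
        linarith
      obtain ⟨r, hr1, hr2⟩ := exists_rat_btwn hdiv1
      have hden : (0:ℝ) < (r.den : ℝ) := by positivity
      have hrcast : (r.den : ℝ) * (r : ℝ) = (r.num : ℝ) := by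
        rw [Rat.cast_def]; field_simp
      have h1 : (r.den : ℝ) * ν x < (r.num : ℝ) * ν d := by
        rw [div_lt_iff₀ hd] at hr1
        calc (r.den:ℝ) * ν x < (r.den:ℝ) * ((r:ℝ) * ν d) :=
              mul_lt_mul_of_pos_left hr1 hden
          _ = (r.num:ℝ) * ν d := by rw [← mul_assoc, hrcast]
      have h2 : (r.den : ℤ) • x < r.num • d := by
        have hν : 0 < ν (r.num • d - (r.den : ℤ) • x) := by
          rw [map_sub, map_zsmul, map_zsmul, zsmul_eq_mul, zsmul_eq_mul]
          push_cast
          linarith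
        exact sub_pos.mp (νposG _ hν)
      have h3 : (r.den : ℤ) • e x ≤ r.num • e d := by
        have h4 := he h2.le
        rw [map_zsmul, map_zsmul] at h4
        exact h4
      have h4 : (r.den : ℝ) * ν (e x) ≤ (r.num : ℝ) * ν (e d) := by
        have h5 := hmono _ _ h3
        rw [map_zsmul, map_zsmul, zsmul_eq_mul, zsmul_eq_mul] at h5
        push_cast at h5
        exact h5
      rw [lt_div_iff₀ hed] at hr2
      have h6 : (r.den:ℝ) * ((r:ℝ) * ν (e d)) < (r.den:ℝ) * ν (e x) :=
        mul_lt_mul_of_pos_left hr2 hden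
      rw [← mul_assoc, hrcast] at h6
      linarith
    have hfd₀pos : 0 < f d₀ := by
      have := hsm hd₀pos
      rwa [map_zero] at this
    have hνfd₀ : 0 < ν (f d₀) := by
      rcases lt_or_eq_of_le (νnonneg _ hfd₀pos.le) with h | h
      · exact h
      · exact absurd (νinjD _ (fD f d₀ hd₀D) h.symm) hfd₀pos.ne'
    set γ := ν (f d₀) / ν d₀ with hγdef
    have hγpos : 0 < γ := div_pos hνfd₀ hνd₀
    have hνf : ∀ x, ν (f x) = γ * ν x := by
      intro x
      have h1 := haux f hf d₀ hνd₀ hνfd₀ x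
      have h2 := haux f.symm hfsymm_mono (f d₀) hνfd₀
        (by rw [AddEquiv.symm_apply_apply]; exact hνd₀) (f x)
      rw [AddEquiv.symm_apply_apply, AddEquiv.symm_apply_apply] at h2
      have heq : ν (f x) * ν d₀ = ν (f d₀) * ν x := le_antisymm h1 (by linarith)
      rw [hγdef]
      field_simp
      linarith
    have himg : (fun x : ℝ => γ * x) '' (ν '' D) = ν '' D := by
      ext x
      constructor
      · rintro ⟨y, ⟨d, hd, rfl⟩, rfl⟩
        exact ⟨f d, fD f d hd, by simpa using hνf d⟩
      · rintro ⟨d, hd, rfl⟩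
        refine ⟨ν (f.symm d), ⟨f.symm d, fD f.symm d hd, rfl⟩, ?_⟩
        show γ * ν (f.symm d) = ν d
        rw [← hνf (f.symm d), AddEquiv.apply_symm_apply]
    have hLc : ∀ l ∈ L, (γ - 1) * ν l ∈ ν '' D := by
      intro l hl
      refine ⟨f l - l, hfix l, ?_⟩
      rw [map_sub, hνf l]; ring
    have hγ1 := hcrit γ hγpos himg hLc
    intro x
    have h0 : ν (f x - x) = 0 := by rw [map_sub, hνf x, hγ1]; ring
    have h1 := νinjD _ (hfix x) h0
    exact sub_eq_zero.mp h1
end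

section
/- Let D'' and L'' be nonzero ℚ-linear subspaces of ℝ with D'' ∩ L'' = {0}. Assume that D'' is finite-dimensional over ℚ, or that the ℚ-dimension of D'' is strictly less than the ℚ-dimension of L''. Then for every real number γ > 0 such that {γ·d : d ∈ D''} = D'' and (γ − 1)·l ∈ D'' for all l ∈ L'', one has γ = 1. -/
/-- Sufficient condition (dimension comparison) for the multiplier criterion:
if `D''` is finite-dimensional over `ℚ`, or `dim_ℚ D'' < dim_ℚ L''`, then the only
`γ > 0` with `γ·D'' = D''` and `(γ−1)·L'' ⊆ D''` is `γ = 1`. -/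
theorem multiplier_criterion_of_dim (D'' L'' : Submodule ℚ ℝ)
    (hD : D'' ≠ ⊥) (hL : L'' ≠ ⊥) (hDL : D'' ⊓ L'' = ⊥)
    (hdim : FiniteDimensional ℚ D'' ∨ Module.rank ℚ D'' < Module.rank ℚ L'') :
    ∀ γ : ℝ, 0 < γ →
      (fun x : ℝ => γ * x) '' (D'' : Set ℝ) = (D'' : Set ℝ) →
      (∀ l ∈ L'', (γ - 1) * l ∈ D'') →
      γ = 1 := by
  intro γ hγ hγD hγL
  by_contra hne
  have hγ1 : γ - 1 ≠ 0 := sub_ne_zero.mpr hne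
  obtain ⟨l, hlL, hl0⟩ := Submodule.exists_mem_ne_zero_of_ne_bot hL
  -- the ℚ-linear map x ↦ (γ-1)x
  have hm : ∀ x ∈ L'', (LinearMap.mulLeft ℚ (γ - 1)) x ∈ D'' := by
    intro x hx; exact hγL x hx
  let g : L'' →ₗ[ℚ] D'' := (LinearMap.mulLeft ℚ (γ - 1)).restrict hm
  have hginj : Function.Injective g := by
    intro a b hab
    have : (γ - 1) * (a : ℝ) = (γ - 1) * (b : ℝ) := congrArg Subtype.val hab
    exact Subtype.ext (mul_left_cancel₀ hγ1 this)
  -- hence rank L'' ≤ rank D'', ruling out the second case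
  have hrank : Module.rank ℚ L'' ≤ Module.rank ℚ D'' :=
    LinearMap.rank_le_of_injective g hginj
  have hfin : FiniteDimensional ℚ D'' := by
    rcases hdim with h | h
    · exact h
    · exact absurd hrank (not_le.mpr h)
  -- (γ-1)·D'' ⊆ D''
  have hsub : ∀ x ∈ D'', (LinearMap.mulLeft ℚ (γ - 1)) x ∈ D'' := by
    intro x hx
    have hγx : γ * x ∈ D'' := by
      have : γ * x ∈ ((fun x : ℝ => γ * x) '' (D'' : Set ℝ)) := ⟨x, hx, rfl⟩
      rwa [hγD] at this
    have := sub_mem hγx hx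
    simpa [LinearMap.mulLeft_apply, sub_mul, one_mul] using this
  let f : D'' →ₗ[ℚ] D'' := (LinearMap.mulLeft ℚ (γ - 1)).restrict hsub
  have hfinj : Function.Injective f := by
    intro a b hab
    have : (γ - 1) * (a : ℝ) = (γ - 1) * (b : ℝ) := congrArg Subtype.val hab
    exact Subtype.ext (mul_left_cancel₀ hγ1 this)
  have hfsurj : Function.Surjective f :=
    (LinearMap.injective_iff_surjective (f := f)).mp hfinj
  obtain ⟨e, he⟩ := hfsurj ⟨(γ - 1) * l, hγL l hlL⟩
  have he' : (γ - 1) * (e : ℝ) = (γ - 1) * l := congrArg Subtype.val he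
  have hel : (e : ℝ) = l := mul_left_cancel₀ hγ1 he'
  have hlD : l ∈ D'' := hel ▸ e.2
  have : l ∈ D'' ⊓ L'' := ⟨hlD, hlL⟩
  rw [hDL] at this
  exact hl0 this
end

section
/- Let D'' and L'' be nonzero ℚ-linear subspaces of ℝ with D'' ∩ L'' = {0}. Assume that there is no real number α of the form a/b with a, b ∈ D'' and b ≠ 0 such that L'' + D'' ⊆ {α·d : d ∈ D''}. Then for every real number γ > 0 such that {γ·d : d ∈ D''} = D'' and (γ − 1)·l ∈ D'' for all l ∈ L'', one has γ = 1. -/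
/-- Sufficient condition for the multiplier criterion: if there is no `α = a/b`
with `a, b ∈ D''`, `b ≠ 0`, such that `L'' + D'' ⊆ α·D''`, then the only `γ > 0`
with `γ·D'' = D''` and `(γ−1)·L'' ⊆ D''` is `γ = 1`. -/
theorem multiplier_criterion_of_no_ratio (D'' L'' : Submodule ℚ ℝ)
    (hD : D'' ≠ ⊥) (hL : L'' ≠ ⊥) (hDL : D'' ⊓ L'' = ⊥)
    (hno : ¬ ∃ a ∈ D'', ∃ b ∈ D'', b ≠ 0 ∧
      ∀ x : ℝ, (∃ l ∈ L'', ∃ d ∈ D'', x = l + d) → ∃ d ∈ D'', x = (a / b) * d) :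
    ∀ γ : ℝ, 0 < γ →
      (fun x : ℝ => γ * x) '' (D'' : Set ℝ) = (D'' : Set ℝ) →
      (∀ l ∈ L'', (γ - 1) * l ∈ D'') →
      γ = 1 := by
  intro γ hγpos hγD hγL
  by_contra hγ1
  have hne : γ - 1 ≠ 0 := sub_ne_zero.mpr hγ1
  obtain ⟨d0, hd0, hd0ne⟩ := Submodule.exists_mem_ne_zero_of_ne_bot hD
  have hγd : ∀ d ∈ D'', γ * d ∈ D'' := by
    intro d hd
    have h : γ * d ∈ (fun x : ℝ => γ * x) '' (D'' : Set ℝ) := ⟨d, hd, rfl⟩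
    rw [hγD] at h
    exact h
  have hγd' : ∀ d ∈ D'', (γ - 1) * d ∈ D'' := by
    intro d hd
    have := D''.sub_mem (hγd d hd) hd
    simpa [sub_one_mul] using this
  apply hno
  refine ⟨d0, hd0, (γ - 1) * d0, hγd' d0 hd0, mul_ne_zero hne hd0ne, ?_⟩
  rintro x ⟨l, hl, d, hd, rfl⟩
  refine ⟨(γ - 1) * (l + d), ?_, ?_⟩
  · have := D''.add_mem (hγL l hl) (hγd' d hd)
    simpa [mul_add] using this
  · field_simp
end

section
/- Let D'' and L'' be nonzero ℚ-linear subspaces of ℝ with D'' ∩ L'' = {0}. Assume that there exists a subfield K of ℝ with D'' ⊆ K ⊆ L'' + D''. Then for every real number γ > 0 such that {γ·d : d ∈ D''} = D'' and (γ − 1)·l ∈ D'' for all l ∈ L'', one has γ = 1. -/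
/-- Sufficient condition for the multiplier criterion: if there is a subfield `K`
of `ℝ` with `D'' ⊆ K ⊆ L'' + D''`, then the only `γ > 0` with `γ·D'' = D''` and
`(γ−1)·L'' ⊆ D''` is `γ = 1`. -/
theorem multiplier_criterion_of_subfield (D'' L'' : Submodule ℚ ℝ)
    (hD : D'' ≠ ⊥) (hL : L'' ≠ ⊥) (hDL : D'' ⊓ L'' = ⊥)
    (hK : ∃ K : Subfield ℝ, (D'' : Set ℝ) ⊆ (K : Set ℝ) ∧
      (K : Set ℝ) ⊆ {x : ℝ | ∃ l ∈ L'', ∃ d ∈ D'', x = l + d}) :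
    ∀ γ : ℝ, 0 < γ →
      (fun x : ℝ => γ * x) '' (D'' : Set ℝ) = (D'' : Set ℝ) →
      (∀ l ∈ L'', (γ - 1) * l ∈ D'') →
      γ = 1 := by
  obtain ⟨K, hDK, hKLD⟩ := hK
  intro γ hγpos himg hlin
  by_contra hγ
  have hγ1 : γ - 1 ≠ 0 := sub_ne_zero.mpr hγ
  -- γ·d ∈ D'' for all d ∈ D''
  have hmul : ∀ d ∈ D'', γ * d ∈ D'' := by
    intro d hd
    have : γ * d ∈ (fun x : ℝ => γ * x) '' (D'' : Set ℝ) := ⟨d, hd, rfl⟩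
    rw [himg] at this
    exact this
  -- γ ∈ K
  obtain ⟨d₀, hd₀, hd₀ne⟩ := (Submodule.ne_bot_iff D'').mp hD
  have hγK : γ ∈ K := by
    have h1 : γ * d₀ ∈ K := hDK (hmul d₀ hd₀)
    have h2 : (d₀ : ℝ)⁻¹ ∈ K := K.inv_mem (hDK hd₀)
    have : γ * d₀ * d₀⁻¹ ∈ K := K.mul_mem h1 h2
    rwa [mul_assoc, mul_inv_cancel₀ hd₀ne, mul_one] at this
  -- (γ - 1)·x ∈ D'' for all x ∈ K
  have hKD : ∀ x ∈ K, (γ - 1) * x ∈ D'' := by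
    intro x hx
    obtain ⟨l, hl, d, hd, rfl⟩ := hKLD hx
    have h1 : (γ - 1) * l ∈ D'' := hlin l hl
    have h2 : (γ - 1) * d ∈ D'' := by
      have : γ * d - d ∈ D'' := D''.sub_mem (hmul d hd) hd
      rwa [sub_mul, one_mul]
    have := D''.add_mem h1 h2
    rwa [← mul_add] at this
  -- K ⊆ D''
  have hKsubD : ∀ x ∈ K, x ∈ D'' := by
    intro x hx
    have hx' : x / (γ - 1) ∈ K := K.div_mem hx (K.sub_mem hγK K.one_mem)
    have := hKD _ hx'
    rwa [mul_div_cancel₀ _ hγ1] at this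
  -- take l ≠ 0 in L''
  obtain ⟨l₀, hl₀, hl₀ne⟩ := (Submodule.ne_bot_iff L'').mp hL
  -- l₀ ∈ K
  have hl₀K : l₀ ∈ K := by
    have h1 : (γ - 1) * l₀ ∈ K := hDK (hlin l₀ hl₀)
    have h2 : (γ - 1 : ℝ)⁻¹ ∈ K := K.inv_mem (K.sub_mem hγK K.one_mem)
    have : (γ - 1)⁻¹ * ((γ - 1) * l₀) ∈ K := K.mul_mem h2 h1
    rwa [← mul_assoc, inv_mul_cancel₀ hγ1, one_mul] at this
  have : l₀ ∈ D'' ⊓ L'' := ⟨hKsubD _ hl₀K, hl₀⟩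
  rw [hDL] at this
  exact hl₀ne this
end
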